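/- arXiv:1403.2254 — 9 statements merged into one kernel-verified Lean document; each statement's English description precedes it below -/
import Mathlib

section
/- Let Q be a loop. Then Q is a semiautomorphic IP loop if and only if Q is a flexible IP loop such that every inner mapping θ of Q preserves inverses, i.e. (x⁻¹)θ = (xθ)⁻¹ for all x ∈ Q. -/
/-- A loop structure on a type with multiplication and identity element:
the equations `a * x = b` and `y * a = b` have unique solutions, and `1` is a
two-sided identity. -/
structure IsLoop (Q : Type*) [Mul Q] [One Q] : Prop where
  exUnique_left : ∀ a b : Q, ∃! x : Q, a * x = b
  exUnique_right : ∀ a b : Q, ∃! y : Q, y * a = b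
  one_mul : ∀ x : Q, 1 * x = x
  mul_one : ∀ x : Q, x * 1 = x

/-- Flexibility: `(xy)x = x(yx)`. -/
def Flex (Q : Type*) [Mul Q] : Prop := ∀ x y : Q, (x * y) * x = x * (y * x)

/-- The inverse property: `x⁻¹(xy) = y` and `(yx)x⁻¹ = y`. -/
def IsIP (Q : Type*) [Mul Q] [Inv Q] : Prop :=
  ∀ x y : Q, x⁻¹ * (x * y) = y ∧ (y * x) * x⁻¹ = y

/-- A semiautomorphism: `1θ = 1` and `(x·y·x)θ = xθ·yθ·xθ`. -/
def IsSemiautomorphism (Q : Type*) [Mul Q] [One Q] (θ : Q → Q) : Prop :=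
  θ 1 = 1 ∧ ∀ x y : Q, θ ((x * y) * x) = (θ x * θ y) * θ x

/-- The set of left and right translations, as permutations. -/
def translations (Q : Type*) [Mul Q] : Set (Equiv.Perm Q) :=
  {π : Equiv.Perm Q | (∃ x : Q, ∀ y : Q, π y = x * y) ∨ (∃ x : Q, ∀ y : Q, π y = y * x)}

/-- An inner mapping: an element of the multiplication group (the group generated by
all translations) fixing `1`. -/
def IsInnerMapping (Q : Type*) [Mul Q] [One Q] (θ : Equiv.Perm Q) : Prop :=
  θ ∈ Subgroup.closure (translations Q) ∧ θ 1 = 1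

/-- A semiautomorphic IP loop: a flexible IP loop in which every inner mapping is a
semiautomorphism. -/
structure IsSAIPLoop (Q : Type*) [Mul Q] [One Q] [Inv Q] : Prop where
  toIsLoop : IsLoop Q
  flexible : Flex Q
  ip : IsIP Q
  inner_semi : ∀ θ : Equiv.Perm Q, IsInnerMapping Q θ → IsSemiautomorphism Q ⇑θ

/-- The commutant `C(Q)`. -/
def commutant (Q : Type*) [Mul Q] : Set Q := {a : Q | ∀ x : Q, a * x = x * a}

/-- The center `Z(Q)`: elements commuting with every element and associating with
every pair of elements. -/
def loopCenter (Q : Type*) [Mul Q] : Set Q :=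
  {a : Q | (∀ x : Q, a * x = x * a) ∧ (∀ x y : Q, a * (x * y) = (a * x) * y) ∧
    (∀ x y : Q, x * (a * y) = (x * a) * y) ∧ (∀ x y : Q, x * (y * a) = (x * y) * a)}

section Aux

variable {Q : Type*} [Mul Q] [One Q] [Inv Q]

lemma aux_mul_inv (hQ : IsLoop Q) (hip : IsIP Q) (x : Q) : x * x⁻¹ = 1 := by
  have := (hip x 1).2
  rwa [hQ.one_mul] at this

lemma aux_inv_mul (hQ : IsLoop Q) (hip : IsIP Q) (x : Q) : x⁻¹ * x = 1 := by
  have := (hip x 1).1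
  rwa [hQ.mul_one] at this

lemma aux_inv_inv (hQ : IsLoop Q) (hip : IsIP Q) (x : Q) : x⁻¹⁻¹ = x := by
  obtain ⟨w, _, hu⟩ := hQ.exUnique_left x⁻¹ 1
  rw [hu _ (aux_mul_inv hQ hip x⁻¹), hu _ (aux_inv_mul hQ hip x)]

/-- `(y * x⁻¹) * x = y` in an IP loop. -/
lemma aux_id4 (hQ : IsLoop Q) (hip : IsIP Q) (x y : Q) : (y * x⁻¹) * x = y := by
  have := (hip x⁻¹ y).2
  rwa [aux_inv_inv hQ hip x] at this

/-- Antiautomorphic inverse property in an IP loop. -/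
lemma aux_aip (hQ : IsLoop Q) (hip : IsIP Q) (x y : Q) : (x * y)⁻¹ = y⁻¹ * x⁻¹ := by
  have h1 : (x * y) * y⁻¹ = x := (hip y x).2
  have h2 : (x * y)⁻¹ * x = y⁻¹ := by
    have := (hip (x * y) y⁻¹).1
    rwa [h1] at this
  have h3 : ((x * y)⁻¹ * x) * x⁻¹ = (x * y)⁻¹ := (hip x _).2
  rw [h2] at h3
  exact h3.symm

end Aux

/-- A loop `Q` is a semiautomorphic IP loop iff it is a flexible IP loop
in which every inner mapping preserves inverses. -/
theorem stmt0 (Q : Type*) [Mul Q] [One Q] [Inv Q] (hQ : IsLoop Q) :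
    IsSAIPLoop Q ↔
      (Flex Q ∧ IsIP Q ∧
        ∀ θ : Equiv.Perm Q, IsInnerMapping Q θ → ∀ x : Q, θ x⁻¹ = (θ x)⁻¹) := by
  constructor
  · intro h
    refine ⟨h.flexible, h.ip, ?_⟩
    intro θ hθ x
    have hs := h.inner_semi θ hθ
    have e1 : θ ((x * x⁻¹) * x) = (θ x * θ x⁻¹) * θ x := hs.2 x x⁻¹
    rw [aux_mul_inv hQ h.ip x, hQ.one_mul] at e1
    -- e1 : θ x = (θ x * θ x⁻¹) * θ x
    have ha : θ x * θ x⁻¹ = 1 := by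
      obtain ⟨w, _, hu⟩ := hQ.exUnique_right (θ x) (θ x)
      rw [hu _ e1.symm, hu 1 (hQ.one_mul _)]
    obtain ⟨w, _, hu⟩ := hQ.exUnique_left (θ x) 1
    rw [hu _ ha, hu _ (aux_mul_inv hQ h.ip (θ x))]
  · rintro ⟨hflex, hip, hinv⟩
    refine ⟨hQ, hflex, hip, ?_⟩
    intro θ hθ
    refine ⟨hθ.2, ?_⟩
    intro x y
    -- right translations as permutations
    let R : Q → Equiv.Perm Q := fun a =>
      { toFun := fun z => z * a
        invFun := fun z => z * a⁻¹
        left_inv := fun z => (hip a z).2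
        right_inv := fun z => aux_id4 hQ hip a z }
    have hRmem : ∀ a : Q, R a ∈ Subgroup.closure (translations Q) := fun a =>
      Subgroup.subset_closure (Or.inr ⟨a, fun z => rfl⟩)
    -- the inner mapping ψ = R(θx)⁻¹ ∘ θ ∘ R(x)
    set ψ : Equiv.Perm Q := ((R (θ x))⁻¹ * θ) * R x with hψdef
    have hψfun : ∀ z : Q, ψ z = θ (z * x) * (θ x)⁻¹ := fun z => rfl
    have hψmem : ψ ∈ Subgroup.closure (translations Q) :=
      mul_mem (mul_mem (inv_mem (hRmem (θ x))) hθ.1) (hRmem x)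
    have hψ1 : ψ 1 = 1 := by
      rw [hψfun, hQ.one_mul, aux_mul_inv hQ hip (θ x)]
    have hψ := hinv ψ ⟨hψmem, hψ1⟩
    have hθi := hinv θ hθ
    have e0 : θ ((x * y) * x) = ψ (x * y) * θ x := by
      rw [hψfun]
      exact (aux_id4 hQ hip (θ x) (θ ((x * y) * x))).symm
    have e1 : x * y = (y⁻¹ * x⁻¹)⁻¹ := by
      rw [← aux_aip hQ hip, aux_inv_inv hQ hip]
    have e3 : ψ (y⁻¹ * x⁻¹) = (θ y)⁻¹ * (θ x)⁻¹ := by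
      rw [hψfun, aux_id4 hQ hip, hθi]
    have e2 : ψ (x * y) = θ x * θ y := by
      rw [e1, hψ, e3, aux_aip hQ hip, aux_inv_inv hQ hip, aux_inv_inv hQ hip]
    rw [e0, e2]
end

section
/- Let Q be an IP loop that is flexible and satisfies L_x P_y R_x = P_{yx} and R_x P_y L_x = P_{xy} for all x,y ∈ Q, where P_x = L_x R_x. Then every inner mapping of Q is a semiautomorphism. -/
/-- If `Q` is a flexible IP loop satisfying `L_x P_y R_x = P_{yx}` and
`R_x P_y L_x = P_{xy}` (maps composed left to right, `P_x = L_x R_x`), then every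
inner mapping of `Q` is a semiautomorphism. -/
theorem stmt1 (Q : Type*) [Mul Q] [One Q] [Inv Q] (hQ : IsLoop Q) (hIP : IsIP Q)
    (hflex : Flex Q)
    (hRIF1 : ∀ x y z : Q, ((y * (x * z)) * y) * x = ((y * x) * z) * (y * x))
    (hRIF2 : ∀ x y z : Q, x * ((y * (z * x)) * y) = ((x * y) * z) * (x * y)) :
    ∀ θ : Equiv.Perm Q, IsInnerMapping Q θ → IsSemiautomorphism Q ⇑θ := by
  have hinv_mul : ∀ x : Q, x⁻¹ * x = 1 := fun x => by
    have h := (hIP x 1).1; rwa [hQ.mul_one] at h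
  have hinvinv : ∀ x : Q, x⁻¹⁻¹ = x := fun x => by
    have h := (hIP x⁻¹ x).1
    rwa [hinv_mul, hQ.mul_one] at h
  let Rp : Q → Equiv.Perm Q := fun x =>
    ⟨fun z => z * x, fun z => z * x⁻¹, fun z => (hIP x z).2, fun z => by
      have h := (hIP x⁻¹ z).2; rwa [hinvinv] at h⟩
  let Lp : Q → Equiv.Perm Q := fun x =>
    ⟨fun z => x * z, fun z => x⁻¹ * z, fun z => (hIP x z).1, fun z => by
      have h := (hIP x⁻¹ z).1; rwa [hinvinv] at h⟩
  let S : Subgroup (Equiv.Perm Q) :=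
    { carrier := {φ | ∃ φ' : Equiv.Perm Q, ∀ y z, (φ y * z) * φ y = φ ((y * φ' z) * y)}
      mul_mem' := by
        rintro φ ψ ⟨φ', hφ⟩ ⟨ψ', hψ⟩
        exact ⟨ψ' * φ', fun y z => by
          simp only [Equiv.Perm.mul_apply]
          rw [hφ (ψ y) z, hψ y (φ' z)]⟩
      one_mem' := ⟨1, fun y z => by simp⟩
      inv_mem' := by
        rintro φ ⟨φ', hφ⟩
        refine ⟨φ'⁻¹, fun y z => ?_⟩
        have h := hφ (φ⁻¹ y) (φ'⁻¹ z)
        simp only [← Equiv.Perm.mul_apply, mul_inv_cancel, Equiv.Perm.one_apply] at h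
        rw [h, ← Equiv.Perm.mul_apply, inv_mul_cancel, Equiv.Perm.one_apply] }
  have hsub : translations Q ⊆ ↑S := by
    rintro π (⟨x, hx⟩ | ⟨x, hx⟩)
    · refine ⟨Rp x, fun y z => ?_⟩
      simp only [hx]
      exact (hRIF2 x y z).symm
    · refine ⟨Lp x, fun y z => ?_⟩
      simp only [hx]
      exact (hRIF1 x y z).symm
  intro θ hθmem
  obtain ⟨hmem, h1⟩ := hθmem
  have hθS : θ ∈ S := (Subgroup.closure_le S).2 hsub hmem
  obtain ⟨θ', hθ⟩ := hθS
  have hθ'inv : ∀ z, θ (θ' z) = z := fun z => by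
    have h := hθ 1 z
    rw [h1, hQ.one_mul, hQ.mul_one, hQ.one_mul, hQ.mul_one] at h
    exact h.symm
  refine ⟨h1, fun x y => ?_⟩
  have h := hθ x (θ y)
  have hy : θ' (θ y) = y := θ.injective (by rw [hθ'inv])
  rw [hy] at h
  exact h.symm
end

section
/- Let Q be a semiautomorphic IP loop and let a ∈ C(Q). Then for all x ∈ Q the translation maps satisfy P_a L_x R_a L_x⁻¹ = L_x R_a L_x⁻¹ P_a, where P_a = L_a R_a and maps are composed left to right. -/
/-- In a semiautomorphic IP loop, for `a ∈ C(Q)` and any `x`,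
`P_a L_x R_a L_x⁻¹ = L_x R_a L_x⁻¹ P_a` (maps composed left to right). -/
theorem stmt4 (Q : Type*) [Mul Q] [One Q] [Inv Q] (hQ : IsSAIPLoop Q)
    (a : Q) (ha : a ∈ commutant Q) (x : Q)
    (Lx Ra Pa : Equiv.Perm Q)
    (hLx : ∀ y : Q, Lx y = x * y) (hRa : ∀ y : Q, Ra y = y * a)
    (hPa : ∀ y : Q, Pa y = (a * y) * a) :
    Lx⁻¹ * Ra * Lx * Pa = Pa * Lx⁻¹ * Ra * Lx := by
  obtain ⟨hL, hFlex, hIP, hSemi⟩ := hQ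
  have hlip : ∀ u y : Q, u⁻¹ * (u * y) = y := fun u y => (hIP u y).1
  have hrip : ∀ u y : Q, (y * u) * u⁻¹ = y := fun u y => (hIP u y).2
  have hinv1 : ∀ u : Q, u * u⁻¹ = 1 := fun u => by
    have := hrip u 1; rwa [hL.one_mul] at this
  have hinv2 : ∀ u : Q, u⁻¹ * u = 1 := fun u => by
    have := hlip u 1; rwa [hL.mul_one] at this
  have hii : ∀ u : Q, u⁻¹⁻¹ = u := fun u => by
    have := hlip u⁻¹ u; rwa [hinv2, hL.mul_one] at this
  have hlip2 : ∀ u y : Q, u * (u⁻¹ * y) = y := fun u y => by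
    have := hlip u⁻¹ y; rwa [hii] at this
  have hrip2 : ∀ u y : Q, (y * u⁻¹) * u = y := fun u y => by
    have := hrip u⁻¹ y; rwa [hii] at this
  -- actions of the inverse permutations
  have hLxi : ∀ z : Q, (Lx⁻¹ : Equiv.Perm Q) z = x⁻¹ * z := fun z => by
    have h : Lx (x⁻¹ * z) = z := by rw [hLx, hlip2]
    rw [Equiv.Perm.inv_def, Equiv.symm_apply_eq]
    exact h.symm
  have hRai : ∀ z : Q, (Ra⁻¹ : Equiv.Perm Q) z = z * a⁻¹ := fun z => by
    have h : Ra (z * a⁻¹) = z := by rw [hRa, hrip2]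
    rw [Equiv.Perm.inv_def, Equiv.symm_apply_eq]
    exact h.symm
  -- membership of translations in the multiplication group
  have hLmem : Lx ∈ Subgroup.closure (translations Q) :=
    Subgroup.subset_closure (Or.inl ⟨x, hLx⟩)
  have hRmem : Ra ∈ Subgroup.closure (translations Q) :=
    Subgroup.subset_closure (Or.inr ⟨a, hRa⟩)
  -- the inner mapping θ = L_x R_a L_x⁻¹ R_a⁻¹ (left-to-right)
  set θ : Equiv.Perm Q := Ra⁻¹ * Lx⁻¹ * Ra * Lx with hθdef
  have hθy : ∀ y : Q, θ y = (x⁻¹ * ((x * y) * a)) * a⁻¹ := fun y => by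
    rw [hθdef]
    simp only [Equiv.Perm.mul_apply, hLx, hRa, hLxi, hRai]
  have hθmem : θ ∈ Subgroup.closure (translations Q) :=
    mul_mem (mul_mem (mul_mem (inv_mem hRmem) (inv_mem hLmem)) hRmem) hLmem
  have hθ1 : θ 1 = 1 := by rw [hθy, hL.mul_one, hlip, hinv1]
  have hθsemi := hSemi θ ⟨hθmem, hθ1⟩
  -- the inner mapping lam = R_{a⁻¹} L_x R_a L_x⁻¹ (left-to-right)
  set lam : Equiv.Perm Q := Lx⁻¹ * Ra * Lx * Ra⁻¹ with hlamdef
  have hlamy : ∀ y : Q, lam y = x⁻¹ * ((x * (y * a⁻¹)) * a) := fun y => by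
    rw [hlamdef]
    simp only [Equiv.Perm.mul_apply, hLx, hRa, hLxi, hRai]
  have hlammem : lam ∈ Subgroup.closure (translations Q) :=
    mul_mem (mul_mem (mul_mem (inv_mem hLmem) hRmem) hLmem) (inv_mem hRmem)
  have hlam1 : lam 1 = 1 := by rw [hlamy, hL.one_mul, hrip2, hinv2]
  have hlamsemi := hSemi lam ⟨hlammem, hlam1⟩
  -- lam fixes a, hence fixes a·a, hence θ fixes a
  have hlama : lam a = a := by rw [hlamy, hinv1, hL.mul_one, hlip]
  have hlamaa : lam (a * a) = a * a := by
    have h := hlamsemi.2 a 1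
    rwa [hL.mul_one, hlama, hlam1, hL.mul_one] at h
  have hθa : θ a = a := by
    have h1 : lam (a * a) = x⁻¹ * ((x * a) * a) := by rw [hlamy, hrip]
    have h2 : x⁻¹ * ((x * a) * a) = a * a := by rw [← h1, hlamaa]
    rw [hθy, h2, hrip]
  -- main computation
  ext y
  simp only [Equiv.Perm.mul_apply, hLx, hRa, hPa]
  have ht : θ y = (x⁻¹ * ((x * y) * a)) * a⁻¹ := hθy y
  have h1 : θ y * a = x⁻¹ * ((x * y) * a) := by rw [ht, hrip2]
  have h2 : θ ((a * y) * a) = (a * θ y) * a := by rw [hθsemi.2 a y, hθa]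
  have h3 : x⁻¹ * ((x * ((a * y) * a)) * a) = θ ((a * y) * a) * a := by
    rw [hθy, hrip2]
  rw [hLxi, hLxi, h3, h2, h1.symm, hFlex a (θ y)]
end

section
/- Let Q be an IP loop and let * : Q → Q be a bijection such that gg* ∈ Z(Q) for every g ∈ Q. Then g*g = gg* ∈ Z(Q) for every g ∈ Q. -/
/-- If `Q` is an IP loop and `* : Q → Q` is a bijection with `gg* ∈ Z(Q)`
for all `g`, then `g*g = gg* ∈ Z(Q)` for all `g`. -/
theorem stmt11 (Q : Type*) [Mul Q] [One Q] [Inv Q] (hQ : IsLoop Q) (hIP : IsIP Q)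
    (st : Q → Q) (hbij : Function.Bijective st)
    (hZ : ∀ g : Q, g * st g ∈ loopCenter Q) :
    ∀ g : Q, st g * g = g * st g ∧ st g * g ∈ loopCenter Q := by
  intro g
  have hc := hZ g
  obtain ⟨hcomm, hassoc1, _, _⟩ := hc
  have hst : g⁻¹ * (g * st g) = st g := (hIP g (st g)).1
  have hinv : g⁻¹ * g = 1 := by
    have := (hIP g 1).1
    rwa [hQ.mul_one] at this
  have key : st g * g = g * st g := by
    calc st g * g = (g⁻¹ * (g * st g)) * g := by rw [hst]
      _ = ((g * st g) * g⁻¹) * g := by rw [hcomm g⁻¹]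
      _ = (g * st g) * (g⁻¹ * g) := by rw [hassoc1]
      _ = g * st g := by rw [hinv, hQ.mul_one]
  exact ⟨key, key ▸ hZ g⟩
end

section
/- Let Q be a semiautomorphic IP loop, g₀ ∈ Z(Q), and * an involutory antiautomorphism of Q such that g₀* = g₀ and gg* ∈ Z(Q) for every g ∈ Q. For an indeterminate t, define multiplication ∘ on the disjoint union Q ∪ Qt by: g∘h = gh, g∘(ht) = (hg)t, (gt)∘h = (gh*)t, and (gt)∘(ht) = g₀ h* g. Then (Q ∪ Qt, ∘) is a semiautomorphic IP loop. -/
namespace SAIPAux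
set_option linter.unusedSectionVars false

/-- Minimal flexible-IP package, reusable for `Q` and for the double. -/
structure FIP (R : Type*) [Mul R] [One R] [Inv R] : Prop where
  one_mul : ∀ x : R, 1 * x = x
  mul_one : ∀ x : R, x * 1 = x
  flex : ∀ x y : R, (x * y) * x = x * (y * x)
  ipl : ∀ x y : R, x⁻¹ * (x * y) = y
  ipr : ∀ x y : R, (y * x) * x⁻¹ = y

variable {R : Type*} [Mul R] [One R] [Inv R]

namespace FIP
variable (h : FIP R)
include h

theorem inv_mul_self (x : R) : x⁻¹ * x = 1 := by
  have := h.ipl x 1; rwa [h.mul_one] at this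

theorem mul_inv_self (x : R) : x * x⁻¹ = 1 := by
  have := h.ipr x 1; rwa [h.one_mul] at this

theorem inv_inv (x : R) : x⁻¹⁻¹ = x := by
  have := h.ipl x⁻¹ x; rwa [h.inv_mul_self, h.mul_one] at this

theorem mul_inv_cancel_left (x y : R) : x * (x⁻¹ * y) = y := by
  have := h.ipl x⁻¹ y; rwa [h.inv_inv] at this

theorem inv_mul_cancel_right (x y : R) : (y * x⁻¹) * x = y := by
  have := h.ipr x⁻¹ y; rwa [h.inv_inv] at this

theorem lcancel {a x y : R} (e : a * x = a * y) : x = y := by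
  have := h.ipl a x; rw [e, h.ipl] at this; exact this.symm

theorem rcancel {a x y : R} (e : x * a = y * a) : x = y := by
  have := h.ipr a x; rw [e, h.ipr] at this; exact this.symm

theorem eq_inv_of_mul_eq_one {a b : R} (e : a * b = 1) : b = a⁻¹ := by
  have := h.ipl a b; rw [e, h.mul_one] at this; exact this.symm

theorem inv_one : (1 : R)⁻¹ = 1 := (h.eq_inv_of_mul_eq_one (h.one_mul 1)).symm

theorem mul_inv_rev (a b : R) : (a * b)⁻¹ = b⁻¹ * a⁻¹ := by
  -- z := (a*b)⁻¹ ; b = a⁻¹ * z⁻¹ ; b * z = a⁻¹ ; z = b⁻¹ * a⁻¹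
  have h1 : b = a⁻¹ * (a * b)⁻¹⁻¹ := by rw [h.inv_inv]; exact (h.ipl a b).symm
  have h2 : b * (a * b)⁻¹ = a⁻¹ := by
    calc b * (a*b)⁻¹ = (a⁻¹ * (a*b)⁻¹⁻¹) * (a*b)⁻¹ := by rw [← h1]
    _ = a⁻¹ := by rw [h.inv_inv, h.ipr]
  calc (a*b)⁻¹ = b⁻¹ * (b * (a*b)⁻¹) := (h.ipl b _).symm
  _ = b⁻¹ * a⁻¹ := by rw [h2]

theorem flex_inv (a b : R) : (a * b) * a⁻¹ = a * (b * a⁻¹) := by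
  apply h.rcancel (a := a)
  rw [h.inv_mul_cancel_right, h.flex, h.inv_mul_cancel_right]

/-- the loop structure -/
theorem isLoop : IsLoop R := by
  refine ⟨?_, ?_, h.one_mul, h.mul_one⟩
  · intro a b
    exact ⟨a⁻¹ * b, h.mul_inv_cancel_left a b, fun y hy => by
      have := h.ipl a y; rw [hy] at this; exact this.symm⟩
  · intro a b
    exact ⟨b * a⁻¹, h.inv_mul_cancel_right a b, fun y hy => by
      have := h.ipr a y; rw [hy] at this; exact this.symm⟩

end FIP

section center
variable (h : FIP R) {z w : R} (hz : z ∈ loopCenter R)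

include hz

theorem zc (x : R) : z * x = x * z := hz.1 x
theorem za (x y : R) : (z * x) * y = z * (x * y) := (hz.2.1 x y).symm
theorem zb (x y : R) : x * (z * y) = z * (x * y) := by
  rw [hz.2.2.1 x y, ← hz.1 x, za hz]
theorem zd (x y : R) : (x * z) * y = z * (x * y) := by rw [← hz.1 x, za hz]
theorem ze (x y : R) : x * (y * z) = z * (x * y) := by
  rw [hz.2.2.2 x y, ← hz.1 (x*y)]
include h

theorem zinv_mem : z⁻¹ ∈ loopCenter R := by
  have comm : ∀ x : R, z⁻¹ * x = x * z⁻¹ := by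
    intro x
    apply h.lcancel (a := z)
    rw [h.mul_inv_cancel_left, ← za hz, zc hz, h.ipr]
  refine ⟨comm, ?_, ?_, ?_⟩
  · intro x y
    apply h.lcancel (a := z)
    rw [h.mul_inv_cancel_left, ← za hz, h.mul_inv_cancel_left]
  · intro x y
    apply h.lcancel (a := z)
    have l1 : z * (x * (z⁻¹ * y)) = x * y := by
      rw [← zb hz, h.mul_inv_cancel_left]
    have l2 : z * ((x * z⁻¹) * y) = x * y := by
      rw [hz.2.1, ← zb hz x z⁻¹, h.mul_inv_self, h.mul_one]
    rw [l1, l2]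
  · intro x y
    apply h.lcancel (a := z)
    have l1 : z * (x * (y * z⁻¹)) = x * y := by
      rw [← zb hz, ← za hz, zc hz, h.ipr]
    have l2 : z * ((x * y) * z⁻¹) = x * y := by
      rw [← zb hz (x*y) z⁻¹, h.mul_inv_self, h.mul_one]
    rw [l1, l2]
omit h
theorem zmul_mem (hw : w ∈ loopCenter R) : z * w ∈ loopCenter R := by
  refine ⟨?_, ?_, ?_, ?_⟩
  · intro x
    rw [za hz, zc hw, ← zb hz]
  · intro x y
    rw [za hz, za hz, hw.2.1, hz.2.1]
  · intro x y
    rw [za hz, hz.2.2.1, hw.2.2.1, hz.2.2.1]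
  · intro x y
    rw [hz.2.2.1 y w, hw.2.2.2 x, hz.2.2.2 x y, hz.2.2.1 (x*y) w]
include h
theorem zinv_rev (x : R) : (z * x)⁻¹ = z⁻¹ * x⁻¹ := by
  symm; apply h.eq_inv_of_mul_eq_one
  rw [za hz, zb (zinv_mem h hz), ← za hz, h.mul_inv_self, h.one_mul, h.mul_inv_self]

end center


/-! ### Q-side toolkit -/

section Qside
variable {Q : Type*} [Mul Q] [One Q] [Inv Q]

theorem fipOf (hQ : IsSAIPLoop Q) : FIP Q :=
  ⟨hQ.toIsLoop.one_mul, hQ.toIsLoop.mul_one, hQ.flexible,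
   fun x y => (hQ.ip x y).1, fun x y => (hQ.ip x y).2⟩

variable (st : Q → Q) (g₀ : Q)

/-- the central "norm" -/
def nq (g : Q) : Q := g * st g

variable {st g₀}

section nfacts
variable (hQ : IsSAIPLoop Q)
  (hanti : ∀ g h : Q, st (g * h) = st h * st g)
  (hst2 : ∀ g : Q, st (st g) = g)
  (hZ : ∀ g : Q, g * st g ∈ loopCenter Q)
  (hg₀st : st g₀ = g₀)

theorem nq_mem (hZ' : ∀ g : Q, g * st g ∈ loopCenter Q) : ∀ g : Q, nq st g ∈ loopCenter Q := hZ' 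

include hQ hanti in
theorem st_one : st (1 : Q) = 1 := by
  have h := fipOf hQ
  have := hanti 1 1
  rw [h.mul_one] at this
  exact h.lcancel (a := st 1) (by rw [← this, h.mul_one])

include hQ hanti hst2 in
theorem st_inv (g : Q) : st g⁻¹ = (st g)⁻¹ := by
  have h := fipOf hQ
  apply h.eq_inv_of_mul_eq_one
  rw [← hanti, h.inv_mul_self, st_one hQ hanti]

include hQ hZ in
theorem st_eq (g : Q) : st g = nq st g * g⁻¹ := by
  have h := fipOf hQ
  calc st g = g⁻¹ * (g * st g) := (h.ipl g (st g)).symm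
  _ = (g * st g) * g⁻¹ := (zc (hZ g) g⁻¹).symm

include hQ hanti in
theorem nq_one : nq st (1 : Q) = 1 := by
  have h := fipOf hQ
  rw [nq, st_one hQ hanti, h.mul_one]

include hQ hanti hZ in
theorem nq_mul (g k : Q) : nq st (g * k) = nq st g * nq st k := by
  have h := fipOf hQ
  have hg' : nq st g ∈ loopCenter Q := hZ g
  have hk' : nq st k ∈ loopCenter Q := hZ k
  calc nq st (g * k) = (g*k) * st (g*k) := rfl
  _ = (g*k)*(st k * st g) := by rw [hanti]
  _ = (g*k)*((nq st k * k⁻¹) * (nq st g * g⁻¹)) := by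
        rw [← st_eq hQ hZ, ← st_eq hQ hZ]
  _ = nq st k * (nq st g * ((g*k)*(k⁻¹*g⁻¹))) := by
        rw [za hk', zb hg' k⁻¹, zb hk', zb hg']
  _ = nq st k * nq st g := by
        rw [← h.mul_inv_rev, h.mul_inv_self, h.mul_one]
  _ = nq st g * nq st k := zc hk' _

include hQ hanti hZ in
theorem nq_inv (g : Q) : nq st g⁻¹ = (nq st g)⁻¹ := by
  have h := fipOf hQ
  apply h.eq_inv_of_mul_eq_one
  have e1 : nq st g * nq st g⁻¹ = nq st g⁻¹ * nq st g := zc (hZ g) _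
  rw [e1, ← nq_mul hQ hanti hZ, h.inv_mul_self, nq_one hQ hanti]

include hanti hst2 in
theorem st_nq (g : Q) : st (nq st g) = nq st g := by
  rw [nq, hanti, hst2]

include hanti hst2 in
theorem nq_nq (g : Q) : nq st (nq st g) = nq st g * nq st g := by
  show nq st g * st (nq st g) = _
  rw [st_nq hanti hst2]

include hg₀st in
theorem nq_g₀ : nq st g₀ = g₀ * g₀ := by rw [nq, hg₀st]

include hQ hanti hst2 hg₀st in
theorem st_g₀_inv : st g₀⁻¹ = g₀⁻¹ := by
  rw [st_inv hQ hanti hst2, hg₀st]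

end nfacts

/-! ### semiautomorphism basics -/

theorem sa_inv {σ : Q → Q} (h : FIP Q) (hσ : IsSemiautomorphism Q σ) (x : Q) :
    σ x⁻¹ = (σ x)⁻¹ := by
  have k1 : (x * x⁻¹) * x = x := by rw [h.mul_inv_self, h.one_mul]
  have k2 : σ x = (σ x * σ x⁻¹) * σ x := by rw [← hσ.2, k1]
  have k3 : (σ x * (σ x)⁻¹) * σ x = σ x := by rw [h.mul_inv_self, h.one_mul]
  have := h.rcancel (k2.symm.trans k3.symm)
  exact h.lcancel this

/-! ### permutations from translations, words -/

def LPQ (h : FIP Q) (a : Q) : Equiv.Perm Q :=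
  ⟨fun y => a * y, fun y => a⁻¹ * y, fun y => h.ipl a y, fun y => h.mul_inv_cancel_left a y⟩

def RPQ (h : FIP Q) (a : Q) : Equiv.Perm Q :=
  ⟨fun y => y * a, fun y => y * a⁻¹, fun y => h.ipr a y, fun y => h.inv_mul_cancel_right a y⟩

@[simp] theorem LPQ_apply (h : FIP Q) (a y : Q) : LPQ h a y = a * y := rfl
@[simp] theorem RPQ_apply (h : FIP Q) (a y : Q) : RPQ h a y = y * a := rfl

theorem LPQ_mem (h : FIP Q) (a : Q) : LPQ h a ∈ Subgroup.closure (translations Q) :=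
  Subgroup.subset_closure (Or.inl ⟨a, fun _ => rfl⟩)
theorem RPQ_mem (h : FIP Q) (a : Q) : RPQ h a ∈ Subgroup.closure (translations Q) :=
  Subgroup.subset_closure (Or.inr ⟨a, fun _ => rfl⟩)

/-- evaluation of a word of translations: `(true, a)` is `L_a`, `(false,a)` is `R_a`. -/
def wEval : List (Bool × Q) → Q → Q
  | [], y => y
  | (s :: l), y => wEval l (if s.1 then s.2 * y else y * s.2)

def wPerm (h : FIP Q) : List (Bool × Q) → Equiv.Perm Q
  | [] => 1
  | (s :: l) => (wPerm h l) * (if s.1 then LPQ h s.2 else RPQ h s.2)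

theorem wPerm_apply (h : FIP Q) (l : List (Bool × Q)) (y : Q) : wPerm h l y = wEval l y := by
  induction l generalizing y with
  | nil => rfl
  | cons s l ih =>
    cases s with
    | mk b a =>
      cases b <;> simp [wPerm, wEval, Equiv.Perm.mul_apply, ih]

theorem wPerm_mem (h : FIP Q) (l : List (Bool × Q)) :
    wPerm h l ∈ Subgroup.closure (translations Q) := by
  induction l with
  | nil => exact Subgroup.one_mem _
  | cons s l ih =>
    cases s with
    | mk b a => cases b
                · exact Subgroup.mul_mem _ ih (RPQ_mem h a)
                · exact Subgroup.mul_mem _ ih (LPQ_mem h a)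

theorem wEval_cent (h : FIP Q) (l : List (Bool × Q)) {z : Q} (hz : z ∈ loopCenter Q)
    (y : Q) : wEval l (z * y) = z * wEval l y := by
  induction l generalizing y with
  | nil => rfl
  | cons s l ih =>
    cases s with
    | mk b a =>
      cases b
      · show wEval l ((z*y) * a) = _
        rw [za hz, ih]; rfl
      · show wEval l (a * (z*y)) = _
        rw [zb hz, ih]; rfl

theorem wEval_nq (hQ : IsSAIPLoop Q)
    (hanti : ∀ g h : Q, st (g * h) = st h * st g)
    (hst2 : ∀ g : Q, st (st g) = g)
    (hZ : ∀ g : Q, g * st g ∈ loopCenter Q) (l : List (Bool × Q)) (y : Q) :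
    nq st (wEval l y) = nq st (wEval l 1) * nq st y := by
  have h := fipOf hQ
  induction l generalizing y with
  | nil => show nq st y = nq st 1 * nq st y
           rw [nq_one hQ hanti, h.one_mul]
  | cons s l ih =>
    cases s with
    | mk b a =>
      cases b
      · show nq st (wEval l (y * a)) = nq st (wEval l (1 * a)) * nq st y
        have K : nq st (wEval l 1) ∈ loopCenter Q := hZ _
        have Y : nq st y ∈ loopCenter Q := hZ _
        rw [ih, ih (1*a), h.one_mul a, nq_mul hQ hanti hZ, za K, zc Y]
      · show nq st (wEval l (a * y)) = nq st (wEval l (a * 1)) * nq st y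
        have K : nq st (wEval l 1) ∈ loopCenter Q := hZ _
        rw [ih, ih (a*1), h.mul_one a, nq_mul hQ hanti hZ, za K]


/-! ### packaged inner semiautomorphisms -/

structure Pkg (st : Q → Q) (φ : Q → Q) : Prop where
  one : φ 1 = 1
  semi : ∀ u v : Q, φ ((u * v) * u) = (φ u * φ v) * φ u
  inv : ∀ u : Q, φ u⁻¹ = (φ u)⁻¹
  cent : ∀ z ∈ loopCenter Q, ∀ u : Q, φ (z * u) = z * φ u
  nnq : ∀ u : Q, nq st (φ u) = nq st u

theorem pkg_of_word (hQ : IsSAIPLoop Q)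
    (hanti : ∀ g h : Q, st (g * h) = st h * st g)
    (hst2 : ∀ g : Q, st (st g) = g)
    (hZ : ∀ g : Q, g * st g ∈ loopCenter Q)
    (l : List (Bool × Q)) (h1 : wEval l 1 = 1) : Pkg st (wEval l) := by
  have h := fipOf hQ
  have hin : IsInnerMapping Q (wPerm h l) := ⟨wPerm_mem h l, by rw [wPerm_apply, h1]⟩
  have hsa := hQ.inner_semi _ hin
  have hsem : IsSemiautomorphism Q (wEval l) := by
    refine ⟨h1, fun u v => ?_⟩
    have := hsa.2 u v
    simpa [wPerm_apply] using this
  refine ⟨h1, hsem.2, fun u => sa_inv h hsem u, fun z hz u => wEval_cent h l hz u, fun u => ?_⟩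
  rw [wEval_nq hQ hanti hst2 hZ l u, h1, nq_one hQ hanti, h.one_mul]

/-- The key identity: `((cp)(qc⁻¹))(cp) = c((pq)p)` in any SAIP loop. -/
theorem star_id (hQ : IsSAIPLoop Q) (c p q : Q) :
    ((c * p) * (q * c⁻¹)) * (c * p) = c * ((p * q) * p) := by
  have h := fipOf hQ
  -- the inner mapping φ y = (cp)⁻¹ (c (p y))
  set l : List (Bool × Q) := [(true, p), (true, c), (true, (c*p)⁻¹)] with hl
  have hev : ∀ y : Q, wEval l y = (c*p)⁻¹ * (c * (p * y)) := fun y => rfl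
  have h1 : wEval l 1 = 1 := by rw [hev, h.mul_one, h.inv_mul_self]
  have hin : IsInnerMapping Q (wPerm h l) := ⟨wPerm_mem h l, by rw [wPerm_apply, h1]⟩
  have hsa := hQ.inner_semi _ hin
  have hsem : IsSemiautomorphism Q (wEval l) := by
    refine ⟨h1, fun u v => ?_⟩
    have := hsa.2 u v
    simpa [wPerm_apply] using this
  have hinv := fun u => sa_inv h hsem u
  have key : wEval l (q * p) = (q * c⁻¹) * (c * p) := by
    have e1 : wEval l ((q*p)⁻¹) = (wEval l (q*p))⁻¹ := hinv (q*p)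
    have e2 : wEval l ((q*p)⁻¹) = (c*p)⁻¹ * (c * q⁻¹) := by
      rw [h.mul_inv_rev, hev, h.mul_inv_cancel_left]
    have e3 : wEval l (q*p) = ((c*p)⁻¹ * (c * q⁻¹))⁻¹ := by
      rw [← e2, e1, h.inv_inv]
    rw [e3, h.mul_inv_rev, h.inv_inv, h.mul_inv_rev, h.inv_inv]
  calc ((c*p)*(q*c⁻¹))*(c*p) = (c*p)*((q*c⁻¹)*(c*p)) := h.flex _ _
  _ = (c*p)*(wEval l (q*p)) := by rw [key]
  _ = c * (p * (q * p)) := by rw [hev, h.mul_inv_cancel_left]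
  _ = c * ((p * q) * p) := by rw [← h.flex]

end Qside


/-! ### the double -/

section Double
variable {Q : Type*} [Mul Q] [One Q] [Inv Q]

def DM (Q : Type*) [Mul Q] [One Q] [Inv Q] (st : Q → Q) (g₀ : Q) : Type _ := Q ⊕ Q

variable (st : Q → Q) (g₀ : Q)

def dmulF : Q ⊕ Q → Q ⊕ Q → Q ⊕ Q := fun X Y => match X, Y with
  | .inl g, .inl h => .inl (g * h)
  | .inl g, .inr h => .inr (h * g)
  | .inr g, .inl h => .inr (g * st h)
  | .inr g, .inr h => .inl (g₀ * (st h * g))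

def dinvF : Q ⊕ Q → Q ⊕ Q := fun X => match X with
  | .inl g => .inl g⁻¹
  | .inr g => .inr (st g⁻¹ * g₀⁻¹)

instance : Mul (DM Q st g₀) := ⟨dmulF st g₀⟩

instance : One (DM Q st g₀) := ⟨.inl 1⟩

instance : Inv (DM Q st g₀) := ⟨dinvF st g₀⟩

def il (a : Q) : DM Q st g₀ := Sum.inl a
def ir (a : Q) : DM Q st g₀ := Sum.inr a

local notation "IL" => il st g₀
local notation "IR" => ir st g₀

theorem dm_cases (x : DM Q st g₀) : (∃ a : Q, x = IL a) ∨ (∃ a : Q, x = IR a) := by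
  rcases x with a | a
  · exact Or.inl ⟨a, rfl⟩
  · exact Or.inr ⟨a, rfl⟩

@[simp] theorem dmul_ll (a b : Q) : IL a * IL b = IL (a * b) := rfl
@[simp] theorem dmul_lr (a b : Q) : IL a * IR b = IR (b * a) := rfl
@[simp] theorem dmul_rl (a b : Q) : IR a * IL b = IR (a * st b) := rfl
@[simp] theorem dmul_rr (a b : Q) : IR a * IR b = IL (g₀ * (st b * a)) := rfl
@[simp] theorem done_def : (1 : DM Q st g₀) = IL 1 := rfl
@[simp] theorem dinv_l (a : Q) : (IL a)⁻¹ = IL a⁻¹ := rfl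
@[simp] theorem dinv_r (a : Q) : (IR a)⁻¹ = IR (st a⁻¹ * g₀⁻¹) := rfl
theorem il_inj {a b : Q} (e : IL a = IL b) : a = b := by
  injection e
theorem ir_inj {a b : Q} (e : IR a = IR b) : a = b := by
  injection e

variable {st g₀}
variable (hQ : IsSAIPLoop Q) (hg₀ : g₀ ∈ loopCenter Q)
  (hanti : ∀ g h : Q, st (g * h) = st h * st g)
  (hst2 : ∀ g : Q, st (st g) = g) (hg₀st : st g₀ = g₀)
  (hZ : ∀ g : Q, g * st g ∈ loopCenter Q)

include hQ hg₀ hanti hst2 hg₀st hZ in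
theorem fipD : FIP (DM Q st g₀) := by
  have h := fipOf hQ
  have hg₀i : g₀⁻¹ ∈ loopCenter Q := zinv_mem h hg₀
  constructor
  · -- one_mul
    intro x
    obtain ⟨a, rfl⟩ | ⟨a, rfl⟩ := dm_cases st g₀ x
    · rw [done_def, dmul_ll, h.one_mul]
    · rw [done_def, dmul_lr, h.mul_one]
  · -- mul_one
    intro x
    obtain ⟨a, rfl⟩ | ⟨a, rfl⟩ := dm_cases st g₀ x
    · rw [done_def, dmul_ll, h.mul_one]
    · rw [done_def, dmul_rl, st_one hQ hanti, h.mul_one]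
  · -- flex
    intro x y
    obtain ⟨a, rfl⟩ | ⟨a, rfl⟩ := dm_cases st g₀ x <;>
      obtain ⟨b, rfl⟩ | ⟨b, rfl⟩ := dm_cases st g₀ y
    · rw [dmul_ll, dmul_ll, dmul_ll, dmul_ll, h.flex]
    · -- (b*a)*st a = (b*st a)*a
      rw [dmul_lr, dmul_rl, dmul_rl, dmul_lr]
      congr 1
      have hx : nq st a ∈ loopCenter Q := hZ a
      rw [st_eq hQ hZ a, zb hx, h.ipr, zb hx, za hx, h.inv_mul_cancel_right]
    · -- x = inr a, y = inl b
      simp only [dmul_rl, dmul_lr, dmul_rr]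
      have hx : nq st a ∈ loopCenter Q := hZ a
      have key : st a * (a * st b) = st (a * b) * a := by
        rw [hanti, st_eq hQ hZ a, za hx, h.ipl, zb hx, za hx, h.inv_mul_cancel_right]
      rw [key]
    · simp only [dmul_rr, dmul_lr, dmul_rl]
      congr 1
      rw [hanti, hanti, hst2, hg₀st, ← zc hg₀]
  · -- ipl
    intro x y
    obtain ⟨a, rfl⟩ | ⟨a, rfl⟩ := dm_cases st g₀ x <;>
      obtain ⟨b, rfl⟩ | ⟨b, rfl⟩ := dm_cases st g₀ y
    · rw [dinv_l, dmul_ll, dmul_ll, h.ipl]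
    · rw [dmul_lr, dinv_l, dmul_lr, h.ipr]
    · rw [dmul_rl, dinv_r, dmul_rr]
      rw [hanti, hst2, st_inv hQ hanti hst2, ze hg₀i, h.ipr, h.mul_inv_cancel_left]
    · rw [dmul_rr, dinv_r, dmul_rl]
      rw [hanti, hanti, hst2, hg₀st, st_inv hQ hanti hst2, ← zc hg₀, zb hg₀,
        ← zc hg₀i ((st a)⁻¹), za hg₀i, h.ipl, h.mul_inv_cancel_left]
  · -- ipr
    intro x y
    obtain ⟨a, rfl⟩ | ⟨a, rfl⟩ := dm_cases st g₀ x <;>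
      obtain ⟨b, rfl⟩ | ⟨b, rfl⟩ := dm_cases st g₀ y
    · rw [dmul_ll, dinv_l, dmul_ll, h.ipr]
    · rw [dmul_rl, dinv_l, dmul_rl, st_inv hQ hanti hst2, h.ipr]
    · rw [dmul_lr, dinv_r, dmul_rr]
      rw [hanti, hst2, st_g₀_inv hQ hanti hst2 hg₀st, za hg₀i, h.ipl,
        h.mul_inv_cancel_left]
    · rw [dmul_rr, dinv_r, dmul_lr]
      rw [st_inv hQ hanti hst2, zb hg₀, ← zc hg₀i ((st a)⁻¹), za hg₀i, h.ipl,
        h.mul_inv_cancel_left]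

end Double


/-! ### reduction of inner mappings to conjugated translations -/

section Red
variable {R : Type*} [Mul R] [One R] [Inv R]

theorem LPQ_one (h : FIP R) : LPQ h (1 : R) = 1 := by
  apply Equiv.ext; intro y; exact h.one_mul y

def SAgrp (h : FIP R) : Subgroup (Equiv.Perm R) where
  carrier := {θ : Equiv.Perm R | IsSemiautomorphism R ⇑θ}
  one_mem' := ⟨rfl, fun _ _ => rfl⟩
  mul_mem' := by
    rintro θ ψ ⟨h1, h2⟩ ⟨k1, k2⟩
    refine ⟨?_, fun x y => ?_⟩
    · simp only [Equiv.Perm.mul_apply, k1, h1]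
    · simp only [Equiv.Perm.mul_apply, k2, h2]
  inv_mem' := by
    rintro θ ⟨h1, h2⟩
    refine ⟨?_, fun x y => ?_⟩
    · conv_lhs => rw [← h1]
      exact θ.symm_apply_apply 1
    · apply θ.injective
      simp only [Equiv.Perm.inv_def, Equiv.apply_symm_apply, h2]

theorem red (h : FIP R)
    (hgen : ∀ π : Equiv.Perm R, π ∈ translations R → ∀ b : R,
      IsSemiautomorphism R ⇑((LPQ h (π b))⁻¹ * π * LPQ h b)) :
    ∀ θ : Equiv.Perm R, IsInnerMapping R θ → IsSemiautomorphism R ⇑θ := by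
  have main : ∀ ψ : Equiv.Perm R, ψ ∈ Subgroup.closure (translations R) → ∀ b : R,
      ((LPQ h (ψ b))⁻¹ * ψ * LPQ h b) ∈ SAgrp h := by
    intro ψ hψ
    induction hψ using Subgroup.closure_induction with
    | mem π hπ => exact fun b => hgen π hπ b
    | one =>
      intro b
      have e : ((LPQ h ((1 : Equiv.Perm R) b))⁻¹ * 1 * LPQ h b) = 1 := by
        simp only [Equiv.Perm.one_apply, mul_one, inv_mul_cancel]
      rw [e]; exact Subgroup.one_mem _
    | mul θ ψ hθ hψ ihθ ihψ =>
      intro b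
      have e : (LPQ h ((θ * ψ) b))⁻¹ * (θ * ψ) * LPQ h b =
          ((LPQ h (θ (ψ b)))⁻¹ * θ * LPQ h (ψ b)) * ((LPQ h (ψ b))⁻¹ * ψ * LPQ h b) := by
        have : (θ * ψ) b = θ (ψ b) := rfl
        rw [this]; group
      rw [e]; exact Subgroup.mul_mem _ (ihθ _) (ihψ _)
    | inv θ hθ ihθ =>
      intro b
      have e : (LPQ h (θ⁻¹ b))⁻¹ * θ⁻¹ * LPQ h b =
          ((LPQ h (θ (θ⁻¹ b)))⁻¹ * θ * LPQ h (θ⁻¹ b))⁻¹ := by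
        rw [show θ (θ⁻¹ b) = b from θ.apply_symm_apply b]; group
      rw [e]; exact Subgroup.inv_mem _ (ihθ _)
  intro θ hθ
  have k := main θ hθ.1 1
  rw [hθ.2, LPQ_one] at k
  have e : (1 : Equiv.Perm R)⁻¹ * θ * 1 = θ := by group
  rw [e] at k
  exact k

theorem one_mem_center (h : FIP R) : (1 : R) ∈ loopCenter R := by
  refine ⟨fun x => ?_, fun x y => ?_, fun x y => ?_, fun x y => ?_⟩ <;>
    simp only [h.one_mul, h.mul_one]

theorem zsandwich (h : FIP R) {z : R} (hz : z ∈ loopCenter R) (A B : R) :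
    (z * A) * (z⁻¹ * B) = A * B := by
  rw [za hz, zb (zinv_mem h hz), h.mul_inv_cancel_left]

theorem zsandwich' (h : FIP R) {z : R} (hz : z ∈ loopCenter R) (A B : R) :
    (z⁻¹ * A) * (z * B) = A * B := by
  rw [za (zinv_mem h hz), zb hz, h.ipl]

theorem conj_apply (h : FIP R) (π : Equiv.Perm R) (B y : R) :
    ((LPQ h (π B))⁻¹ * π * LPQ h B) y = (π B)⁻¹ * (π (B * y)) := rfl

end Red


/-! ### master lemmas for semiautomorphisms of the double -/

section Master
variable {Q : Type*} [Mul Q] [One Q] [Inv Q] {st : Q → Q} {g₀ : Q}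
variable (hQ : IsSAIPLoop Q) (hg₀ : g₀ ∈ loopCenter Q)
  (hanti : ∀ g h : Q, st (g * h) = st h * st g)
  (hst2 : ∀ g : Q, st (st g) = g) (hg₀st : st g₀ = g₀)
  (hZ : ∀ g : Q, g * st g ∈ loopCenter Q)

include hQ hg₀ hanti hst2 hg₀st hZ in
theorem masterA (α σ : Q → Q) (z e : Q) (hz : z ∈ loopCenter Q)
    (Pα : Pkg st α) (Pσ : Pkg st σ)
    (hne : nq st z * nq st e = 1)
    (θ : DM Q st g₀ → DM Q st g₀)
    (hθl : ∀ u : Q, θ (il st g₀ u) = il st g₀ (α u))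
    (hθr : ∀ u : Q, θ (ir st g₀ u) = ir st g₀ (z * (e * σ u))) :
    IsSemiautomorphism (DM Q st g₀) θ := by
  have h := fipOf hQ
  have hzi : z⁻¹ ∈ loopCenter Q := zinv_mem h hz
  have hN : ∀ m : Q, nq st m ∈ loopCenter Q := hZ
  have βcent : ∀ c ∈ loopCenter Q, ∀ m : Q, z * (e * σ (c * m)) = c * (z * (e * σ m)) := by
    intro c hc m
    rw [Pσ.cent c hc, zb hc, zb hc]
  have nqβ : ∀ m : Q, nq st (z * (e * σ m)) = nq st m := by
    intro m
    rw [nq_mul hQ hanti hZ, nq_mul hQ hanti hZ, Pσ.nnq, ← za (hN z), hne, h.one_mul]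
  have stβ : ∀ m : Q, st (z * (e * σ m)) = nq st m * (z * (e * σ m))⁻¹ := by
    intro m; rw [st_eq hQ hZ, nqβ]
  have stα : ∀ m : Q, st (α m) = nq st m * (α m)⁻¹ := by
    intro m; rw [st_eq hQ hZ, Pα.nnq]
  have βinvf : ∀ m : Q, (z * (e * σ m))⁻¹ = z⁻¹ * ((σ m)⁻¹ * e⁻¹) := by
    intro m; rw [zinv_rev h hz, h.mul_inv_rev]
  have CC : ∀ p w : Q,
      ((z * (e * p)) * (z⁻¹ * (w * e⁻¹))) * (z * (e * p)) = z * (e * ((p * w) * p)) := by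
    intro p w
    have e1 : (z * (e * p)) * (z⁻¹ * (w * e⁻¹)) = (e * p) * (w * e⁻¹) := by
      rw [za hz, zb hzi, h.mul_inv_cancel_left]
    rw [e1, zb hz, star_id hQ e p w]
  refine ⟨?_, ?_⟩
  · rw [done_def, hθl, Pα.one]
  · intro X Y
    obtain ⟨u, rfl⟩ | ⟨u, rfl⟩ := dm_cases st g₀ X <;>
      obtain ⟨v, rfl⟩ | ⟨v, rfl⟩ := dm_cases st g₀ Y
    · simp only [dmul_ll, hθl]
      apply congrArg
      exact Pα.semi u v
    · simp only [dmul_lr, dmul_rl, hθl, hθr]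
      apply congrArg
      have a2 : (v * u) * st u = nq st u * v := by
        rw [st_eq hQ hZ u, zb (hN u), h.ipr]
      have a2' : ((z * (e * σ v)) * α u) * st (α u) = nq st u * (z * (e * σ v)) := by
        rw [stα u, zb (hN u), h.ipr]
      rw [a2, a2', βcent _ (hN u)]
    · simp only [dmul_rl, dmul_rr, dmul_lr, hθl, hθr]
      apply congrArg
      have a3 : st u * (u * st v) = nq st u * (nq st v * v⁻¹) := by
        rw [st_eq hQ hZ u, st_eq hQ hZ v, za (hN u), h.ipl]
      have eL : α (g₀ * (nq st u * (nq st v * v⁻¹)))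
          = g₀ * (nq st u * (nq st v * (α v)⁻¹)) := by
        rw [Pα.cent _ hg₀, Pα.cent _ (hN u), Pα.cent _ (hN v), Pα.inv]
      have eR : st (z * (e * σ u)) * ((z * (e * σ u)) * st (α v))
          = nq st u * (nq st v * (α v)⁻¹) := by
        rw [stβ u, stα v, zb (hN v), za (hN u), zb (hN v), h.ipl]
      rw [a3, eL, eR]
    · simp only [dmul_rr, dmul_lr, hθr]
      apply congrArg
      have a4 : st v * u = nq st v * (v⁻¹ * u) := by
        rw [st_eq hQ hZ v, za (hN v)]
      have eL : z * (e * σ (u * (g₀ * (st v * u))))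
          = g₀ * (nq st v * (z * (e * ((σ u * (σ v)⁻¹) * σ u)))) := by
        rw [a4, zb hg₀, zb (hN v), ← h.flex, βcent _ hg₀, βcent _ (hN v),
          Pσ.semi, Pσ.inv]
      have eR : (z * (e * σ u)) * (g₀ * (st (z * (e * σ v)) * (z * (e * σ u))))
          = g₀ * (nq st v * (z * (e * ((σ u * (σ v)⁻¹) * σ u)))) := by
        rw [stβ v, βinvf v, za (hN v), zb hg₀, zb (hN v), ← h.flex, CC]
      rw [eL, eR]

include hQ hg₀ hanti hst2 hg₀st hZ in
theorem masterB (ω σ : Q → Q) (z e : Q) (hz : z ∈ loopCenter Q)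
    (Pω : Pkg st ω) (Pσ : Pkg st σ)
    (hne : nq st z * nq st e = 1)
    (θ : DM Q st g₀ → DM Q st g₀)
    (hθl : ∀ u : Q, θ (il st g₀ u) = il st g₀ (nq st u * ω u⁻¹))
    (hθr : ∀ u : Q, θ (ir st g₀ u) = ir st g₀ (z * (nq st u * (e * σ u⁻¹)))) :
    IsSemiautomorphism (DM Q st g₀) θ := by
  have h := fipOf hQ
  have hzi : z⁻¹ ∈ loopCenter Q := zinv_mem h hz
  have hg₀i : g₀⁻¹ ∈ loopCenter Q := zinv_mem h hg₀
  have hN : ∀ m : Q, nq st m ∈ loopCenter Q := hZ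
  have hNi : ∀ m : Q, (nq st m)⁻¹ ∈ loopCenter Q := fun m => zinv_mem h (hN m)
  have nq_nq : ∀ m : Q, nq st (nq st m) = nq st m * nq st m := by
    intro m
    show nq st m * st (nq st m) = _
    rw [st_nq hanti hst2]
  have nqα : ∀ m : Q, nq st (nq st m * ω m⁻¹) = nq st m := by
    intro m
    rw [nq_mul hQ hanti hZ, nq_nq, Pω.nnq, nq_inv hQ hanti hZ, za (hN m),
      h.mul_inv_self, h.mul_one]
  have nqβ : ∀ m : Q, nq st (z * (nq st m * (e * σ m⁻¹))) = nq st m := by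
    intro m
    rw [nq_mul hQ hanti hZ, nq_mul hQ hanti hZ, nq_mul hQ hanti hZ, Pσ.nnq,
      nq_inv hQ hanti hZ, nq_nq, zb (hN e) (nq st m * nq st m), za (hN m),
      h.mul_inv_self, h.mul_one, ← za (hN z), hne, h.one_mul]
  have stα : ∀ m : Q, st (nq st m * ω m⁻¹) = ω m := by
    intro m
    rw [st_eq hQ hZ, nqα, zinv_rev h (hN m), Pω.inv, h.inv_inv, h.mul_inv_cancel_left]
  have stβ : ∀ m : Q, st (z * (nq st m * (e * σ m⁻¹)))
      = nq st m * (z * (nq st m * (e * σ m⁻¹)))⁻¹ := by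
    intro m; rw [st_eq hQ hZ, nqβ]
  have βinvf : ∀ m : Q, (z * (nq st m * (e * σ m⁻¹)))⁻¹
      = z⁻¹ * ((nq st m)⁻¹ * (σ m * e⁻¹)) := by
    intro m
    rw [zinv_rev h hz, zinv_rev h (hN m), h.mul_inv_rev, Pσ.inv, h.inv_inv]
  have CC : ∀ p w : Q,
      ((z * (e * p)) * (z⁻¹ * (w * e⁻¹))) * (z * (e * p)) = z * (e * ((p * w) * p)) := by
    intro p w
    have e1 : (z * (e * p)) * (z⁻¹ * (w * e⁻¹)) = (e * p) * (w * e⁻¹) := by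
      rw [za hz, zb hzi, h.mul_inv_cancel_left]
    rw [e1, zb hz, star_id hQ e p w]
  refine ⟨?_, ?_⟩
  · rw [done_def, hθl, h.inv_one, Pω.one, h.mul_one, nq_one hQ hanti]
  · intro X Y
    obtain ⟨u, rfl⟩ | ⟨u, rfl⟩ := dm_cases st g₀ X <;>
      obtain ⟨v, rfl⟩ | ⟨v, rfl⟩ := dm_cases st g₀ Y
    · -- (l,l)
      simp only [dmul_ll, hθl]
      apply congrArg
      have eL : nq st ((u * v) * u) * ω (((u * v) * u)⁻¹)
          = nq st u * (nq st v * (nq st u * ((ω u⁻¹ * ω v⁻¹) * ω u⁻¹))) := by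
        rw [h.mul_inv_rev, h.mul_inv_rev, ← h.flex, Pω.semi, nq_mul hQ hanti hZ,
          nq_mul hQ hanti hZ]
        rw [za (hN u), za (hN u), za (hN v)]
      have eR : ((nq st u * ω u⁻¹) * (nq st v * ω v⁻¹)) * (nq st u * ω u⁻¹)
          = nq st u * (nq st v * (nq st u * ((ω u⁻¹ * ω v⁻¹) * ω u⁻¹))) := by
        rw [za (hN u), zb (hN v) (ω u⁻¹), za (hN u), za (hN v), zb (hN u) (ω u⁻¹ * ω v⁻¹)]
      rw [eL, eR]
    · -- (l,r)
      simp only [dmul_lr, dmul_rl, hθl, hθr]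
      apply congrArg
      have a2 : (v * u) * st u = nq st u * v := by
        rw [st_eq hQ hZ u, zb (hN u), h.ipr]
      have eR : ((z * (nq st v * (e * σ v⁻¹))) * (nq st u * ω u⁻¹))
            * st (nq st u * ω u⁻¹)
          = nq st u * (z * (nq st v * (e * σ v⁻¹))) := by
        rw [st_eq hQ hZ (nq st u * ω u⁻¹), nqα, zb (hN u), h.ipr]
      have eL : z * (nq st (nq st u * v) * (e * σ ((nq st u * v)⁻¹)))
          = nq st u * (z * (nq st v * (e * σ v⁻¹))) := by
        rw [nq_mul hQ hanti hZ, nq_nq, zinv_rev h (hN u), Pσ.cent _ (hNi u),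
          zb (hNi u) e, zb (hNi u) ((nq st u * nq st u) * nq st v), zb (hNi u) z,
          za (hN u), za (hN u), za (hN u), zb (hN u) z]
        rw [h.ipl, zb (hN u) z]
      rw [a2, eR, eL]
    · -- (r,l)
      simp only [dmul_rl, dmul_rr, dmul_lr, hθl, hθr]
      apply congrArg
      have a3 : st u * (u * st v) = nq st u * (nq st v * v⁻¹) := by
        rw [st_eq hQ hZ u, st_eq hQ hZ v, za (hN u), h.ipl]
      have eR : st (z * (nq st u * (e * σ u⁻¹)))
            * ((z * (nq st u * (e * σ u⁻¹))) * st (nq st v * ω v⁻¹))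
          = nq st u * ω v := by
        rw [stβ u, stα v, za (hN u), h.ipl]
      have eL : nq st (g₀ * (nq st u * (nq st v * v⁻¹)))
            * ω ((g₀ * (nq st u * (nq st v * v⁻¹)))⁻¹)
          = g₀ * (nq st u * ω v) := by
        rw [nq_mul hQ hanti hZ, nq_mul hQ hanti hZ, nq_mul hQ hanti hZ,
          nq_g₀ hg₀st, nq_nq, nq_nq, nq_inv hQ hanti hZ,
          zinv_rev h hg₀, zinv_rev h (hN u), zinv_rev h (hN v), h.inv_inv,
          Pω.cent _ hg₀i, Pω.cent _ (hNi u), Pω.cent _ (hNi v)]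
        -- now pure central collapse
        rw [za (hN v), h.mul_inv_self, h.mul_one]
        rw [zb hg₀i ((g₀ * g₀) * (nq st u * nq st u * nq st v)),
          za hg₀, za hg₀, h.ipl]
        rw [za hg₀]
        rw [zb (hNi u) ((nq st u * nq st u) * nq st v), za (hN u), za (hN u),
          h.ipl, za (hN u), h.mul_inv_cancel_left]
      rw [a3, eR, eL]
    · -- (r,r)
      simp only [dmul_rr, dmul_lr, hθr]
      apply congrArg
      have a4 : st v * u = nq st v * (v⁻¹ * u) := by
        rw [st_eq hQ hZ v, za (hN v)]
      have inv1 : ((u * v⁻¹) * u)⁻¹ = (u⁻¹ * v) * u⁻¹ := by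
        rw [h.mul_inv_rev, h.mul_inv_rev, h.inv_inv, ← h.flex]
      have eL : z * (nq st (g₀ * (nq st v * ((u * v⁻¹) * u)))
            * (e * σ ((g₀ * (nq st v * ((u * v⁻¹) * u)))⁻¹)))
          = g₀ * (z * (nq st u * (nq st u * (e * ((σ u⁻¹ * σ v) * σ u⁻¹))))) := by
        rw [nq_mul hQ hanti hZ, nq_mul hQ hanti hZ, nq_mul hQ hanti hZ,
          nq_mul hQ hanti hZ, nq_g₀ hg₀st, nq_nq, nq_inv hQ hanti hZ,
          zinv_rev h hg₀, zinv_rev h (hN v), inv1,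
          Pσ.cent _ hg₀i, Pσ.cent _ (hNi v), Pσ.semi]
        -- collapse centrals
        rw [zb hg₀i e, zb hg₀i, zb hg₀i z, za hg₀, za hg₀]
        have cA : ((nq st v * nq st v) * ((nq st u * (nq st v)⁻¹) * nq st u))
              * (e * ((nq st v)⁻¹ * ((σ u⁻¹ * σ v) * σ u⁻¹)))
            = nq st u * (nq st u * (e * ((σ u⁻¹ * σ v) * σ u⁻¹))) := by
          rw [zb (hNi v) e, zb (hNi v), za (hN v), za (hN v), za (hN v), h.ipl,
            za (hN u), za (hN u), za (hNi v), zb (hNi v) (nq st u),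
            h.mul_inv_cancel_left]
        rw [za hg₀, zb hg₀ z, h.ipl, zb hg₀ z, cA]
      have eR : (z * (nq st u * (e * σ u⁻¹)))
            * (g₀ * (st (z * (nq st v * (e * σ v⁻¹)))
                * (z * (nq st u * (e * σ u⁻¹)))))
          = g₀ * (z * (nq st u * (nq st u * (e * ((σ u⁻¹ * σ v) * σ u⁻¹))))) := by
        rw [stβ v, βinvf v, za (hN v), zb hg₀, zb (hN v), ← h.flex]
        -- core: (βu * (βv)⁻¹) * βu with central-peeled forms
        rw [zb (hN u) z (e * σ u⁻¹), zb (hNi v) z⁻¹ (σ v * e⁻¹),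
          za (hN u) (z * (e * σ u⁻¹)) ((nq st v)⁻¹ * (z⁻¹ * (σ v * e⁻¹))),
          zb (hNi v) (z * (e * σ u⁻¹)) (z⁻¹ * (σ v * e⁻¹)),
          za (hN u), za (hNi v), zb (hN u) ((z * (e * σ u⁻¹)) * (z⁻¹ * (σ v * e⁻¹)))
            (z * (e * σ u⁻¹)),
          CC, zb (hNi v) (nq st u), h.mul_inv_cancel_left,
          ← zb (hN u) z (e * ((σ u⁻¹ * σ v) * σ u⁻¹)),
          ← zb (hN u) z (nq st u * (e * ((σ u⁻¹ * σ v) * σ u⁻¹)))]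
      rw [a4, zb hg₀ u, zb (hN v) u, ← h.flex, eL, eR]

end Master


/-! ### the main construction -/

section Final
variable {Q : Type*} [Mul Q] [One Q] [Inv Q] {st : Q → Q} {g₀ : Q}
variable (hQ : IsSAIPLoop Q) (hg₀ : g₀ ∈ loopCenter Q)
  (hanti : ∀ g h : Q, st (g * h) = st h * st g)
  (hst2 : ∀ g : Q, st (st g) = g) (hg₀st : st g₀ = g₀)
  (hZ : ∀ g : Q, g * st g ∈ loopCenter Q)

include hQ hg₀ hanti hst2 hg₀st hZ in
theorem saipD : IsSAIPLoop (DM Q st g₀) := by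
  have h := fipOf hQ
  have hD := fipD hQ hg₀ hanti hst2 hg₀st hZ
  have hg₀i : g₀⁻¹ ∈ loopCenter Q := zinv_mem h hg₀
  have hN : ∀ m : Q, nq st m ∈ loopCenter Q := hZ
  have hNi : ∀ m : Q, (nq st m)⁻¹ ∈ loopCenter Q := fun m => zinv_mem h (hN m)
  have h1c : (1 : Q) ∈ loopCenter Q := one_mem_center h
  refine ⟨hD.isLoop, hD.flex, fun x y => ⟨hD.ipl x y, hD.ipr x y⟩, ?_⟩
  apply red hD
  intro π hπ B
  rcases hπ with ⟨X, hπ⟩ | ⟨X, hπ⟩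
  · obtain ⟨x, rfl⟩ | ⟨x, rfl⟩ := dm_cases st g₀ X <;>
      obtain ⟨b, rfl⟩ | ⟨b, rfl⟩ := dm_cases st g₀ B
    · -- CASE A : left translation by il x, base il b
      apply masterA hQ hg₀ hanti hst2 hg₀st hZ
        (wEval [(true, b), (true, x), (true, (x*b)⁻¹)])
        (wEval [(false, b), (false, x), (false, (x*b)⁻¹), (true, ((b*x)*(x*b)⁻¹)⁻¹)])
        1 ((b*x)*(x*b)⁻¹) h1c
        (pkg_of_word hQ hanti hst2 hZ _ (by
          show (x*b)⁻¹ * (x * (b * 1)) = 1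
          rw [h.mul_one, h.inv_mul_self]))
        (pkg_of_word hQ hanti hst2 hZ _ (by
          show ((b*x)*(x*b)⁻¹)⁻¹ * (((1*b)*x)*(x*b)⁻¹) = 1
          rw [h.one_mul, h.inv_mul_self]))
        (by
          have he : nq st ((b*x)*(x*b)⁻¹) = 1 := by
            rw [nq_mul hQ hanti hZ, nq_inv hQ hanti hZ, nq_mul hQ hanti hZ,
              nq_mul hQ hanti hZ, zc (hN b), h.mul_inv_self]
          rw [nq_one hQ hanti, he, h.one_mul])
      · intro u
        rw [conj_apply]
        simp only [hπ, dmul_ll, dmul_lr, dmul_rl, dmul_rr, dinv_l, dinv_r]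
        rfl
      · intro u
        rw [conj_apply]
        simp only [hπ, dmul_ll, dmul_lr, dmul_rl, dmul_rr, dinv_l, dinv_r]
        show _ = ir st g₀
          (1 * (((b*x)*(x*b)⁻¹) * ((((b*x)*(x*b)⁻¹))⁻¹ * (((u*b)*x)*(x*b)⁻¹))))
        rw [h.one_mul, h.mul_inv_cancel_left]
    · -- CASE B : left translation by il x, base ir b
      apply masterA hQ hg₀ hanti hst2 hg₀st hZ
        (wEval [(false, b⁻¹), (true, x⁻¹), (false, b*x)])
        (wEval [(true, b⁻¹), (false, x⁻¹), (true, b*x), (true, ((b*x)*(b⁻¹*x⁻¹))⁻¹)])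
        1 ((b*x)*(b⁻¹*x⁻¹)) h1c
        (pkg_of_word hQ hanti hst2 hZ _ (by
          show (x⁻¹*((1:Q)*b⁻¹))*(b*x) = 1
          rw [h.one_mul, ← h.mul_inv_rev, h.inv_mul_self]))
        (pkg_of_word hQ hanti hst2 hZ _ (by
          show ((b*x)*(b⁻¹*x⁻¹))⁻¹ * ((b*x)*((b⁻¹*1)*x⁻¹)) = 1
          rw [h.mul_one, h.inv_mul_self]))
        (by
          have he : nq st ((b*x)*(b⁻¹*x⁻¹)) = 1 := by
            rw [nq_mul hQ hanti hZ, nq_mul hQ hanti hZ, nq_mul hQ hanti hZ,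
              nq_inv hQ hanti hZ, nq_inv hQ hanti hZ, zsandwich h (hN b),
              h.mul_inv_self]
          rw [nq_one hQ hanti, he, h.one_mul])
      · intro u
        rw [conj_apply]
        simp only [hπ, dmul_ll, dmul_lr, dmul_rl, dmul_rr, dinv_l, dinv_r]
        apply congrArg
        show g₀ * (st ((b*st u)*x) * (st ((b*x)⁻¹)*g₀⁻¹)) = (x⁻¹*(u*b⁻¹))*(b*x)
        rw [hanti, hanti, hst2, st_inv hQ hanti hst2, hanti, h.mul_inv_rev, ze hg₀i,
          h.mul_inv_cancel_left, st_eq hQ hZ x, st_eq hQ hZ b, zinv_rev h (hN b),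
          zinv_rev h (hN x), h.inv_inv, h.inv_inv, zb (hN b) u, zb (hN b), za (hN x),
          za (hNi b), zb (hNi x) b, zsandwich h (hN b), zsandwich h (hN x)]
      · intro u
        rw [conj_apply]
        simp only [hπ, dmul_ll, dmul_lr, dmul_rl, dmul_rr, dinv_l, dinv_r]
        apply congrArg
        show (st ((b*x)⁻¹)*g₀⁻¹) * st (x*(g₀*(st u*b)))
            = 1 * (((b*x)*(b⁻¹*x⁻¹)) * (((b*x)*(b⁻¹*x⁻¹))⁻¹
              * ((b*x)*((b⁻¹*u)*x⁻¹))))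
        rw [h.one_mul, h.mul_inv_cancel_left]
        rw [st_inv hQ hanti hst2, hanti, h.mul_inv_rev, hanti, hanti, hg₀st, hanti,
          hst2, ← zc hg₀, za hg₀, zd hg₀i, zb hg₀, h.ipl, st_eq hQ hZ x,
          st_eq hQ hZ b, zinv_rev h (hN b), zinv_rev h (hN x), h.inv_inv, h.inv_inv,
          za (hNi b), zb (hNi x) b, za (hN b), zb (hN x), za (hN b), zb (hN b) (nq st x),
          zsandwich' h (hN b), zsandwich' h (hN x)]
    · -- CASE C : left translation by ir x, base il b
      apply masterA hQ hg₀ hanti hst2 hg₀st hZ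
        (wEval [(true, b), (false, x⁻¹), (false, x*b⁻¹)])
        (wEval [(false, b), (true, x⁻¹), (true, x*b⁻¹), (true, ((x*b⁻¹)*(x⁻¹*b))⁻¹)])
        1 ((x*b⁻¹)*(x⁻¹*b)) h1c
        (pkg_of_word hQ hanti hst2 hZ _ (by
          show ((b*(1:Q))*x⁻¹)*(x*b⁻¹) = 1
          have e1 : x*b⁻¹ = (b*x⁻¹)⁻¹ := by rw [h.mul_inv_rev, h.inv_inv]
          rw [h.mul_one, e1, h.mul_inv_self]))
        (pkg_of_word hQ hanti hst2 hZ _ (by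
          show ((x*b⁻¹)*(x⁻¹*b))⁻¹ * ((x*b⁻¹)*(x⁻¹*((1:Q)*b))) = 1
          rw [h.one_mul, h.inv_mul_self]))
        (by
          have he : nq st ((x*b⁻¹)*(x⁻¹*b)) = 1 := by
            rw [nq_mul hQ hanti hZ, nq_mul hQ hanti hZ, nq_mul hQ hanti hZ,
              nq_inv hQ hanti hZ, nq_inv hQ hanti hZ, zsandwich h (hN x),
              h.inv_mul_self]
          rw [nq_one hQ hanti, he, h.one_mul])
      · intro u
        rw [conj_apply]
        simp only [hπ, dmul_ll, dmul_lr, dmul_rl, dmul_rr, dinv_l, dinv_r]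
        apply congrArg
        show g₀ * (st (x*st (b*u)) * (st ((x*st b)⁻¹)*g₀⁻¹)) = ((b*u)*x⁻¹)*(x*b⁻¹)
        rw [hanti, hst2, st_inv hQ hanti hst2, hanti, hst2, h.mul_inv_rev, ze hg₀i,
          h.mul_inv_cancel_left, st_eq hQ hZ x, zinv_rev h (hN x), h.inv_inv,
          zb (hN x) (b*u), za (hNi x), zsandwich h (hN x)]
      · intro u
        rw [conj_apply]
        simp only [hπ, dmul_ll, dmul_lr, dmul_rl, dmul_rr, dinv_l, dinv_r]
        apply congrArg
        show (st ((x*st b)⁻¹)*g₀⁻¹) * st (g₀*(st (u*b)*x))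
            = 1 * (((x*b⁻¹)*(x⁻¹*b)) * (((x*b⁻¹)*(x⁻¹*b))⁻¹
              * ((x*b⁻¹)*(x⁻¹*(u*b)))))
        rw [h.one_mul, h.mul_inv_cancel_left]
        rw [st_inv hQ hanti hst2, hanti, hst2, h.mul_inv_rev, hanti, hg₀st, hanti,
          hst2, ← zc hg₀, zd hg₀i, zb hg₀, h.ipl, st_eq hQ hZ x,
          zinv_rev h (hN x), h.inv_inv, za (hNi x), za (hN x), zsandwich' h (hN x)]
    · -- CASE H : left translation by ir x, base ir b
      apply masterA hQ hg₀ hanti hst2 hg₀st hZ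
        (wEval [(false, b⁻¹), (false, x), (true, x⁻¹*b)])
        (wEval [(true, b⁻¹), (true, x), (false, x⁻¹*b), (true, ((x*b⁻¹)*(x⁻¹*b))⁻¹)])
        1 ((x*b⁻¹)*(x⁻¹*b)) h1c
        (pkg_of_word hQ hanti hst2 hZ _ (by
          show (x⁻¹*b)*(((1:Q)*b⁻¹)*x) = 1
          have e1 : b⁻¹*x = (x⁻¹*b)⁻¹ := by rw [h.mul_inv_rev, h.inv_inv]
          rw [h.one_mul, e1, h.mul_inv_self]))
        (pkg_of_word hQ hanti hst2 hZ _ (by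
          show ((x*b⁻¹)*(x⁻¹*b))⁻¹ * ((x*(b⁻¹*1))*(x⁻¹*b)) = 1
          rw [h.mul_one, h.inv_mul_self]))
        (by
          have he : nq st ((x*b⁻¹)*(x⁻¹*b)) = 1 := by
            rw [nq_mul hQ hanti hZ, nq_mul hQ hanti hZ, nq_mul hQ hanti hZ,
              nq_inv hQ hanti hZ, nq_inv hQ hanti hZ, zsandwich h (hN x),
              h.inv_mul_self]
          rw [nq_one hQ hanti, he, h.one_mul])
      · intro u
        rw [conj_apply]
        simp only [hπ, dmul_ll, dmul_lr, dmul_rl, dmul_rr, dinv_l, dinv_r]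
        apply congrArg
        show (g₀*(st b*x))⁻¹ * (g₀*(st (b*st u)*x)) = (x⁻¹*b)*((u*b⁻¹)*x)
        rw [hanti, hst2, zinv_rev h hg₀, zsandwich' h hg₀, h.mul_inv_rev,
          st_eq hQ hZ b, zinv_rev h (hN b), h.inv_inv, zb (hNi b) x⁻¹, zb (hN b) u,
          za (hN b), zsandwich' h (hN b)]
      · intro u
        rw [conj_apply]
        simp only [hπ, dmul_ll, dmul_lr, dmul_rl, dmul_rr, dinv_l, dinv_r]
        apply congrArg
        show (x*st (g₀*(st u*b)))*(g₀*(st b*x))⁻¹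
            = 1 * (((x*b⁻¹)*(x⁻¹*b)) * (((x*b⁻¹)*(x⁻¹*b))⁻¹
              * ((x*(b⁻¹*u))*(x⁻¹*b))))
        rw [h.one_mul, h.mul_inv_cancel_left]
        rw [hanti, hg₀st, hanti, hst2, zinv_rev h hg₀, ze hg₀, zsandwich h hg₀,
          h.mul_inv_rev, st_eq hQ hZ b, zinv_rev h (hN b), h.inv_inv, za (hN b),
          zb (hN b) x, zb (hNi b) x⁻¹, zsandwich h (hN b)]
  · obtain ⟨x, rfl⟩ | ⟨x, rfl⟩ := dm_cases st g₀ X <;>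
      obtain ⟨b, rfl⟩ | ⟨b, rfl⟩ := dm_cases st g₀ B
    · -- CASE D : right translation by il x, base il b
      apply masterA hQ hg₀ hanti hst2 hg₀st hZ
        (wEval [(true, b), (false, x), (true, (b*x)⁻¹)])
        (wEval [(false, b), (false, x⁻¹), (false, x⁻¹*b⁻¹), (true, ((b*x⁻¹)*(x⁻¹*b⁻¹))⁻¹)])
        (nq st x) ((b*x⁻¹)*(x⁻¹*b⁻¹)) (hN x)
        (pkg_of_word hQ hanti hst2 hZ _ (by
          show (b*x)⁻¹*((b*(1:Q))*x) = 1
          rw [h.mul_one, h.inv_mul_self]))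
        (pkg_of_word hQ hanti hst2 hZ _ (by
          show ((b*x⁻¹)*(x⁻¹*b⁻¹))⁻¹ * ((((1:Q)*b)*x⁻¹)*(x⁻¹*b⁻¹)) = 1
          rw [h.one_mul, h.inv_mul_self]))
        (by
          rw [nq_nq hanti hst2, nq_mul hQ hanti hZ, nq_mul hQ hanti hZ,
            nq_mul hQ hanti hZ, nq_inv hQ hanti hZ, nq_inv hQ hanti hZ,
            za (hN b), ze (hNi b), h.mul_inv_cancel_left, za (hN x),
            h.mul_inv_cancel_left, h.mul_inv_self])
      · intro u
        rw [conj_apply]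
        simp only [hπ, dmul_ll, dmul_lr, dmul_rl, dmul_rr, dinv_l, dinv_r]
        rfl
      · intro u
        rw [conj_apply]
        simp only [hπ, dmul_ll, dmul_lr, dmul_rl, dmul_rr, dinv_l, dinv_r]
        apply congrArg
        show ((u*b)*st x)*(b*x)⁻¹
            = nq st x * (((b*x⁻¹)*(x⁻¹*b⁻¹)) * (((b*x⁻¹)*(x⁻¹*b⁻¹))⁻¹
              * (((u*b)*x⁻¹)*(x⁻¹*b⁻¹))))
        rw [h.mul_inv_cancel_left, st_eq hQ hZ x, h.mul_inv_rev, zb (hN x) (u*b),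
          za (hN x)]
    · -- CASE E : right translation by il x, base ir b
      apply masterA hQ hg₀ hanti hst2 hg₀st hZ
        (wEval [(false, b⁻¹), (true, x), (false, b*x⁻¹)])
        (wEval [(true, b⁻¹), (true, x⁻¹), (true, b*x⁻¹), (true, ((b*x⁻¹)*(x⁻¹*b⁻¹))⁻¹)])
        (nq st x) ((b*x⁻¹)*(x⁻¹*b⁻¹)) (hN x)
        (pkg_of_word hQ hanti hst2 hZ _ (by
          show (x*((1:Q)*b⁻¹))*(b*x⁻¹) = 1
          have e1 : b*x⁻¹ = (x*b⁻¹)⁻¹ := by rw [h.mul_inv_rev, h.inv_inv]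
          rw [h.one_mul, e1, h.mul_inv_self]))
        (pkg_of_word hQ hanti hst2 hZ _ (by
          show ((b*x⁻¹)*(x⁻¹*b⁻¹))⁻¹ * ((b*x⁻¹)*(x⁻¹*(b⁻¹*1))) = 1
          rw [h.mul_one, h.inv_mul_self]))
        (by
          rw [nq_nq hanti hst2, nq_mul hQ hanti hZ, nq_mul hQ hanti hZ,
            nq_mul hQ hanti hZ, nq_inv hQ hanti hZ, nq_inv hQ hanti hZ,
            za (hN b), ze (hNi b), h.mul_inv_cancel_left, za (hN x),
            h.mul_inv_cancel_left, h.mul_inv_self])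
      · intro u
        rw [conj_apply]
        simp only [hπ, dmul_ll, dmul_lr, dmul_rl, dmul_rr, dinv_l, dinv_r]
        apply congrArg
        show g₀ * (st ((b*st u)*st x) * (st ((b*st x)⁻¹)*g₀⁻¹)) = (x*(u*b⁻¹))*(b*x⁻¹)
        rw [hanti, hst2, hanti, hst2, st_inv hQ hanti hst2, hanti, hst2,
          h.mul_inv_rev, ze hg₀i, h.mul_inv_cancel_left, st_eq hQ hZ b,
          zinv_rev h (hN b), h.inv_inv, zb (hN b) u, zb (hN b) x, za (hNi b),
          zsandwich h (hN b)]
      · intro u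
        rw [conj_apply]
        simp only [hπ, dmul_ll, dmul_lr, dmul_rl, dmul_rr, dinv_l, dinv_r]
        apply congrArg
        show (st ((b*st x)⁻¹)*g₀⁻¹) * st ((g₀*(st u*b))*x)
            = nq st x * (((b*x⁻¹)*(x⁻¹*b⁻¹)) * (((b*x⁻¹)*(x⁻¹*b⁻¹))⁻¹
              * ((b*x⁻¹)*(x⁻¹*(b⁻¹*u)))))
        rw [h.mul_inv_cancel_left]
        rw [st_inv hQ hanti hst2, hanti, hst2, h.mul_inv_rev, hanti, hanti, hg₀st,
          hanti, hst2, ze hg₀, zd hg₀i, zb hg₀, h.ipl, st_eq hQ hZ b, st_eq hQ hZ x,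
          zinv_rev h (hN b), h.inv_inv, za (hNi b), za (hN b),
          zb (hN b) (nq st x * x⁻¹), za (hN x), zsandwich' h (hN b), zb (hN x)]
    · -- CASE F : right translation by ir x, base il b
      apply masterB hQ hg₀ hanti hst2 hg₀st hZ
        (wEval [(false, b⁻¹), (false, x⁻¹), (false, x*b)])
        (wEval [(true, b⁻¹), (false, x), (true, x*b), (true, ((x*b)*(b⁻¹*x))⁻¹)])
        ((nq st x)⁻¹) ((x*b)*(b⁻¹*x)) (hNi x)
        (pkg_of_word hQ hanti hst2 hZ _ (by
          show (((1:Q)*b⁻¹)*x⁻¹)*(x*b) = 1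
          rw [h.one_mul, ← h.mul_inv_rev, h.inv_mul_self]))
        (pkg_of_word hQ hanti hst2 hZ _ (by
          show ((x*b)*(b⁻¹*x))⁻¹ * ((x*b)*((b⁻¹*1)*x)) = 1
          rw [h.mul_one, h.inv_mul_self]))
        (by
          rw [nq_inv hQ hanti hZ, nq_nq hanti hst2, nq_mul hQ hanti hZ,
            nq_mul hQ hanti hZ, nq_mul hQ hanti hZ, nq_inv hQ hanti hZ,
            zc (hN x) (nq st b), zsandwich h (hN b), h.inv_mul_self])
      · intro u
        rw [conj_apply]
        simp only [hπ, dmul_ll, dmul_lr, dmul_rl, dmul_rr, dinv_l, dinv_r]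
        apply congrArg
        show g₀ * (st (x*(b*u)) * (st ((x*b)⁻¹)*g₀⁻¹))
            = nq st u * (((u⁻¹*b⁻¹)*x⁻¹)*(x*b))
        rw [hanti, hanti, st_inv hQ hanti hst2, hanti, h.mul_inv_rev, ze hg₀i,
          h.mul_inv_cancel_left, st_eq hQ hZ u, st_eq hQ hZ b, st_eq hQ hZ x,
          zinv_rev h (hN x), zinv_rev h (hN b), h.inv_inv, h.inv_inv,
          zb (hN b) (nq st u * u⁻¹), za (hN u), zb (hN x), za (hN b), za (hN u),
          za (hNi x), zb (hNi b) x, zsandwich h (hN x), zsandwich h (hN b),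
          za (hN u)]
      · intro u
        rw [conj_apply]
        simp only [hπ, dmul_ll, dmul_lr, dmul_rl, dmul_rr, dinv_l, dinv_r]
        apply congrArg
        show (st ((x*b)⁻¹)*g₀⁻¹) * st (g₀*(st x*(u*b)))
            = (nq st x)⁻¹ * (nq st u * (((x*b)*(b⁻¹*x)) * (((x*b)*(b⁻¹*x))⁻¹
              * ((x*b)*((b⁻¹*u⁻¹)*x)))))
        rw [h.mul_inv_cancel_left]
        rw [st_inv hQ hanti hst2, hanti, h.mul_inv_rev, hanti, hg₀st, hanti, hanti,
          hst2, ← zc hg₀, zd hg₀i, zb hg₀, h.ipl, st_eq hQ hZ b, st_eq hQ hZ u,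
          st_eq hQ hZ x, zinv_rev h (hN x), zinv_rev h (hN b), h.inv_inv, h.inv_inv,
          za (hNi x), zb (hNi b) x, zb (hN u) (nq st b * b⁻¹), za (hN b),
          za (hN u), za (hN b), zb (hN u), za (hNi x), zsandwich' h (hN b),
          zb (hNi x)]
    · -- CASE G : right translation by ir x, base ir b
      apply masterB hQ hg₀ hanti hst2 hg₀st hZ
        (wEval [(true, b), (true, x⁻¹), (true, b⁻¹*x)])
        (wEval [(false, b), (true, x), (false, b⁻¹*x), (true, ((x*b)*(b⁻¹*x))⁻¹)])
        ((nq st x)⁻¹) ((x*b)*(b⁻¹*x)) (hNi x)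
        (pkg_of_word hQ hanti hst2 hZ _ (by
          show (b⁻¹*x)*(x⁻¹*(b*1)) = 1
          have e1 : x⁻¹*b = (b⁻¹*x)⁻¹ := by rw [h.mul_inv_rev, h.inv_inv]
          rw [h.mul_one, e1, h.mul_inv_self]))
        (pkg_of_word hQ hanti hst2 hZ _ (by
          show ((x*b)*(b⁻¹*x))⁻¹ * ((x*((1:Q)*b))*(b⁻¹*x)) = 1
          rw [h.one_mul, h.inv_mul_self]))
        (by
          rw [nq_inv hQ hanti hZ, nq_nq hanti hst2, nq_mul hQ hanti hZ,
            nq_mul hQ hanti hZ, nq_mul hQ hanti hZ, nq_inv hQ hanti hZ,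
            zc (hN x) (nq st b), zsandwich h (hN b), h.inv_mul_self])
      · intro u
        rw [conj_apply]
        simp only [hπ, dmul_ll, dmul_lr, dmul_rl, dmul_rr, dinv_l, dinv_r]
        apply congrArg
        show (g₀*(st x*b))⁻¹ * (g₀*(st x*(b*st u)))
            = nq st u * ((b⁻¹*x)*(x⁻¹*(b*u⁻¹)))
        rw [zinv_rev h hg₀, zsandwich' h hg₀, h.mul_inv_rev, st_eq hQ hZ x,
          st_eq hQ hZ u, zinv_rev h (hN x), h.inv_inv, zb (hNi x) b⁻¹, zb (hN u) b,
          zb (hN u), za (hN x), zb (hN u), zsandwich' h (hN x)]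
      · intro u
        rw [conj_apply]
        simp only [hπ, dmul_ll, dmul_lr, dmul_rl, dmul_rr, dinv_l, dinv_r]
        apply congrArg
        show (x*(g₀*(st u*b)))*(g₀*(st x*b))⁻¹
            = (nq st x)⁻¹ * (nq st u * (((x*b)*(b⁻¹*x)) * (((x*b)*(b⁻¹*x))⁻¹
              * ((x*(u⁻¹*b))*(b⁻¹*x)))))
        rw [h.mul_inv_cancel_left]
        rw [zinv_rev h hg₀, zb hg₀ x, zsandwich h hg₀, h.mul_inv_rev,
          st_eq hQ hZ u, st_eq hQ hZ x, zinv_rev h (hN x), h.inv_inv, za (hN u),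
          zb (hN u) x, zb (hNi x) b⁻¹, za (hN u), zb (hNi x) (x*(u⁻¹*b)),
          zb (hNi x)]

end Final

end SAIPAux

/-- The Chein-type doubling of a semiautomorphic IP loop with respect to
an involutory antiautomorphism `*` with `g₀* = g₀` and `gg* ∈ Z(Q)` is a
semiautomorphic IP loop. -/
theorem stmt14 (Q : Type*) [Mul Q] [One Q] [Inv Q] (hQ : IsSAIPLoop Q)
    (g₀ : Q) (hg₀ : g₀ ∈ loopCenter Q)
    (st : Q → Q) (hanti : ∀ g h : Q, st (g * h) = st h * st g)
    (hst2 : ∀ g : Q, st (st g) = g) (hg₀st : st g₀ = g₀)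
    (hZ : ∀ g : Q, g * st g ∈ loopCenter Q)
    (f : Q ⊕ Q → Q ⊕ Q → Q ⊕ Q)
    (hf : ∀ g h : Q,
      f (.inl g) (.inl h) = .inl (g * h) ∧
      f (.inl g) (.inr h) = .inr (h * g) ∧
      f (.inr g) (.inl h) = .inr (g * st h) ∧
      f (.inr g) (.inr h) = .inl (g₀ * (st h * g))) :
    ∃ inv : Q ⊕ Q → Q ⊕ Q,
      @IsSAIPLoop (Q ⊕ Q) ⟨f⟩ ⟨Sum.inl 1⟩ ⟨inv⟩ := by
  have hfe : f = SAIPAux.dmulF st g₀ := by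
    funext X Y
    rcases X with g | g <;> rcases Y with k | k
    · rw [(hf g k).1]; rfl
    · rw [(hf g k).2.1]; rfl
    · rw [(hf g k).2.2.1]; rfl
    · rw [(hf g k).2.2.2]; rfl
  refine ⟨SAIPAux.dinvF st g₀, ?_⟩
  rw [hfe]
  exact SAIPAux.saipD hQ hg₀ hanti hst2 hg₀st hZ
end

section
/- Let Q be an IP loop and let * : Q → Q be a bijection such that gg* ∈ Z(Q) for every g ∈ Q. Then for all g,h ∈ Q: (i) g·(hh*) = (gh)·h*; (ii) (gg*)·h = g·(g*h); and (iii) (g(hh*))·g* = (gh)·(h*g*). -/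
/-- If `Q` is an IP loop and `* : Q → Q` is a bijection with
`gg* ∈ Z(Q)` for all `g`, then `g·(hh*) = (gh)·h*`, `(gg*)·h = g·(g*h)`, and
`(g(hh*))·g* = (gh)·(h*g*)`. -/
theorem stmt15 (Q : Type*) [Mul Q] [One Q] [Inv Q] (hQ : IsLoop Q) (hIP : IsIP Q)
    (st : Q → Q) (hbij : Function.Bijective st)
    (hZ : ∀ g : Q, g * st g ∈ loopCenter Q) :
    ∀ g h : Q,
      g * (h * st h) = (g * h) * st h ∧
      (g * st g) * h = g * (st g * h) ∧
      (g * (h * st h)) * st g = (g * h) * (st h * st g) := by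
  intro g h
  obtain ⟨hcomm, ha1, ha2, ha3⟩ := hZ h
  obtain ⟨gcomm, ga1, ga2, ga3⟩ := hZ g
  have hip1 : ∀ x y : Q, x⁻¹ * (x * y) = y := fun x y => (hIP x y).1
  have hip2 : ∀ x y : Q, (y * x) * x⁻¹ = y := fun x y => (hIP x y).2
  set c := h * st h with hc
  set c' := g * st g with hc'
  have hst : st h = h⁻¹ * c := (hip1 h (st h)).symm
  have gst : st g = g⁻¹ * c' := (hip1 g (st g)).symm
  have xx : ∀ x : Q, x * x⁻¹ = 1 := fun x => by
    have := hip2 x 1; rwa [hQ.one_mul] at this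
  have invx : ∀ x : Q, x⁻¹ * x = 1 := fun x => by
    have := hip1 x 1; rwa [hQ.mul_one] at this
  have inv_inv : ∀ x : Q, x⁻¹⁻¹ = x := fun x => by
    have := hip1 x⁻¹ x; rwa [invx, hQ.mul_one] at this
  have hip1' : ∀ x y : Q, x * (x⁻¹ * y) = y := fun x y => by
    have := hip1 x⁻¹ y; rwa [inv_inv] at this
  have inv_mul : (g * h)⁻¹ * g = h⁻¹ := by
    have h1 : (g * h)⁻¹ * ((g * h) * h⁻¹) = h⁻¹ := hip1 _ _
    rwa [hip2 h g] at h1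
  have ginv : (g * h) * (h⁻¹ * g⁻¹) = 1 := by
    have h1 : ((g * h)⁻¹ * g) * g⁻¹ = (g * h)⁻¹ := hip2 _ _
    rw [inv_mul] at h1
    rw [h1, xx]
  refine ⟨?_, ?_, ?_⟩
  · rw [hst, ha3 (g*h) h⁻¹, hip2 h g]
  · rw [gst, ← ga2 g⁻¹ h, hip1' g (c' * h)]
  · calc (g * c) * st g = (g * c) * (g⁻¹ * c') := by rw [gst]
      _ = ((g * c) * g⁻¹) * c' := ga3 (g * c) g⁻¹
      _ = (g * (c * g⁻¹)) * c' := by rw [ha2 g g⁻¹]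
      _ = (g * (g⁻¹ * c)) * c' := by rw [hcomm g⁻¹]
      _ = c * c' := by rw [hip1' g c]
      _ = (1 * c) * c' := by rw [hQ.one_mul c]
      _ = (((g * h) * (h⁻¹ * g⁻¹)) * c) * c' := by rw [ginv]
      _ = ((g * h) * ((h⁻¹ * g⁻¹) * c)) * c' := by rw [ha3 (g*h) (h⁻¹ * g⁻¹)]
      _ = ((g * h) * (h⁻¹ * (g⁻¹ * c))) * c' := by rw [ha3 h⁻¹ g⁻¹]
      _ = ((g * h) * (h⁻¹ * (c * g⁻¹))) * c' := by rw [hcomm g⁻¹]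
      _ = ((g * h) * ((h⁻¹ * c) * g⁻¹)) * c' := by rw [ha2 h⁻¹ g⁻¹]
      _ = (g * h) * (((h⁻¹ * c) * g⁻¹) * c') := (ga3 (g*h) _).symm
      _ = (g * h) * ((h⁻¹ * c) * (g⁻¹ * c')) := by rw [ga3 (h⁻¹ * c) g⁻¹]
      _ = (g * h) * (st h * st g) := by rw [hst, gst]
end

section
/- Let Q be a semiautomorphic IP loop, g₀ ∈ Z(Q), and * an involutory antiautomorphism of Q such that g₀* = g₀ and gg* ∈ Z(Q) for every g ∈ Q. For an indeterminate t, define multiplication ∘ on the disjoint union Q ∪ Qt by: g∘h = gh, g∘(ht) = (gh)t, (gt)∘h = (h*g)t, and (gt)∘(ht) = g₀ g h*. Then (Q ∪ Qt, ∘) is a semiautomorphic IP loop. -/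
theorem Equiv.Perm.apply_inv_self {α : Type*} (x : Equiv.Perm α) (v : α) : x (x⁻¹ v) = v :=
  (Equiv.eq_symm_apply x).mp rfl

theorem Equiv.Perm.inv_apply_self {α : Type*} (x : Equiv.Perm α) (v : α) : x⁻¹ (x v) = v :=
  Equiv.Perm.inv_eq_iff_eq.mpr rfl

namespace S16

variable {Q : Type*} [Mul Q] [One Q] [Inv Q]

section Basic

theorem mul_lc (hQ : IsSAIPLoop Q) {a x y : Q} (h : a * x = a * y) : x = y := by
  obtain ⟨w, _, hu⟩ := hQ.toIsLoop.exUnique_left a (a * y)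
  exact (hu x h).trans (hu y rfl).symm

theorem mul_rc (hQ : IsSAIPLoop Q) {a x y : Q} (h : x * a = y * a) : x = y := by
  obtain ⟨w, _, hu⟩ := hQ.toIsLoop.exUnique_right a (y * a)
  exact (hu x h).trans (hu y rfl).symm

theorem lin (hQ : IsSAIPLoop Q) (x y : Q) : x⁻¹ * (x * y) = y := (hQ.ip x y).1
theorem rin (hQ : IsSAIPLoop Q) (x y : Q) : (y * x) * x⁻¹ = y := (hQ.ip x y).2

theorem mul_inv (hQ : IsSAIPLoop Q) (x : Q) : x * x⁻¹ = 1 := by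
  have := rin hQ x 1; rwa [hQ.toIsLoop.one_mul] at this

theorem inv_mul (hQ : IsSAIPLoop Q) (x : Q) : x⁻¹ * x = 1 := by
  have := lin hQ x 1; rwa [hQ.toIsLoop.mul_one] at this

theorem inv_invQ (hQ : IsSAIPLoop Q) (x : Q) : x⁻¹⁻¹ = x := by
  have := lin hQ x⁻¹ x; rwa [inv_mul hQ, hQ.toIsLoop.mul_one] at this

theorem lin' (hQ : IsSAIPLoop Q) (x y : Q) : x * (x⁻¹ * y) = y := by
  have := lin hQ x⁻¹ y; rwa [inv_invQ hQ] at this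

theorem rin' (hQ : IsSAIPLoop Q) (x y : Q) : (y * x⁻¹) * x = y := by
  have := rin hQ x⁻¹ y; rwa [inv_invQ hQ] at this

theorem eq_inv_right (hQ : IsSAIPLoop Q) {a b : Q} (h : a * b = 1) : b = a⁻¹ := by
  have := lin hQ a b; rw [h, hQ.toIsLoop.mul_one] at this; exact this.symm

theorem eq_inv_left (hQ : IsSAIPLoop Q) {a b : Q} (h : a * b = 1) : a = b⁻¹ := by
  have := rin hQ b a; rw [h, hQ.toIsLoop.one_mul] at this; exact this.symm

theorem inv_oneQ (hQ : IsSAIPLoop Q) : (1 : Q)⁻¹ = 1 :=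
  (eq_inv_right hQ (hQ.toIsLoop.one_mul 1)).symm

theorem aaip (hQ : IsSAIPLoop Q) (x y : Q) : (x * y)⁻¹ = y⁻¹ * x⁻¹ := by
  have h2 : (x⁻¹ * (x * y)) * (x * y)⁻¹ = x⁻¹ := rin hQ (x * y) x⁻¹
  rw [lin hQ] at h2
  have h3 := lin hQ y (x * y)⁻¹
  rw [h2] at h3; exact h3.symm

end Basic

section Star

variable (g₀ : Q) (st : Q → Q)

theorem st_one (hQ : IsSAIPLoop Q) (hanti : ∀ g h : Q, st (g * h) = st h * st g) :
    st 1 = 1 := by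
  have h := hanti 1 1
  rw [hQ.toIsLoop.one_mul] at h
  have h2 : st 1 * st 1 = st 1 * 1 := by rw [← h, hQ.toIsLoop.mul_one]
  exact (mul_lc hQ h2)

theorem st_inv (hQ : IsSAIPLoop Q) (hanti : ∀ g h : Q, st (g * h) = st h * st g)
    (x : Q) : st x⁻¹ = (st x)⁻¹ := by
  have h := hanti x x⁻¹
  rw [mul_inv hQ, st_one st hQ hanti] at h
  exact eq_inv_left hQ h.symm

end Star

section Center

theorem zpull₂ (hQ : IsSAIPLoop Q) {a : Q} (ha : a ∈ loopCenter Q) (x y : Q) :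
    x * (a * y) = a * (x * y) := by
  rw [ha.2.2.1 x y, ← ha.1 x, ← ha.2.1 x y]

theorem zpull₁ (hQ : IsSAIPLoop Q) {a : Q} (ha : a ∈ loopCenter Q) (x y : Q) :
    (a * x) * y = a * (x * y) := (ha.2.1 x y).symm

theorem zpull₃ (hQ : IsSAIPLoop Q) {a : Q} (ha : a ∈ loopCenter Q) (x y : Q) :
    x * (y * a) = a * (x * y) := by
  rw [ha.2.2.2 x y, ← ha.1 (x * y)]

theorem zpull₁r (hQ : IsSAIPLoop Q) {a : Q} (ha : a ∈ loopCenter Q) (x y : Q) :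
    (x * a) * y = a * (x * y) := by
  rw [← ha.1 x, zpull₁ hQ ha]

theorem center_inv (hQ : IsSAIPLoop Q) {a : Q} (ha : a ∈ loopCenter Q) :
    a⁻¹ ∈ loopCenter Q := by
  have comm : ∀ x : Q, a⁻¹ * x = x * a⁻¹ := by
    intro x
    apply mul_lc hQ (a := a)
    rw [lin' hQ, ha.2.1 x a⁻¹, ha.1 x, rin hQ]
  refine ⟨comm, ?_, ?_, ?_⟩
  · intro x y
    apply mul_lc hQ (a := a)
    rw [lin' hQ, ha.2.1 (a⁻¹ * x) y, lin' hQ]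
  · intro x y
    apply mul_lc hQ (a := a)
    rw [← zpull₂ hQ ha x (a⁻¹ * y), lin' hQ, ha.2.1 (x * a⁻¹) y, ha.2.1 x a⁻¹,
      ha.1 x, rin hQ]
  · intro x y
    apply mul_lc hQ (a := a)
    rw [← zpull₂ hQ ha x (y * a⁻¹), ha.2.1 y a⁻¹, ha.1 y, rin hQ,
      ha.2.1 (x * y) a⁻¹, ha.1 (x * y), rin hQ]

theorem center_mul (hQ : IsSAIPLoop Q) {a b : Q} (ha : a ∈ loopCenter Q)
    (hb : b ∈ loopCenter Q) : a * b ∈ loopCenter Q := by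
  refine ⟨?_, ?_, ?_, ?_⟩
  · intro w
    rw [zpull₁ hQ ha b w, hb.1 w, ha.2.1 w b, ha.1 w, ← hb.2.2.2 w a]
  · intro x y
    rw [zpull₁ hQ ha b (x*y), hb.2.1 x y, ha.2.1 (b*x) y, ← zpull₁ hQ ha b x]
  · intro x y
    rw [zpull₁ hQ ha b y, ha.2.2.1 x (b*y), hb.2.2.1 (x*a) y, ha.2.2.1 x b]
  · intro x y
    rw [ha.2.2.1 y b, hb.2.2.2 x (y*a), ha.2.2.2 x y, ha.2.2.1 (x*y) b]

end Center

end S16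

namespace S16

variable {Q : Type*} [Mul Q] [One Q] [Inv Q]

def cQ (st : Q → Q) (x : Q) : Q := x * st x

section Norm

variable (hQ : IsSAIPLoop Q) (st : Q → Q)
  (hanti : ∀ g h : Q, st (g * h) = st h * st g)
  (hst2 : ∀ g : Q, st (st g) = g)
  (hZ : ∀ g : Q, g * st g ∈ loopCenter Q)

include hQ hanti hst2 hZ

theorem c_mem (x : Q) : cQ st x ∈ loopCenter Q := hZ x

theorem st_eq (x : Q) : st x = x⁻¹ * cQ st x := (lin hQ x (st x)).symm

theorem st_eq' (x : Q) : st x = cQ st x * x⁻¹ := by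
  have hcm : ∀ u : Q, cQ st u ∈ loopCenter Q := c_mem hQ st hanti hst2 hZ
  rw [st_eq hQ st hanti hst2 hZ x]
  exact ((hcm x).1 x⁻¹).symm

theorem st_mul_self (x : Q) : st x * x = cQ st x := by
  rw [st_eq' hQ st hanti hst2 hZ x]; exact rin' hQ x (cQ st x)

theorem c_oneQ : cQ st 1 = 1 := by
  show (1 : Q) * st 1 = 1
  rw [hQ.toIsLoop.one_mul, st_one st hQ hanti]

theorem c_st (x : Q) : cQ st (st x) = cQ st x := by
  show st x * st (st x) = cQ st x
  rw [hst2]; exact st_mul_self hQ st hanti hst2 hZ x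

theorem c_invQ (x : Q) : cQ st x⁻¹ = (cQ st x)⁻¹ := by
  show x⁻¹ * st x⁻¹ = (cQ st x)⁻¹
  rw [st_inv st hQ hanti, ← aaip hQ (st x) x, st_mul_self hQ st hanti hst2 hZ]

theorem st_c (x : Q) : st (cQ st x) = cQ st x := by
  show st (x * st x) = cQ st x
  rw [hanti x (st x), hst2 x]; rfl

theorem c_mul (x y : Q) : cQ st (x * y) = cQ st x * cQ st y := by
  have hcm : ∀ u : Q, cQ st u ∈ loopCenter Q := c_mem hQ st hanti hst2 hZ
  show (x * y) * st (x * y) = cQ st x * cQ st y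
  rw [hanti x y]
  have e1 : st y * st x = cQ st y * (y⁻¹ * (cQ st x * x⁻¹)) := by
    rw [st_eq' hQ st hanti hst2 hZ x, st_eq' hQ st hanti hst2 hZ y]
    exact zpull₁ hQ (hcm y) y⁻¹ (cQ st x * x⁻¹)
  rw [e1, zpull₂ hQ (hcm y) (x*y) (y⁻¹ * (cQ st x * x⁻¹)),
    zpull₂ hQ (hcm x) y⁻¹ x⁻¹, zpull₂ hQ (hcm x) (x*y) (y⁻¹ * x⁻¹),
    ← aaip hQ x y, mul_inv hQ, hQ.toIsLoop.mul_one, (hcm y).1 (cQ st x)]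

theorem st_mul_mul (p q : Q) : st p * (p * q) = cQ st p * q := by
  rw [st_eq' hQ st hanti hst2 hZ p]
  rw [zpull₁ hQ (c_mem hQ st hanti hst2 hZ p) p⁻¹ (p*q)]
  rw [lin hQ]

theorem mul_st_mul (p x : Q) : (p * x) * st x = cQ st x * p := by
  rw [st_eq' hQ st hanti hst2 hZ x, zpull₂ hQ (c_mem hQ st hanti hst2 hZ x) (p*x) x⁻¹,
    rin hQ]

theorem mul_st_mul' (g h : Q) : g * (st g * h) = cQ st g * h := by
  rw [st_eq' hQ st hanti hst2 hZ g, zpull₁ hQ (c_mem hQ st hanti hst2 hZ g) g⁻¹ h,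
    zpull₂ hQ (c_mem hQ st hanti hst2 hZ g) g (g⁻¹*h), lin' hQ]

end Norm

end S16

namespace S16

variable {Q : Type*} [Mul Q] [One Q] [Inv Q]

def lpQ (hQ : IsSAIPLoop Q) (w : Q) : Equiv.Perm Q :=
  ⟨fun z => w * z, fun z => w⁻¹ * z, fun z => lin hQ w z, fun z => lin' hQ w z⟩

def rpQ (hQ : IsSAIPLoop Q) (w : Q) : Equiv.Perm Q :=
  ⟨fun z => z * w, fun z => z * w⁻¹, fun z => rin hQ w z, fun z => rin' hQ w z⟩

theorem lpQ_mem (hQ : IsSAIPLoop Q) (w : Q) : lpQ hQ w ∈ translations Q :=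
  Or.inl ⟨w, fun _ => rfl⟩

theorem rpQ_mem (hQ : IsSAIPLoop Q) (w : Q) : rpQ hQ w ∈ translations Q :=
  Or.inr ⟨w, fun _ => rfl⟩

theorem mlt_zlin (hQ : IsSAIPLoop Q) {θ : Equiv.Perm Q}
    (hθ : θ ∈ Subgroup.closure (translations Q)) {a : Q} (ha : a ∈ loopCenter Q) :
    ∀ v, θ (a * v) = a * θ v := by
  induction hθ using Subgroup.closure_induction with
  | mem s hs =>
    rcases hs with ⟨x, hx⟩ | ⟨x, hx⟩ <;> intro v
    · rw [hx, hx, zpull₂ hQ ha]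
    · rw [hx, hx, zpull₁ hQ ha]
  | one => intro v; rfl
  | mul x y hx hy ihx ihy =>
    intro v
    rw [Equiv.Perm.mul_apply, Equiv.Perm.mul_apply, ihy, ihx]
  | inv x hx ih =>
    intro v
    apply x.injective
    rw [Equiv.Perm.apply_inv_self, ih (x⁻¹ v), Equiv.Perm.apply_inv_self]

section Mlt

variable (hQ : IsSAIPLoop Q) (st : Q → Q)
  (hanti : ∀ g h : Q, st (g * h) = st h * st g)
  (hst2 : ∀ g : Q, st (st g) = g)
  (hZ : ∀ g : Q, g * st g ∈ loopCenter Q)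

include hQ hanti hst2 hZ

theorem mlt_norm {θ : Equiv.Perm Q} (hθ : θ ∈ Subgroup.closure (translations Q)) :
    ∀ v, cQ st (θ v) = cQ st (θ 1) * cQ st v := by
  induction hθ using Subgroup.closure_induction with
  | mem s hs =>
    rcases hs with ⟨x, hx⟩ | ⟨x, hx⟩ <;> intro v
    · rw [hx, hx, hQ.toIsLoop.mul_one, c_mul hQ st hanti hst2 hZ]
    · rw [hx, hx, hQ.toIsLoop.one_mul, c_mul hQ st hanti hst2 hZ,
        (c_mem hQ st hanti hst2 hZ v).1]
  | one =>
    intro v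
    simp only [Equiv.Perm.one_apply]
    rw [c_oneQ hQ st hanti hst2 hZ, hQ.toIsLoop.one_mul]
  | mul x y hx hy ihx ihy =>
    intro v
    rw [Equiv.Perm.mul_apply, Equiv.Perm.mul_apply, ihx (y v), ihy v, ihx (y 1),
      zpull₁ hQ (c_mem hQ st hanti hst2 hZ (x 1))]
  | inv x hx ih =>
    have h1 : ∀ v, cQ st (x⁻¹ v) = (cQ st (x 1))⁻¹ * cQ st v := by
      intro v
      have h := ih (x⁻¹ v)
      rw [Equiv.Perm.apply_inv_self] at h
      rw [h, lin hQ]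
    intro v
    rw [h1 v, h1 1, c_oneQ hQ st hanti hst2 hZ, hQ.toIsLoop.mul_one]

end Mlt

theorem inner_semiQ (hQ : IsSAIPLoop Q) {θ : Equiv.Perm Q}
    (hθ : θ ∈ Subgroup.closure (translations Q)) (h1 : θ 1 = 1) :
    IsSemiautomorphism Q ⇑θ := hQ.inner_semi θ ⟨hθ, h1⟩

theorem semi_inv (hQ : IsSAIPLoop Q) {T : Q → Q} (hs : IsSemiautomorphism Q T) (x : Q) :
    T x⁻¹ = (T x)⁻¹ := by
  have h := hs.2 x x⁻¹
  rw [mul_inv hQ, hQ.toIsLoop.one_mul] at h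
  have h2 : (T x * T x⁻¹) * T x = 1 * T x := by rw [← h, hQ.toIsLoop.one_mul]
  exact eq_inv_right hQ (mul_rc hQ h2)

section Inner

variable (hQ : IsSAIPLoop Q) (st : Q → Q)
  (hanti : ∀ g h : Q, st (g * h) = st h * st g)
  (hst2 : ∀ g : Q, st (st g) = g)
  (hZ : ∀ g : Q, g * st g ∈ loopCenter Q)

include hQ hanti hst2 hZ

theorem inner_norm {θ : Equiv.Perm Q} (hθ : θ ∈ Subgroup.closure (translations Q))
    (h1 : θ 1 = 1) (x : Q) : cQ st (θ x) = cQ st x := by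
  rw [mlt_norm hQ st hanti hst2 hZ hθ x, h1, c_oneQ hQ st hanti hst2 hZ,
    hQ.toIsLoop.one_mul]

theorem inner_star {θ : Equiv.Perm Q} (hθ : θ ∈ Subgroup.closure (translations Q))
    (h1 : θ 1 = 1) (x : Q) : θ (st x) = st (θ x) := by
  rw [st_eq' hQ st hanti hst2 hZ x, mlt_zlin hQ hθ (c_mem hQ st hanti hst2 hZ x) x⁻¹,
    semi_inv hQ (inner_semiQ hQ hθ h1) x, st_eq' hQ st hanti hst2 hZ (θ x),
    inner_norm hQ st hanti hst2 hZ hθ h1 x]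

end Inner

theorem i4star (hQ : IsSAIPLoop Q) (d a z : Q) :
    d * ((a * (z * d)) * a) = ((d * a) * z) * (d * a) := by
  let θ : Equiv.Perm Q := (rpQ hQ (d * a))⁻¹ * rpQ hQ a * rpQ hQ d
  have hθv : ∀ u, θ u = ((u * d) * a) * (d * a)⁻¹ := fun u => rfl
  have hmem : θ ∈ Subgroup.closure (translations Q) :=
    mul_mem (mul_mem (inv_mem (Subgroup.subset_closure (rpQ_mem hQ (d * a))))
      (Subgroup.subset_closure (rpQ_mem hQ a))) (Subgroup.subset_closure (rpQ_mem hQ d))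
  have h1 : θ 1 = 1 := by rw [hθv 1, hQ.toIsLoop.one_mul, mul_inv hQ]
  have hsemi := inner_semiQ hQ hmem h1
  have hwinv : θ (d * a)⁻¹ = (d * a)⁻¹ := by
    have e : (d * a)⁻¹ = a⁻¹ * d⁻¹ := aaip hQ d a
    rw [hθv, e, rin' hQ, inv_mul hQ, hQ.toIsLoop.one_mul]
  have hwfix : θ (d * a) = d * a := by
    have h2 := semi_inv hQ hsemi (d * a)⁻¹
    rw [hwinv] at h2
    rw [inv_invQ hQ] at h2
    exact h2
  have hc : ∀ u, θ (d * (a * u)) = (d * a) * u := by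
    intro u
    have h2 := semi_inv hQ hsemi (d * (a * u))
    have e : (d * (a * u))⁻¹ = (u⁻¹ * a⁻¹) * d⁻¹ := by rw [aaip hQ, aaip hQ]
    rw [e, hθv, rin' hQ, rin' hQ, ← aaip hQ (d * a) u] at h2
    have h3 := congrArg (fun t => t⁻¹) h2
    rw [inv_invQ hQ, inv_invQ hQ] at h3
    exact h3.symm
  have key : θ (d * (a * ((θ z) * (d * a)))) = θ (((d * a) * z) * (d * a)) := by
    rw [hc ((θ z) * (d * a)), ← hQ.flexible (d * a) (θ z), hsemi.2 (d * a) z, hwfix]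
  have hinj := θ.injective key
  have hzw : (θ z) * (d * a) = (z * d) * a := by rw [hθv z, rin' hQ]
  rw [hzw] at hinj
  rw [hQ.flexible a (z * d)]
  exact hinj

theorem i4 (hQ : IsSAIPLoop Q) (d a b : Q) :
    d * ((a * b) * a) = ((d * a) * (b * d⁻¹)) * (d * a) := by
  have h := i4star hQ d a (b * d⁻¹)
  rwa [rin' hQ] at h

end S16

namespace S16

theorem exists_word {G : Type*} [Group G] {s : Set G} {x : G}
    (hx : x ∈ Subgroup.closure s) :
    ∃ l : List G, (∀ y ∈ l, y ∈ s ∨ y⁻¹ ∈ s) ∧ l.prod = x := by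
  induction hx using Subgroup.closure_induction with
  | mem z hz => exact ⟨[z], by simp [hz], by simp⟩
  | one => exact ⟨[], by simp, rfl⟩
  | mul a b _ _ iha ihb =>
    obtain ⟨l1, h1, e1⟩ := iha
    obtain ⟨l2, h2, e2⟩ := ihb
    refine ⟨l1 ++ l2, ?_, by rw [List.prod_append, e1, e2]⟩
    intro y hy
    rcases List.mem_append.1 hy with h | h
    exacts [h1 y h, h2 y h]
  | inv a _ ih =>
    obtain ⟨l, hl, e⟩ := ih
    refine ⟨(l.map (·⁻¹)).reverse, ?_, ?_⟩
    · intro y hy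
      rw [List.mem_reverse, List.mem_map] at hy
      obtain ⟨z, hz, rfl⟩ := hy
      rcases hl z hz with h | h
      · right; rwa [inv_inv]
      · left; exact h
    · rw [← List.prod_inv_reverse, e]

end S16

open S16

/-- The de Barros–Juriaans-type doubling of a semiautomorphic IP loop
with respect to an involutory antiautomorphism `*` with `g₀* = g₀` and `gg* ∈ Z(Q)`
is a semiautomorphic IP loop. -/
theorem stmt16 (Q : Type*) [Mul Q] [One Q] [Inv Q] (hQ : IsSAIPLoop Q)
    (g₀ : Q) (hg₀ : g₀ ∈ loopCenter Q)
    (st : Q → Q) (hanti : ∀ g h : Q, st (g * h) = st h * st g)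
    (hst2 : ∀ g : Q, st (st g) = g) (hg₀st : st g₀ = g₀)
    (hZ : ∀ g : Q, g * st g ∈ loopCenter Q)
    (f : Q ⊕ Q → Q ⊕ Q → Q ⊕ Q)
    (hf : ∀ g h : Q,
      f (.inl g) (.inl h) = .inl (g * h) ∧
      f (.inl g) (.inr h) = .inr (g * h) ∧
      f (.inr g) (.inl h) = .inr (st h * g) ∧
      f (.inr g) (.inr h) = .inl (g₀ * (g * st h))) :
    ∃ inv : Q ⊕ Q → Q ⊕ Q,
      @IsSAIPLoop (Q ⊕ Q) ⟨f⟩ ⟨Sum.inl 1⟩ ⟨inv⟩ := by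
  classical
  refine ⟨Sum.elim (fun g => Sum.inl g⁻¹) (fun g => Sum.inr (g₀⁻¹ * (st g)⁻¹)), ?_⟩
  letI : Mul (Q ⊕ Q) := ⟨f⟩
  letI : One (Q ⊕ Q) := ⟨Sum.inl 1⟩
  letI : Inv (Q ⊕ Q) :=
    ⟨Sum.elim (fun g => Sum.inl g⁻¹) (fun g => Sum.inr (g₀⁻¹ * (st g)⁻¹))⟩
  -- abbreviations for loop lemmas
  have om := hQ.toIsLoop.one_mul
  have mo := hQ.toIsLoop.mul_one
  have flex := hQ.flexible
  have L1 := S16.lin hQ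
  have R1 := S16.rin hQ
  have L1' := S16.lin' hQ
  have R1' := S16.rin' hQ
  have ainv := S16.aaip hQ
  have ivv := S16.inv_invQ hQ
  have st1 : st 1 = 1 := S16.st_one st hQ hanti
  have sinv := S16.st_inv st hQ hanti
  have cmem := S16.c_mem hQ st hanti hst2 hZ
  have cmul := S16.c_mul hQ st hanti hst2 hZ
  have cst := S16.c_st hQ st hanti hst2 hZ
  have cinv := S16.c_invQ hQ st hanti hst2 hZ
  have cone := S16.c_oneQ hQ st hanti hst2 hZ
  have smm := S16.st_mul_mul hQ st hanti hst2 hZ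
  have msm := S16.mul_st_mul hQ st hanti hst2 hZ
  have msm' := S16.mul_st_mul' hQ st hanti hst2 hZ
  have seq' := S16.st_eq' hQ st hanti hst2 hZ
  have stc := S16.st_c hQ st hanti hst2 hZ
  have zp1 : ∀ {a : Q}, a ∈ loopCenter Q → ∀ x y : Q, (a*x)*y = a*(x*y) :=
    fun ha x y => S16.zpull₁ hQ ha x y
  have zp2 : ∀ {a : Q}, a ∈ loopCenter Q → ∀ x y : Q, x*(a*y) = a*(x*y) :=
    fun ha x y => S16.zpull₂ hQ ha x y
  have hg₀i : g₀⁻¹ ∈ loopCenter Q := S16.center_inv hQ hg₀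
  -- multiplication and inverse computation rules
  have mll : ∀ g h : Q, (Sum.inl g : Q ⊕ Q) * Sum.inl h = Sum.inl (g * h) :=
    fun g h => (hf g h).1
  have mlr : ∀ g h : Q, (Sum.inl g : Q ⊕ Q) * Sum.inr h = Sum.inr (g * h) :=
    fun g h => (hf g h).2.1
  have mrl : ∀ g h : Q, (Sum.inr g : Q ⊕ Q) * Sum.inl h = Sum.inr (st h * g) :=
    fun g h => (hf g h).2.2.1
  have mrr : ∀ g h : Q, (Sum.inr g : Q ⊕ Q) * Sum.inr h = Sum.inl (g₀ * (g * st h)) :=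
    fun g h => (hf g h).2.2.2
  have i_l : ∀ g : Q, (Sum.inl g : Q ⊕ Q)⁻¹ = Sum.inl g⁻¹ := fun g => rfl
  have i_r : ∀ g : Q, (Sum.inr g : Q ⊕ Q)⁻¹ = Sum.inr (g₀⁻¹ * (st g)⁻¹) := fun g => rfl
  have one_def : (1 : Q ⊕ Q) = Sum.inl 1 := rfl
  have st_nh : ∀ g : Q, st (g₀⁻¹ * (st g)⁻¹) = g⁻¹ * g₀⁻¹ := by
    intro g
    rw [hanti, sinv, sinv, hst2, hg₀st]
  -- identity laws
  have one_mul' : ∀ X : Q ⊕ Q, 1 * X = X := by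
    rintro (x | x)
    · rw [one_def, mll, om]
    · rw [one_def, mlr, om]
  have mul_one' : ∀ X : Q ⊕ Q, X * 1 = X := by
    rintro (x | x)
    · rw [one_def, mll, mo]
    · rw [one_def, mrl, st1, om]
  -- unique solvability
  have exL : ∀ A B : Q ⊕ Q, ∃! X : Q ⊕ Q, A * X = B := by
    rintro (a | a) (b | b)
    · refine ⟨Sum.inl (a⁻¹ * b), by beta_reduce; rw [mll, L1'], ?_⟩
      rintro (u | u) hu
      · rw [mll] at hu
        rw [Sum.inl.injEq] at hu ⊢
        rw [← hu, L1]
      · rw [mlr] at hu; exact absurd hu (by simp)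
    · refine ⟨Sum.inr (a⁻¹ * b), by beta_reduce; rw [mlr, L1'], ?_⟩
      rintro (u | u) hu
      · rw [mll] at hu; exact absurd hu (by simp)
      · rw [mlr] at hu
        rw [Sum.inr.injEq] at hu ⊢
        rw [← hu, L1]
    · refine ⟨Sum.inr (st (a⁻¹ * (g₀⁻¹ * b))), ?_, ?_⟩
      · beta_reduce; rw [mrr, hst2, L1', L1']
      · rintro (u | u) hu
        · rw [mrl] at hu; exact absurd hu (by simp)
        · rw [mrr] at hu
          rw [Sum.inl.injEq] at hu
          rw [Sum.inr.injEq]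
          have h2 : st u = a⁻¹ * (g₀⁻¹ * b) := by
            rw [← hu, L1, L1]
          rw [← hst2 u, h2]
    · refine ⟨Sum.inl (st (b * a⁻¹)), ?_, ?_⟩
      · beta_reduce; rw [mrl, hst2, R1']
      · rintro (u | u) hu
        · rw [mrl] at hu
          rw [Sum.inr.injEq] at hu
          rw [Sum.inl.injEq]
          have h2 : st u = b * a⁻¹ := S16.mul_rc hQ (by rw [hu, R1'])
          rw [← hst2 u, h2]
        · rw [mrr] at hu; exact absurd hu (by simp)
  
  have exR : ∀ A B : Q ⊕ Q, ∃! Y : Q ⊕ Q, Y * A = B := by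
    rintro (a | a) (b | b)
    · refine ⟨Sum.inl (b * a⁻¹), by beta_reduce; rw [mll, R1'], ?_⟩
      rintro (u | u) hu
      · rw [mll] at hu
        rw [Sum.inl.injEq] at hu ⊢
        rw [← hu, R1]
      · rw [mrl] at hu; exact absurd hu (by simp)
    · refine ⟨Sum.inr ((st a)⁻¹ * b), by beta_reduce; rw [mrl, L1'], ?_⟩
      rintro (u | u) hu
      · rw [mll] at hu; exact absurd hu (by simp)
      · rw [mrl] at hu
        rw [Sum.inr.injEq] at hu ⊢
        rw [← hu, L1]
    · refine ⟨Sum.inr ((g₀⁻¹ * b) * (st a)⁻¹), ?_, ?_⟩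
      · beta_reduce; rw [mrr, R1', L1']
      · rintro (u | u) hu
        · rw [mlr] at hu; exact absurd hu (by simp)
        · rw [mrr] at hu
          rw [Sum.inl.injEq] at hu
          rw [Sum.inr.injEq]
          have h2 : u * st a = g₀⁻¹ * b := by rw [← hu, L1]
          rw [← R1 (st a) u, h2]
    · refine ⟨Sum.inl (b * a⁻¹), by beta_reduce; rw [mlr, R1'], ?_⟩
      rintro (u | u) hu
      · rw [mlr] at hu
        rw [Sum.inr.injEq] at hu
        rw [Sum.inl.injEq]
        rw [← hu, R1]
      · rw [mrr] at hu; exact absurd hu (by simp)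
  -- flexibility
  have flex' : ∀ X Y : Q ⊕ Q, (X * Y) * X = X * (Y * X) := by
    rintro (g | g) (h | h)
    · rw [mll, mll, mll, mll, flex]
    · rw [mlr, mrl, mrl, mlr, smm, msm']
    · rw [mrl, mrr, mlr, mrr, msm, hanti, msm']
    · rw [mrr, mlr, mrr, mrl, hanti g₀ (h * st g), hanti h (st g), hst2, hg₀st,
        hg₀.1 (g * st h)]
  
  have ip' : ∀ X Y : Q ⊕ Q, X⁻¹ * (X * Y) = Y ∧ (Y * X) * X⁻¹ = Y := by
    rintro (g | g) (h | h)
    · constructor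
      · rw [mll, i_l, mll, L1]
      · rw [mll, i_l, mll, R1]
    · constructor
      · rw [mlr, i_l, mlr, L1]
      · rw [mrl, i_l, mrl, sinv, L1]
    · constructor
      · rw [mrl, i_r, mrr, hanti (st h) g, hst2, zp1 hg₀i ((st g)⁻¹) (st g * h), L1, L1']
      · rw [mlr, i_r, mrr, st_nh, S16.zpull₃ hQ hg₀i (h * g) g⁻¹, R1, L1']
    · constructor
      · rw [mrr, i_r, mrl, hanti g₀ (g * st h), hanti g (st h), hst2, hg₀st,
          ← hg₀.1 (h * st g), zp1 hg₀ (h * st g) (g₀⁻¹ * (st g)⁻¹),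
          zp2 hg₀i (h * st g) ((st g)⁻¹), R1 (st g) h, L1']
      · rw [mrr, i_r, mlr, zp1 hg₀ (h * st g) (g₀⁻¹ * (st g)⁻¹),
          zp2 hg₀i (h * st g) ((st g)⁻¹), R1 (st g) h, L1']
  have ivv' : ∀ X : Q ⊕ Q, X⁻¹⁻¹ = X := by
    rintro (g | g)
    · rw [i_l, i_l, ivv]
    · rw [i_r, i_r, Sum.inr.injEq, st_nh, ainv, ivv, ivv, L1]
  have rinvA : ∀ w z : Q ⊕ Q, (z * w) * w⁻¹ = z := fun w z => (ip' w z).2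
  have rinvB : ∀ w z : Q ⊕ Q, (z * w⁻¹) * w = z := fun w z => by
    have := (ip' w⁻¹ z).2; rwa [ivv'] at this
  have linvA : ∀ w z : Q ⊕ Q, w⁻¹ * (w * z) = z := fun w z => (ip' w z).1
  have linvB : ∀ w z : Q ⊕ Q, w * (w⁻¹ * z) = z := fun w z => by
    have := (ip' w⁻¹ z).1; rwa [ivv'] at this
  let rp' : Q ⊕ Q → Equiv.Perm (Q ⊕ Q) := fun w =>
    ⟨fun z => z * w, fun z => z * w⁻¹, fun z => rinvA w z, fun z => rinvB w z⟩
  -- semiautomorphisms are closed under composition, inversion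
  have semi_ext : ∀ {F G : Q ⊕ Q → Q ⊕ Q}, (∀ z, F z = G z) →
      IsSemiautomorphism (Q ⊕ Q) F → IsSemiautomorphism (Q ⊕ Q) G := by
    intro F G h hF
    constructor
    · rw [← h 1]; exact hF.1
    · intro x y
      rw [← h ((x * y) * x), ← h x, ← h y, hF.2]
  have semi_one : IsSemiautomorphism (Q ⊕ Q) ⇑(1 : Equiv.Perm (Q ⊕ Q)) :=
    ⟨rfl, fun _ _ => rfl⟩
  have semi_mul : ∀ {θ φ : Equiv.Perm (Q ⊕ Q)}, IsSemiautomorphism (Q ⊕ Q) ⇑θ →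
      IsSemiautomorphism (Q ⊕ Q) ⇑φ → IsSemiautomorphism (Q ⊕ Q) ⇑(θ * φ) := by
    intro θ φ h1 h2
    constructor
    · rw [Equiv.Perm.mul_apply, h2.1, h1.1]
    · intro x y
      rw [Equiv.Perm.mul_apply, h2.2 x y, h1.2 (φ x) (φ y)]
      rfl
  have semi_invv : ∀ {θ : Equiv.Perm (Q ⊕ Q)}, IsSemiautomorphism (Q ⊕ Q) ⇑θ →
      IsSemiautomorphism (Q ⊕ Q) ⇑θ⁻¹ := by
    intro θ h
    constructor
    · apply θ.injective
      rw [Equiv.Perm.apply_inv_self, h.1]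
    · intro x y
      apply θ.injective
      rw [Equiv.Perm.apply_inv_self, h.2 (θ⁻¹ x) (θ⁻¹ y)]
      simp only [Equiv.Perm.apply_inv_self]
  -- center helpers
  have gcan : ∀ X : Q, g₀ * (X * (X⁻¹ * g₀⁻¹)) = 1 := by
    intro X
    rw [S16.zpull₃ hQ hg₀i X X⁻¹, S16.mul_inv hQ X, mo, S16.mul_inv hQ]
  have zcan : ∀ {X Y : Q}, X ∈ loopCenter Q → Y ∈ loopCenter Q →
      (X * Y) * (X⁻¹ * Y⁻¹) = 1 := by
    intro X Y hX hY
    rw [zp1 hX Y (X⁻¹ * Y⁻¹), zp2 (S16.center_inv hQ hX) Y Y⁻¹, S16.mul_inv hQ Y, mo,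
      S16.mul_inv hQ X]
  have cswap : ∀ p q : Q, cQ st (p * q) = cQ st (q * p) := by
    intro p q
    rw [cmul, cmul, (cmem p).1]
  have clR : ∀ w : Q, rpQ hQ w ∈ Subgroup.closure (translations Q) :=
    fun w => Subgroup.subset_closure (rpQ_mem hQ w)
  have clL : ∀ w : Q, lpQ hQ w ∈ Subgroup.closure (translations Q) :=
    fun w => Subgroup.subset_closure (lpQ_mem hQ w)
  -- master lemma, even case
  have masterEven : ∀ (T : Q ⊕ Q → Q ⊕ Q) (A B : Equiv.Perm Q),
      A ∈ Subgroup.closure (translations Q) → A 1 = 1 →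
      B ∈ Subgroup.closure (translations Q) → cQ st (B 1) = 1 →
      (∀ u, T (Sum.inl u) = Sum.inl (A u)) → (∀ u, T (Sum.inr u) = Sum.inr (B u)) →
      IsSemiautomorphism (Q ⊕ Q) T := by
    intro T A B hA hA1 hB hBn h1 h2
    have hsA := S16.inner_semiQ hQ hA hA1
    have hAnorm := S16.inner_norm hQ st hanti hst2 hZ hA hA1
    have hAstar := S16.inner_star hQ st hanti hst2 hZ hA hA1
    have hstd : st (B 1) = (B 1)⁻¹ := by rw [seq' (B 1), hBn, om]
    have hΨmem : (lpQ hQ (B 1))⁻¹ * B ∈ Subgroup.closure (translations Q) :=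
      mul_mem (inv_mem (clL (B 1))) hB
    have hΨ1 : ((lpQ hQ (B 1))⁻¹ * B) 1 = 1 := by
      show (B 1)⁻¹ * B 1 = 1; exact S16.inv_mul hQ (B 1)
    have hBval : ∀ v, B v = B 1 * ((lpQ hQ (B 1))⁻¹ * B) v := fun v => by
      show B v = B 1 * ((B 1)⁻¹ * B v); rw [L1']
    have hsΨ := S16.inner_semiQ hQ hΨmem hΨ1
    have hΨstar := S16.inner_star hQ st hanti hst2 hZ hΨmem hΨ1
    constructor
    · rw [one_def, h1, hA1]
    rintro (x | x) (y | y)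
    · rw [mll, mll, h1, h1, h1, mll, mll, hsA.2]
    · rw [mlr, mrl, h2, h1, h2, mlr, mrl, Sum.inr.injEq, smm x y, smm (A x) (B y),
        S16.mlt_zlin hQ hB (cmem x) y, hAnorm x]
    · rw [mrl, mrr, h1, h2, h1, mrl, mrr, Sum.inl.injEq, msm (st y) x,
        msm (st (A y)) (B x), S16.mlt_zlin hQ hA hg₀, S16.mlt_zlin hQ hA (cmem x),
        hAstar y, S16.mlt_norm hQ st hanti hst2 hZ hB x, hBn, om]
    · rw [mrr, mlr, h2, h2, h2, mrr, mlr, Sum.inr.injEq, zp1 hg₀ (x * st y) x,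
        S16.mlt_zlin hQ hB hg₀ ((x * st y) * x), hBval ((x * st y) * x),
        hsΨ.2 x (st y), hΨstar y, hBval x, hBval y,
        hanti (B 1) (((lpQ hQ (B 1))⁻¹ * B) y), hstd,
        zp1 hg₀ ((B 1 * ((lpQ hQ (B 1))⁻¹ * B) x) *
          (st (((lpQ hQ (B 1))⁻¹ * B) y) * (B 1)⁻¹)) (B 1 * ((lpQ hQ (B 1))⁻¹ * B) x),
        ← S16.i4 hQ (B 1) (((lpQ hQ (B 1))⁻¹ * B) x) (st (((lpQ hQ (B 1))⁻¹ * B) y))]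
  -- master lemma, odd case
  have masterOdd : ∀ (T : Q ⊕ Q → Q ⊕ Q) (M B : Equiv.Perm Q),
      M ∈ Subgroup.closure (translations Q) → M 1 = 1 →
      B ∈ Subgroup.closure (translations Q) → cQ st (B 1) = 1 →
      (∀ u, T (Sum.inl u) = Sum.inl (M (st u))) →
      (∀ u, T (Sum.inr u) = Sum.inr (B (st u))) →
      IsSemiautomorphism (Q ⊕ Q) T := by
    intro T M B hM hM1 hB hBn h1 h2
    have hsM := S16.inner_semiQ hQ hM hM1
    have hMnorm := S16.inner_norm hQ st hanti hst2 hZ hM hM1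
    have hMstar := S16.inner_star hQ st hanti hst2 hZ hM hM1
    have hstd : st (B 1) = (B 1)⁻¹ := by rw [seq' (B 1), hBn, om]
    have hΨmem : (lpQ hQ (B 1))⁻¹ * B ∈ Subgroup.closure (translations Q) :=
      mul_mem (inv_mem (clL (B 1))) hB
    have hΨ1 : ((lpQ hQ (B 1))⁻¹ * B) 1 = 1 := by
      show (B 1)⁻¹ * B 1 = 1; exact S16.inv_mul hQ (B 1)
    have hBval : ∀ v, B v = B 1 * ((lpQ hQ (B 1))⁻¹ * B) v := fun v => by
      show B v = B 1 * ((B 1)⁻¹ * B v); rw [L1']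
    have hsΨ := S16.inner_semiQ hQ hΨmem hΨ1
    have hΨstar := S16.inner_star hQ st hanti hst2 hZ hΨmem hΨ1
    constructor
    · rw [one_def, h1, st1, hM1]
    rintro (x | x) (y | y)
    · rw [mll, mll, h1, h1, h1, mll, mll, hanti (x * y) x, hanti x y,
        ← flex (st x) (st y), hsM.2]
    · rw [mlr, mrl, h2, h1, h2, mlr, mrl, Sum.inr.injEq, smm x y,
        hanti (cQ st x) y, stc x, ← (cmem x).1 (st y),
        S16.mlt_zlin hQ hB (cmem x) (st y), smm (M (st x)) (B (st y)),
        hMnorm (st x), cst x]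
    · rw [mrl, mrr, h1, h2, h1, mrl, mrr, Sum.inl.injEq, msm (st y) x,
        hanti g₀ (cQ st x * st y), hg₀st, hanti (cQ st x) (st y), hst2 y, stc x,
        ← (cmem x).1 y, ← hg₀.1 (cQ st x * y),
        S16.mlt_zlin hQ hM hg₀, S16.mlt_zlin hQ hM (cmem x),
        ← hMstar (st y), hst2 y, msm (M y) (B (st x)),
        S16.mlt_norm hQ st hanti hst2 hZ hB (st x), hBn, om, cst x]
    · rw [mrr, mlr, h2, h2, h2, mrr, mlr, Sum.inr.injEq,
        hanti (g₀ * (x * st y)) x, hanti g₀ (x * st y), hg₀st, hanti x (st y),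
        hst2 y, ← hg₀.1 (y * st x), zp2 hg₀ (st x) (y * st x), ← flex (st x) y,
        S16.mlt_zlin hQ hB hg₀ ((st x * y) * st x), hBval ((st x * y) * st x),
        hsΨ.2 (st x) y, hBval (st x), hBval (st y),
        hanti (B 1) (((lpQ hQ (B 1))⁻¹ * B) (st y)), hstd, ← hΨstar (st y), hst2 y,
        zp1 hg₀ ((B 1 * ((lpQ hQ (B 1))⁻¹ * B) (st x)) *
          (((lpQ hQ (B 1))⁻¹ * B) y * (B 1)⁻¹)) (B 1 * ((lpQ hQ (B 1))⁻¹ * B) (st x)),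
        ← S16.i4 hQ (B 1) (((lpQ hQ (B 1))⁻¹ * B) (st x)) (((lpQ hQ (B 1))⁻¹ * B) y)]
  
  have hG1 : ∀ Y x : Q ⊕ Q,
      IsSemiautomorphism (Q ⊕ Q) (fun z => ((z * x) * Y) * ((x * Y)⁻¹)) := by
    rintro (b | b) (a | a)
    · -- case 1a : Y = inl b, x = inl a (even)
      refine masterEven _ ((rpQ hQ (a * b))⁻¹ * rpQ hQ b * rpQ hQ a)
        (lpQ hQ (st ((a * b)⁻¹)) * lpQ hQ (st b) * lpQ hQ (st a))
        (mul_mem (mul_mem (inv_mem (clR (a * b))) (clR b)) (clR a))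
        (by show ((1 * a) * b) * (a * b)⁻¹ = 1; rw [om, S16.mul_inv hQ])
        (mul_mem (mul_mem (clL (st ((a * b)⁻¹))) (clL (st b))) (clL (st a)))
        (by show cQ st (st ((a * b)⁻¹) * (st b * (st a * 1))) = 1
            rw [mo, ← hanti, cmul, cst, cst, cinv, S16.inv_mul hQ]) ?_ ?_
      · intro u
        beta_reduce
        rw [mll u a, mll (u * a) b, mll a b, i_l (a * b), mll]
        rfl
      · intro u
        beta_reduce
        rw [mrl u a, mrl, mll a b, i_l (a * b), mrl]
        rfl
    · -- case 1c : Y = inl b, x = inr a (even)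
      refine masterEven _
        (lpQ hQ g₀ * rpQ hQ (st (g₀⁻¹ * (st (st b * a))⁻¹)) * lpQ hQ (st b) * rpQ hQ a)
        (rpQ hQ (g₀⁻¹ * (st (st b * a))⁻¹) * rpQ hQ b * lpQ hQ g₀ * rpQ hQ (st a))
        (mul_mem (mul_mem (mul_mem (clL g₀) (clR _)) (clL (st b))) (clR a))
        (by show g₀ * ((st b * (1 * a)) * st (g₀⁻¹ * (st (st b * a))⁻¹)) = 1
            rw [om a, st_nh (st b * a)]; exact gcan (st b * a))
        (mul_mem (mul_mem (mul_mem (clR _) (clR b)) (clL g₀)) (clR (st a)))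
        (by show cQ st (((g₀ * (1 * st a)) * b) * (g₀⁻¹ * (st (st b * a))⁻¹)) = 1
            rw [om (st a), cmul ((g₀ * st a) * b) (g₀⁻¹ * (st (st b * a))⁻¹),
              cmul (g₀ * st a) b, cmul g₀ (st a), cst a,
              cmul g₀⁻¹ ((st (st b * a))⁻¹), cinv g₀, cinv (st (st b * a)),
              cst (st b * a), cmul (st b) a, cst b,
              zp1 (cmem g₀) (cQ st a) (cQ st b), (cmem a).1 (cQ st b)]
            exact zcan (cmem g₀) (S16.center_mul hQ (cmem b) (cmem a))) ?_ ?_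
      · intro u
        beta_reduce
        rw [mlr u a, mrl (u * a) b, mrl a b, i_r (st b * a), mrr]
        rfl
      · intro u
        beta_reduce
        rw [mrr u a, mll (g₀ * (u * st a)) b, mrl a b, i_r (st b * a), mlr]
        rfl
    · -- case 1b : Y = inr b, x = inl a (even)
      refine masterEven _
        (lpQ hQ g₀ * rpQ hQ (st (g₀⁻¹ * (st (a * b))⁻¹)) * rpQ hQ b * rpQ hQ a)
        (rpQ hQ (g₀⁻¹ * (st (a * b))⁻¹) * lpQ hQ g₀ * rpQ hQ (st b) * lpQ hQ (st a))
        (mul_mem (mul_mem (mul_mem (clL g₀) (clR _)) (clR b)) (clR a))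
        (by show g₀ * (((1 * a) * b) * st (g₀⁻¹ * (st (a * b))⁻¹)) = 1
            rw [om a, st_nh (a * b)]; exact gcan (a * b))
        (mul_mem (mul_mem (mul_mem (clR _) (clL g₀)) (clR (st b))) (clL (st a)))
        (by show cQ st ((g₀ * ((st a * 1) * st b)) * (g₀⁻¹ * (st (a * b))⁻¹)) = 1
            rw [mo (st a), ← hanti b a, cmul, cmul, cmul, cinv, cinv, cst, cst,
              cswap b a]
            exact zcan (cmem g₀) (cmem (a * b))) ?_ ?_
      · intro u
        beta_reduce
        rw [mll u a, mlr (u * a) b, mlr a b, i_r (a * b), mrr]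
        rfl
      · intro u
        beta_reduce
        rw [mrl u a, mrr (st a * u) b, mlr a b, i_r (a * b), mlr]
        rfl
    · -- case 1d : Y = inr b, x = inr a (even)
      refine masterEven _
        (rpQ hQ (g₀ * (a * st b))⁻¹ * lpQ hQ g₀ * rpQ hQ (st b) * rpQ hQ a)
        (lpQ hQ (st ((g₀ * (a * st b))⁻¹)) * rpQ hQ b * lpQ hQ g₀ * rpQ hQ (st a))
        (mul_mem (mul_mem (mul_mem (clR _) (clL g₀)) (clR (st b))) (clR a))
        (by show (g₀ * ((1 * a) * st b)) * (g₀ * (a * st b))⁻¹ = 1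
            rw [om a, S16.mul_inv hQ])
        (mul_mem (mul_mem (mul_mem (clL _) (clR b)) (clL g₀)) (clR (st a)))
        (by show cQ st (st ((g₀ * (a * st b))⁻¹) * ((g₀ * (1 * st a)) * b)) = 1
            rw [om (st a), cmul, cst, cinv, cmul, cmul, cst, cmul, cmul, cst,
              ← zp1 (cmem g₀) (cQ st a) (cQ st b)]
            exact S16.inv_mul hQ _) ?_ ?_
      · intro u
        beta_reduce
        rw [mlr u a, mrr (u * a) b, mrr a b, i_l (g₀ * (a * st b)), mll]
        rfl
      · intro u
        beta_reduce
        rw [mrr u a, mlr (g₀ * (u * st a)) b, mrr a b, i_l (g₀ * (a * st b)), mrl]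
        rfl
  have hG2 : ∀ Y x : Q ⊕ Q,
      IsSemiautomorphism (Q ⊕ Q) (fun z => (Y * (z * x)) * ((Y * x)⁻¹)) := by
    rintro (b | b) (a | a)
    · -- case 2a : Y = inl b, x = inl a (even)
      refine masterEven _ (rpQ hQ ((b * a)⁻¹) * lpQ hQ b * rpQ hQ a)
        (lpQ hQ (st ((b * a)⁻¹)) * lpQ hQ b * lpQ hQ (st a))
        (mul_mem (mul_mem (clR _) (clL b)) (clR a))
        (by show (b * (1 * a)) * (b * a)⁻¹ = 1; rw [om a, S16.mul_inv hQ])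
        (mul_mem (mul_mem (clL _) (clL b)) (clL (st a)))
        (by show cQ st (st ((b * a)⁻¹) * (b * (st a * 1))) = 1
            rw [mo (st a), cmul (st ((b * a)⁻¹)) (b * st a), cst ((b * a)⁻¹),
              cinv (b * a), cmul b (st a), cst a, ← cmul b a, S16.inv_mul hQ])
        ?_ ?_
      · intro u
        beta_reduce
        rw [mll u a, mll b (u * a), mll b a, i_l (b * a), mll]
        rfl
      · intro u
        beta_reduce
        rw [mrl u a, mlr b (st a * u), mll b a, i_l (b * a), mrl]
        rfl
    · -- case 2c : Y = inl b, x = inr a (even)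
      refine masterEven _
        (lpQ hQ g₀ * rpQ hQ (st (g₀⁻¹ * (st (b * a))⁻¹)) * lpQ hQ b * rpQ hQ a)
        (rpQ hQ (g₀⁻¹ * (st (b * a))⁻¹) * lpQ hQ b * lpQ hQ g₀ * rpQ hQ (st a))
        (mul_mem (mul_mem (mul_mem (clL g₀) (clR _)) (clL b)) (clR a))
        (by show g₀ * ((b * (1 * a)) * st (g₀⁻¹ * (st (b * a))⁻¹)) = 1
            rw [om a, st_nh (b * a)]; exact gcan (b * a))
        (mul_mem (mul_mem (mul_mem (clR _) (clL b)) (clL g₀)) (clR (st a)))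
        (by show cQ st ((b * (g₀ * (1 * st a))) * (g₀⁻¹ * (st (b * a))⁻¹)) = 1
            rw [om (st a), cmul (b * (g₀ * st a)) (g₀⁻¹ * (st (b * a))⁻¹),
              cmul b (g₀ * st a), cmul g₀ (st a), cst a,
              cmul g₀⁻¹ ((st (b * a))⁻¹), cinv g₀, cinv (st (b * a)), cst (b * a),
              cmul b a, zp2 (cmem g₀) (cQ st b) (cQ st a)]
            exact zcan (cmem g₀) (S16.center_mul hQ (cmem b) (cmem a))) ?_ ?_
      · intro u
        beta_reduce
        rw [mlr u a, mlr b (u * a), mlr b a, i_r (b * a), mrr]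
        rfl
      · intro u
        beta_reduce
        rw [mrr u a, mll b (g₀ * (u * st a)), mlr b a, i_r (b * a), mlr]
        rfl
    · -- case 2b : Y = inr b, x = inl a (odd)
      refine masterOdd _
        (lpQ hQ g₀ * rpQ hQ (st (g₀⁻¹ * (st (st a * b))⁻¹)) * rpQ hQ b * lpQ hQ (st a))
        (rpQ hQ (g₀⁻¹ * (st (st a * b))⁻¹) * lpQ hQ g₀ * lpQ hQ b * rpQ hQ a)
        (mul_mem (mul_mem (mul_mem (clL g₀) (clR _)) (clR b)) (clL (st a)))
        (by show g₀ * (((st a * 1) * b) * st (g₀⁻¹ * (st (st a * b))⁻¹)) = 1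
            rw [mo (st a), st_nh (st a * b)]; exact gcan (st a * b))
        (mul_mem (mul_mem (mul_mem (clR _) (clL g₀)) (clL b)) (clR a))
        (by show cQ st ((g₀ * (b * (1 * a))) * (g₀⁻¹ * (st (st a * b))⁻¹)) = 1
            rw [om a, cmul (g₀ * (b * a)) (g₀⁻¹ * (st (st a * b))⁻¹),
              cmul g₀ (b * a), cmul b a, cmul g₀⁻¹ ((st (st a * b))⁻¹), cinv g₀,
              cinv (st (st a * b)), cst (st a * b), cmul (st a) b, cst a,
              (cmem b).1 (cQ st a)]
            exact zcan (cmem g₀) (S16.center_mul hQ (cmem a) (cmem b))) ?_ ?_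
      · intro u
        beta_reduce
        rw [mll u a, mrl b (u * a), hanti u a, mrl b a, i_r (st a * b), mrr]
        rfl
      · intro u
        beta_reduce
        rw [mrl u a, mrr b (st a * u), hanti (st a) u, hst2 a, mrl b a,
          i_r (st a * b), mlr]
        rfl
    · -- case 2d : Y = inr b, x = inr a (odd)
      refine masterOdd _
        (rpQ hQ (g₀ * (b * st a))⁻¹ * lpQ hQ g₀ * lpQ hQ b * lpQ hQ (st a))
        (lpQ hQ (st ((g₀ * (b * st a))⁻¹)) * rpQ hQ b * rpQ hQ g₀ * lpQ hQ a)
        (mul_mem (mul_mem (mul_mem (clR _) (clL g₀)) (clL b)) (clL (st a)))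
        (by show (g₀ * (b * (st a * 1))) * (g₀ * (b * st a))⁻¹ = 1
            rw [mo (st a), S16.mul_inv hQ])
        (mul_mem (mul_mem (mul_mem (clL _) (clR b)) (clR g₀)) (clL a))
        (by show cQ st (st ((g₀ * (b * st a))⁻¹) * (((a * 1) * g₀) * b)) = 1
            rw [mo a, cmul, cst, cinv, cmul, cmul, cst, cmul, cmul,
              S16.zpull₁r hQ (cmem g₀) (cQ st a) (cQ st b), (cmem a).1 (cQ st b)]
            exact S16.inv_mul hQ _) ?_ ?_
      · intro u
        beta_reduce
        rw [mlr u a, mrr b (u * a), hanti u a, mrr b a, i_l (g₀ * (b * st a)), mll]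
        rfl
      · intro u
        beta_reduce
        rw [mrr u a, mrl b (g₀ * (u * st a)), hanti g₀ (u * st a), hanti u (st a),
          hst2 a, hg₀st, mrr b a, i_l (g₀ * (b * st a)), mrl]
        rfl
  
  have genSemiT : ∀ s : Equiv.Perm (Q ⊕ Q), s ∈ translations (Q ⊕ Q) → ∀ x : Q ⊕ Q,
      IsSemiautomorphism (Q ⊕ Q) ⇑((rp' (s x))⁻¹ * s * rp' x) := by
    intro s hs x
    rcases hs with ⟨Y, hY⟩ | ⟨Y, hY⟩
    · refine semi_ext (F := fun z => (Y * (z * x)) * ((Y * x)⁻¹)) ?_ (hG2 Y x)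
      intro z
      show (Y * (z * x)) * ((Y * x)⁻¹) = (s (z * x)) * ((s x)⁻¹)
      rw [hY (z * x), hY x]
    · refine semi_ext (F := fun z => ((z * x) * Y) * ((x * Y)⁻¹)) ?_ (hG1 Y x)
      intro z
      show ((z * x) * Y) * ((x * Y)⁻¹) = (s (z * x)) * ((s x)⁻¹)
      rw [hY (z * x), hY x]
  have genSemi : ∀ s : Equiv.Perm (Q ⊕ Q),
      (s ∈ translations (Q ⊕ Q) ∨ s⁻¹ ∈ translations (Q ⊕ Q)) → ∀ x : Q ⊕ Q,
      IsSemiautomorphism (Q ⊕ Q) ⇑((rp' (s x))⁻¹ * s * rp' x) := by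
    intro s hs x
    rcases hs with h | h
    · exact genSemiT s h x
    · have e2 : (rp' (s x))⁻¹ * s * rp' x
          = ((rp' (s⁻¹ (s x)))⁻¹ * s⁻¹ * rp' (s x))⁻¹ := by
        rw [Equiv.Perm.inv_apply_self]
        group
      rw [e2]
      exact semi_invv (genSemiT s⁻¹ h (s x))
  have wordSemi : ∀ l : List (Equiv.Perm (Q ⊕ Q)),
      (∀ s ∈ l, s ∈ translations (Q ⊕ Q) ∨ s⁻¹ ∈ translations (Q ⊕ Q)) →
      ∀ x : Q ⊕ Q,
      IsSemiautomorphism (Q ⊕ Q) ⇑((rp' (l.prod x))⁻¹ * l.prod * rp' x) := by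
    intro l
    induction l with
    | nil =>
      intro _ x
      have e : (rp' ((1 : Equiv.Perm (Q ⊕ Q)) x))⁻¹ * (1 : Equiv.Perm (Q ⊕ Q)) * rp' x
          = 1 := by
        have h0 : (1 : Equiv.Perm (Q ⊕ Q)) x = x := rfl
        rw [h0, mul_one, inv_mul_cancel]
      rw [List.prod_nil, e]
      exact semi_one
    | cons s t ih =>
      intro hl x
      have hs := hl s (List.mem_cons_self ..)
      have ht : ∀ u ∈ t, u ∈ translations (Q ⊕ Q) ∨ u⁻¹ ∈ translations (Q ⊕ Q) :=
        fun u hu => hl u (List.mem_cons_of_mem _ hu)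
      have e : (rp' ((s :: t).prod x))⁻¹ * (s :: t).prod * rp' x
          = ((rp' (s (t.prod x)))⁻¹ * s * rp' (t.prod x))
            * ((rp' (t.prod x))⁻¹ * t.prod * rp' x) := by
        rw [List.prod_cons]
        have h0 : (s * t.prod) x = s (t.prod x) := rfl
        rw [h0]
        group
      rw [e]
      exact semi_mul (genSemi s hs (t.prod x)) (ih ht x)
  refine { toIsLoop := ⟨exL, exR, one_mul', mul_one'⟩, flexible := flex', ip := ip',
           inner_semi := ?_ }
  intro θ hθ
  obtain ⟨hcl, h1⟩ := hθ
  obtain ⟨l, hl, hprod⟩ := S16.exists_word hcl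
  have h := wordSemi l hl 1
  rw [hprod, h1] at h
  have e3 : rp' (1 : Q ⊕ Q) = 1 := Equiv.ext fun z => mul_one' z
  rwa [e3, inv_one, one_mul, mul_one] at h
end

section
/- Let Q be a semiautomorphic IP loop, g₀ ∈ Z(Q), and * an involutory antiautomorphism of Q such that g₀* = g₀ and gg* ∈ Z(Q) for every g ∈ Q. Form the doubled loop (Q ∪ Qt, ∘) using either the Chein-type multiplication (g∘h = gh, g∘(ht) = (hg)t, (gt)∘h = (gh*)t, (gt)∘(ht) = g₀h*g) or the de Barros–Juriaans-type multiplication (g∘h = gh, g∘(ht) = (gh)t, (gt)∘h = (h*g)t, (gt)∘(ht) = g₀gh*). Then g₀ lies in the center Z(Q ∪ Qt) of the doubled loop. -/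
/-- In either doubled loop (Chein-type or de Barros–Juriaans-type),
`g₀` lies in the center of the doubled loop. -/
theorem stmt17 (Q : Type*) [Mul Q] [One Q] [Inv Q] (hQ : IsSAIPLoop Q)
    (g₀ : Q) (hg₀ : g₀ ∈ loopCenter Q)
    (st : Q → Q) (hanti : ∀ g h : Q, st (g * h) = st h * st g)
    (hst2 : ∀ g : Q, st (st g) = g) (hg₀st : st g₀ = g₀)
    (hZ : ∀ g : Q, g * st g ∈ loopCenter Q)
    (mulC mulD : Q ⊕ Q → Q ⊕ Q → Q ⊕ Q)
    (hC : ∀ g h : Q,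
      mulC (.inl g) (.inl h) = .inl (g * h) ∧
      mulC (.inl g) (.inr h) = .inr (h * g) ∧
      mulC (.inr g) (.inl h) = .inr (g * st h) ∧
      mulC (.inr g) (.inr h) = .inl (g₀ * (st h * g)))
    (hD : ∀ g h : Q,
      mulD (.inl g) (.inl h) = .inl (g * h) ∧
      mulD (.inl g) (.inr h) = .inr (g * h) ∧
      mulD (.inr g) (.inl h) = .inr (st h * g) ∧
      mulD (.inr g) (.inr h) = .inl (g₀ * (g * st h))) :
    Sum.inl g₀ ∈ @loopCenter (Q ⊕ Q) ⟨mulC⟩ ∧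
    Sum.inl g₀ ∈ @loopCenter (Q ⊕ Q) ⟨mulD⟩ := by
  obtain ⟨hcomm, ha1, ha2, ha3⟩ := hg₀
  have c1 : ∀ g h : Q, mulC (.inl g) (.inl h) = .inl (g * h) := fun g h => (hC g h).1
  have c2 : ∀ g h : Q, mulC (.inl g) (.inr h) = .inr (h * g) := fun g h => (hC g h).2.1
  have c3 : ∀ g h : Q, mulC (.inr g) (.inl h) = .inr (g * st h) := fun g h => (hC g h).2.2.1
  have c4 : ∀ g h : Q, mulC (.inr g) (.inr h) = .inl (g₀ * (st h * g)) := fun g h => (hC g h).2.2.2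
  have d1 : ∀ g h : Q, mulD (.inl g) (.inl h) = .inl (g * h) := fun g h => (hD g h).1
  have d2 : ∀ g h : Q, mulD (.inl g) (.inr h) = .inr (g * h) := fun g h => (hD g h).2.1
  have d3 : ∀ g h : Q, mulD (.inr g) (.inl h) = .inr (st h * g) := fun g h => (hD g h).2.2.1
  have d4 : ∀ g h : Q, mulD (.inr g) (.inr h) = .inl (g₀ * (g * st h)) := fun g h => (hD g h).2.2.2
  have eC : ∀ a b : Q ⊕ Q, (@HMul.hMul _ _ _ (@instHMul _ ⟨mulC⟩) a b) = mulC a b :=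
    fun _ _ => rfl
  have eD : ∀ a b : Q ⊕ Q, (@HMul.hMul _ _ _ (@instHMul _ ⟨mulD⟩) a b) = mulD a b :=
    fun _ _ => rfl
  have hA3 : ∀ x y : Q, (y * x) * g₀ = y * (g₀ * x) := fun x y => by
    rw [hcomm x, ha3 y x]
  have hA4 : ∀ x y : Q, (x * st y) * g₀ = (x * g₀) * st y := fun x y => by
    rw [← ha3 x (st y), ← ha2 x (st y), hcomm (st y)]
  have hA5 : ∀ x y : Q, g₀ * (g₀ * (st y * x)) = g₀ * (st y * (x * g₀)) := fun x y => by
    rw [hcomm (st y * x), ← ha3 (st y) x]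
  have hA7 : ∀ x y : Q, (y * g₀) * x = y * (x * g₀) := fun x y => by
    rw [← ha2 y x, hcomm x]
  have hA8 : ∀ x y : Q, x * (st y * g₀) = (x * g₀) * st y := fun x y => by
    rw [← ha2 x (st y), hcomm (st y)]
  have hA9 : ∀ x y : Q, g₀ * ((g₀ * st y) * x) = g₀ * (st y * (x * g₀)) := fun x y => by
    rw [hcomm (st y), ← ha2 (st y) x, hcomm x]
  have hA11 : ∀ x y : Q, (y * g₀) * x = (y * x) * g₀ := fun x y => by
    rw [← ha2 y x, hcomm x, ha3 y x]
  have hA12 : ∀ x y : Q, x * (g₀ * st y) = (x * st y) * g₀ := fun x y => by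
    rw [hcomm (st y), ha3 x (st y)]
  have hA13 : ∀ x y : Q, g₀ * ((g₀ * st y) * x) = (g₀ * (st y * x)) * g₀ := fun x y => by
    rw [hcomm (st y), ← ha2 (st y) x, hcomm x, ha3 (st y) x, ha3 g₀ (st y * x)]
  have hB4 : ∀ x y : Q, g₀ * (st y * x) = st y * (g₀ * x) := fun x y => by
    rw [hcomm (st y * x), ← ha3 (st y) x, hcomm x]
  have hB5 : ∀ x y : Q, g₀ * (g₀ * (x * st y)) = g₀ * ((g₀ * x) * st y) := fun x y => by
    rw [ha1 x (st y)]
  have hB8 : ∀ x y : Q, (st y * g₀) * x = st y * (g₀ * x) := fun x y => by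
    rw [← ha2 (st y) x]
  have hB9 : ∀ x y : Q, g₀ * (x * (st y * g₀)) = g₀ * ((g₀ * x) * st y) := fun x y => by
    rw [ha3 x (st y), hA4 x y, hcomm x]
  have hB12 : ∀ x y : Q, x * (g₀ * y) = g₀ * (x * y) := fun x y => by
    rw [ha2 x y, ha1 x y, hcomm x]
  have hB13 : ∀ x y : Q, (g₀ * st y) * x = g₀ * (st y * x) := fun x y => by
    rw [ha1 (st y) x]
  have hB14 : ∀ x y : Q, g₀ * (x * (st y * g₀)) = (g₀ * (x * st y)) * g₀ := fun x y => by
    rw [ha3 x (st y), ha3 g₀ (x * st y)]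
  constructor
  · refine ⟨fun x => ?_, fun x y => ?_, fun x y => ?_, fun x y => ?_⟩ <;>
      rcases x with g | g <;> try rcases y with h | h
    all_goals simp only [eC, c1, c2, c3, c4, hanti, hg₀st, Sum.inl.injEq, Sum.inr.injEq]
    all_goals first
      | rfl
      | exact hcomm _ | exact (hcomm _).symm
      | exact ha1 _ _ | exact (ha1 _ _).symm
      | exact ha2 _ _ | exact (ha2 _ _).symm
      | exact ha3 _ _ | exact (ha3 _ _).symm
      | exact hA3 _ _ | exact (hA3 _ _).symm
      | exact hA4 _ _ | exact (hA4 _ _).symm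
      | exact hA5 _ _ | exact (hA5 _ _).symm
      | exact hA7 _ _ | exact (hA7 _ _).symm
      | exact hA8 _ _ | exact (hA8 _ _).symm
      | exact hA9 _ _ | exact (hA9 _ _).symm
      | exact hA11 _ _ | exact (hA11 _ _).symm
      | exact hA12 _ _ | exact (hA12 _ _).symm
      | exact hA13 _ _ | exact (hA13 _ _).symm
  · refine ⟨fun x => ?_, fun x y => ?_, fun x y => ?_, fun x y => ?_⟩ <;>
      rcases x with g | g <;> try rcases y with h | h
    all_goals simp only [eD, d1, d2, d3, d4, hanti, hg₀st, Sum.inl.injEq, Sum.inr.injEq]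
    all_goals first
      | rfl
      | exact hcomm _ | exact (hcomm _).symm
      | exact ha1 _ _ | exact (ha1 _ _).symm
      | exact ha2 _ _ | exact (ha2 _ _).symm
      | exact ha3 _ _ | exact (ha3 _ _).symm
      | exact hB4 _ _ | exact (hB4 _ _).symm
      | exact hB5 _ _ | exact (hB5 _ _).symm
      | exact hB8 _ _ | exact (hB8 _ _).symm
      | exact hB9 _ _ | exact (hB9 _ _).symm
      | exact hB12 _ _ | exact (hB12 _ _).symm
      | exact hB13 _ _ | exact (hB13 _ _).symm
      | exact hB14 _ _ | exact (hB14 _ _).symm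
end

section
/- Let Q be a flexible loop satisfying the ARIF identities R_x R_{y(xy)} = R_{x(yx)} R_y and L_x L_{y(xy)} = L_{x(yx)} L_y for all x,y ∈ Q, let g₀ ∈ Z(Q), and let * be an involutory antiautomorphism of Q such that g₀* = g₀ and gg* ∈ Z(Q) for every g ∈ Q. Form the doubled loop (Q ∪ Qt, ∘) using either the Chein-type multiplication (g∘h = gh, g∘(ht) = (hg)t, (gt)∘h = (gh*)t, (gt)∘(ht) = g₀h*g) or the de Barros–Juriaans-type multiplication (g∘h = gh, g∘(ht) = (gh)t, (gt)∘h = (h*g)t, (gt)∘(ht) = g₀gh*). Then (Q ∪ Qt, ∘) is a flexible loop satisfying the ARIF identities. -/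
section Core
variable {Q : Type*} [Mul Q] [One Q]

theorem my_lc (hQ : IsLoop Q) {a x y : Q} (h : a * x = a * y) : x = y := by
  obtain ⟨w, -, hu⟩ := hQ.exUnique_left a (a * y)
  exact (hu x h).trans (hu y rfl).symm

theorem my_rc (hQ : IsLoop Q) {a x y : Q} (h : x * a = y * a) : x = y := by
  obtain ⟨w, -, hu⟩ := hQ.exUnique_right a (y * a)
  exact (hu x h).trans (hu y rfl).symm

theorem my_keyL (hQ : IsLoop Q) (hflex : Flex Q)
    (hAR : ∀ x y z : Q, (z * x) * (y * (x * y)) = (z * (x * (y * x))) * y)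
    {p q : Q} (hc : p * q ∈ loopCenter Q) : ∀ u : Q, p * (q * u) = (p * q) * u := by
  intro u
  obtain ⟨y, hy, -⟩ := hQ.exUnique_right q u
  have h := hAR q y p
  rw [← hflex y q, hc.2.1 (y * q) y] at h
  have h2 := my_rc hQ h.symm
  rw [hy] at h2
  exact h2
theorem my_keyComm (hQ : IsLoop Q) (hflex : Flex Q)
    (hAR : ∀ x y z : Q, (z * x) * (y * (x * y)) = (z * (x * (y * x))) * y)
    {p q : Q} (hc : p * q ∈ loopCenter Q) : q * p = p * q := by
  obtain ⟨s, hs, -⟩ := hQ.exUnique_left q (p * q)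
  have h1 := my_keyL hQ hflex hAR hc s
  rw [hs, ← hc.1 p] at h1
  conv_lhs => rw [my_lc hQ h1]
  exact hs
theorem my_keyR (hQ : IsLoop Q) (hflex : Flex Q)
    (hAL : ∀ x y z : Q, (y * (x * y)) * (x * z) = y * ((x * (y * x)) * z))
    {p q : Q} (hc : p * q ∈ loopCenter Q) : ∀ u : Q, (u * p) * q = u * (p * q) := by
  intro u
  obtain ⟨y, hy, -⟩ := hQ.exUnique_left p u
  have h := hAL p y q
  rw [← hc.2.2.2 y (p * y)] at h
  have h4 := my_lc hQ h
  rw [← hflex p y, hy] at h4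
  exact h4.symm
end Core


theorem my_st1 {Q : Type*} [Mul Q] [One Q] (hQ : IsLoop Q)
    (st : Q → Q) (hanti : ∀ g h : Q, st (g * h) = st h * st g) : st 1 = 1 := by
  have h : st 1 = st 1 * st 1 := by
    have := hanti 1 1
    rwa [hQ.one_mul 1] at this
  have h2 : st 1 * (1 : Q) = st 1 * st 1 := by rw [hQ.mul_one]; exact h
  exact (my_lc hQ h2).symm

theorem my_partC (Q : Type*) [Mul Q] [One Q] (hQ : IsLoop Q) (hflex : Flex Q)
    (hARIFR : ∀ x y z : Q, (z * x) * (y * (x * y)) = (z * (x * (y * x))) * y)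
    (hARIFL : ∀ x y z : Q, (y * (x * y)) * (x * z) = y * ((x * (y * x)) * z))
    (g₀ : Q) (hg₀ : g₀ ∈ loopCenter Q)
    (st : Q → Q) (hanti : ∀ g h : Q, st (g * h) = st h * st g)
    (hst2 : ∀ g : Q, st (st g) = g) (hg₀st : st g₀ = g₀)
    (hZ : ∀ g : Q, g * st g ∈ loopCenter Q)
    (mulC : Q ⊕ Q → Q ⊕ Q → Q ⊕ Q)
    (hC : ∀ g h : Q,
      mulC (.inl g) (.inl h) = .inl (g * h) ∧
      mulC (.inl g) (.inr h) = .inr (h * g) ∧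
      mulC (.inr g) (.inl h) = .inr (g * st h) ∧
      mulC (.inr g) (.inr h) = .inl (g₀ * (st h * g))) :
    (@IsLoop (Q ⊕ Q) ⟨mulC⟩ ⟨Sum.inl 1⟩ ∧
      (∀ x y : Q ⊕ Q, mulC (mulC x y) x = mulC x (mulC y x)) ∧
      (∀ x y z : Q ⊕ Q,
        mulC (mulC z x) (mulC y (mulC x y)) = mulC (mulC z (mulC x (mulC y x))) y) ∧
      (∀ x y z : Q ⊕ Q,
        mulC (mulC y (mulC x y)) (mulC x z) = mulC y (mulC (mulC x (mulC y x)) z))) := by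
  have C1 : ∀ g h : Q, mulC (.inl g) (.inl h) = .inl (g * h) := fun g h => (hC g h).1
  have C2 : ∀ g h : Q, mulC (.inl g) (.inr h) = .inr (h * g) := fun g h => (hC g h).2.1
  have C3 : ∀ g h : Q, mulC (.inr g) (.inl h) = .inr (g * st h) := fun g h => (hC g h).2.2.1
  have C4 : ∀ g h : Q, mulC (.inr g) (.inr h) = .inl (g₀ * (st h * g)) := fun g h => (hC g h).2.2.2
  have cc : ∀ x : Q, g₀ * x = x * g₀ := hg₀.1
  have c1 : ∀ x y : Q, g₀ * (x * y) = (g₀ * x) * y := hg₀.2.1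
  have c2 : ∀ x y : Q, x * (g₀ * y) = (x * g₀) * y := hg₀.2.2.1
  have cp : ∀ x y : Q, x * (g₀ * y) = g₀ * (x * y) := by
    intro x y; rw [c2, ← cc, ← c1]
  have cp2 : ∀ x y : Q, (g₀ * x) * y = g₀ * (x * y) := fun x y => (c1 x y).symm
  have st1 : st 1 = 1 := my_st1 hQ st hanti
  have sc : ∀ x : Q, st (g₀ * x) = g₀ * st x := by
    intro x; rw [hanti, hg₀st, ← cc]
  have stn : ∀ a : Q, st (a * st a) = a * st a := fun a => by rw [hanti, hst2]
  have hsym : ∀ a : Q, st a * a = a * st a := fun a => my_keyComm hQ hflex hARIFR (hZ a)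
  have hZ' : ∀ a : Q, st a * a ∈ loopCenter Q := fun a => by rw [hsym a]; exact hZ a
  have nL : ∀ a u : Q, a * (st a * u) = (a * st a) * u := fun a => my_keyL hQ hflex hARIFR (hZ a)
  have nL' : ∀ a u : Q, st a * (a * u) = (a * st a) * u := fun a u => by
    have h := my_keyL hQ hflex hARIFR (hZ' a) u; rwa [hsym a] at h
  have nR : ∀ a u : Q, (u * a) * st a = u * (a * st a) := fun a => my_keyR hQ hflex hARIFL (hZ a)
  have nR' : ∀ a u : Q, (u * st a) * a = u * (a * st a) := fun a u => by
    have h := my_keyR hQ hflex hARIFL (hZ' a) u; rwa [hsym a] at h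
  have nc : ∀ a x : Q, (a * st a) * x = x * (a * st a) := fun a => (hZ a).1
  have n1 : ∀ a x y : Q, (a * st a) * (x * y) = ((a * st a) * x) * y := fun a => (hZ a).2.1
  have n2 : ∀ a x y : Q, x * ((a * st a) * y) = (x * (a * st a)) * y := fun a => (hZ a).2.2.1
  have n3 : ∀ a x y : Q, x * (y * (a * st a)) = (x * y) * (a * st a) := fun a => (hZ a).2.2.2
  have hUL : ∀ a b : Q ⊕ Q, ∃! x : Q ⊕ Q, mulC a x = b := by
    rintro (g | g) (h | h)
    · obtain ⟨k, hk, hu⟩ := hQ.exUnique_left g h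
      refine ⟨Sum.inl k, by simp only [C1]; rw [hk], ?_⟩
      rintro (x | x) hx
      · simp only [C1, Sum.inl.injEq, Sum.inr.injEq] at hx; rw [hu x hx]
      · simp [C2] at hx
    · obtain ⟨k, hk, hu⟩ := hQ.exUnique_right g h
      refine ⟨Sum.inr k, by simp only [C2]; rw [hk], ?_⟩
      rintro (x | x) hx
      · simp [C1] at hx
      · simp only [C2, Sum.inl.injEq, Sum.inr.injEq] at hx; rw [hu x hx]
    · obtain ⟨w, hw, hwu⟩ := hQ.exUnique_left g₀ h
      obtain ⟨v, hv, hvu⟩ := hQ.exUnique_right g w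
      refine ⟨Sum.inr (st v), by simp only [C4]; rw [hst2, hv, hw], ?_⟩
      rintro (x | x) hx
      · simp [C3] at hx
      · simp only [C4, Sum.inl.injEq, Sum.inr.injEq] at hx
        have h2 := hvu _ (hwu _ hx)
        have h3 : x = st v := by rw [← h2, hst2]
        rw [h3]
    · obtain ⟨k, hk, hu⟩ := hQ.exUnique_left g h
      refine ⟨Sum.inl (st k), by simp only [C3]; rw [hst2, hk], ?_⟩
      rintro (x | x) hx
      · simp only [C3, Sum.inl.injEq, Sum.inr.injEq] at hx
        have h1 := hu _ hx
        have h2 : x = st k := by rw [← h1, hst2]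
        rw [h2]
      · simp [C4] at hx
  have hUR : ∀ a b : Q ⊕ Q, ∃! y : Q ⊕ Q, mulC y a = b := by
    rintro (g | g) (h | h)
    · obtain ⟨k, hk, hu⟩ := hQ.exUnique_right g h
      refine ⟨Sum.inl k, by simp only [C1]; rw [hk], ?_⟩
      rintro (x | x) hx
      · simp only [C1, Sum.inl.injEq, Sum.inr.injEq] at hx; rw [hu x hx]
      · simp [C3] at hx
    · obtain ⟨k, hk, hu⟩ := hQ.exUnique_right (st g) h
      refine ⟨Sum.inr k, by simp only [C3]; rw [hk], ?_⟩
      rintro (x | x) hx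
      · simp [C1] at hx
      · simp only [C3, Sum.inl.injEq, Sum.inr.injEq] at hx; rw [hu x hx]
    · obtain ⟨w, hw, hwu⟩ := hQ.exUnique_left g₀ h
      obtain ⟨k, hk, hu⟩ := hQ.exUnique_left (st g) w
      refine ⟨Sum.inr k, by simp only [C4]; rw [hk, hw], ?_⟩
      rintro (x | x) hx
      · simp [C2] at hx
      · simp only [C4, Sum.inl.injEq, Sum.inr.injEq] at hx
        rw [hu x (hwu _ hx)]
    · obtain ⟨k, hk, hu⟩ := hQ.exUnique_left g h
      refine ⟨Sum.inl k, by simp only [C2]; rw [hk], ?_⟩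
      rintro (x | x) hx
      · simp only [C2, Sum.inl.injEq, Sum.inr.injEq] at hx; rw [hu x hx]
      · simp [C4] at hx
  have hone : ∀ x : Q ⊕ Q, mulC (Sum.inl 1) x = x := by
    rintro (g | g)
    · rw [C1, hQ.one_mul]
    · rw [C2, hQ.mul_one]
  have hone' : ∀ x : Q ⊕ Q, mulC x (Sum.inl 1) = x := by
    rintro (g | g)
    · rw [C1, hQ.mul_one]
    · rw [C3, st1, hQ.mul_one]
  have hFlex : ∀ x y : Q ⊕ Q, mulC (mulC x y) x = mulC x (mulC y x) := by
    rintro (a | a) (b | b) <;>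
      simp only [C1, C2, C3, C4, Sum.inl.injEq, Sum.inr.injEq]
    · exact hflex a b
    · rw [nR a b, ← nR' a b]
    · rw [nL' a (st b), nc a (st b), ← nR' a (st b), hanti a b]
    · rw [sc (st a * b), hanti (st a) b, hst2 a]
  have hAR : ∀ x y z : Q ⊕ Q,
      mulC (mulC z x) (mulC y (mulC x y)) = mulC (mulC z (mulC x (mulC y x))) y := by
    rintro (a | a) (b | b) (u | u) <;>
      simp only [C1, C2, C3, C4, Sum.inl.injEq, Sum.inr.injEq]
    · exact hARIFR a b u
    · rw [hanti b (a * b), hanti a b, hflex (st b) (st a), hARIFR (st a) (st b) u,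
        ← hflex (st a) (st b), ← hanti b a, ← hanti a (b * a)]
    · rw [cp (u * a) (st (b * a) * b), hanti b a, nR' b (st a), n3 b (u * a) (st a),
        nR a u, ← nc a u, ← nc b ((a * st a) * u), ← nL' b ((a * st a) * u),
        n2 a b u, ← nR' a b]
    · rw [sc (st (b * a) * b), hanti (st (b * a)) b, hst2 (b * a),
        cp (u * st a) (st b * (b * a)), nL' b a, nc b a, n3 b (u * st a) a,
        nR' a u, ← nc a u, ← nc b ((a * st a) * u),
        hanti (b * st a) a, hanti b (st a), hst2 a, nL' a (st b),
        ← n1 a (st b) u, cp b ((a * st a) * (st b * u)), n2 a b (st b * u),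
        ← nc a b, ← n1 a b (st b * u), nL b u, n1 a (b * st b) u,
        ← nc b (a * st a), ← n1 b (a * st a) u]
    · rw [hanti (a * st b) b, hanti a (st b), hst2 b, nL' b (st a),
        ← n1 b (st a) (a * u), nL' a u,
        hanti a b, nR' a (st b), cp u (st b * (a * st a)), cp2 (u * (st b * (a * st a))) b,
        n3 a u (st b), ← n2 a (u * st b) b, nc a b, n3 a (u * st b) b, nR' b u,
        ← nc b u, ← nc a ((b * st b) * u),
        n1 b (a * st a) u, n1 a (b * st b) u, nc b (a * st a)]
    · rw [nR' b a, cp (a * (b * st b)) (st a * u), ← nc b a, ← n1 b a (st a * u),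
        nL a u,
        sc (st (a * b) * a), hanti (st (a * b)) a, hst2 (a * b), nL' a b,
        cp u ((a * st a) * b), cp2 (u * ((a * st a) * b)) (st b),
        n2 a u b, nR b (u * (a * st a)), ← nc a u, ← nc b ((a * st a) * u),
        n1 b (a * st a) u]
    · rw [sc (st b * a), hanti (st b) a, hst2 b, cp b (st a * b),
        sc (b * (st a * b)), hanti b (st a * b), hanti (st a) b, hst2 a,
        cp2 ((st b * a) * st b) (a * u), hflex (st b) a,
        sc (st a * b), hanti (st a) b, hst2 a, cp a (st b * a),
        cp2 (a * (st b * a)) u, cp (st b) ((a * (st b * a)) * u),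
        hARIFL a (st b) u]
    · rw [sc (st b * a), hanti (st b) a, hst2 b, cp b (st a * b),
        sc (st a * b), hanti (st a) b, hst2 a, cp a (st b * a),
        sc (a * (st b * a)), hanti a (st b * a), hanti (st b) a, hst2 b,
        cp2 (b * (st a * b)) (g₀ * (st a * u)), cp (b * (st a * b)) (st a * u),
        cp2 ((st a * b) * st a) u, cp b (g₀ * ((st a * b) * st a * u)),
        cp b ((st a * b) * st a * u), hflex (st a) b, hARIFL (st a) b u]
  have hAL : ∀ x y z : Q ⊕ Q,
      mulC (mulC y (mulC x y)) (mulC x z) = mulC y (mulC (mulC x (mulC y x)) z) := by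
    rintro (a | a) (b | b) (u | u) <;>
      simp only [C1, C2, C3, C4, Sum.inl.injEq, Sum.inr.injEq]
    · exact hARIFL a b u
    · exact hARIFR a b u
    · -- lrl
      rw [cp2 (st (b * a) * b) (a * u), hanti b a, nR' b (st a), ← nc b (st a),
        ← n1 b (st a) (a * u), nL' a u, n1 b (a * st a) u,
        nR' a b, ← n2 a b (st u), hanti b ((a * st a) * st u),
        hanti (a * st a) (st u), hst2 u, stn a, nR' b (u * (a * st a)),
        ← nc a u, ← nc b ((a * st a) * u), n1 b (a * st a) u]
    · -- lrr
      rw [cp (u * a) (st (b * a) * b), hanti b a, nR' b (st a), n3 b (u * a) (st a),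
        nR a u, nR' a b, n3 a (st u) b, sc ((st u * b) * (a * st a)),
        hanti (st u * b) (a * st a), stn a, hanti (st u) b, hst2 u,
        cp b ((a * st a) * (st b * u)), n2 a b (st b * u), ← nc a b,
        ← n1 a b (st b * u), nL b u, n1 a (b * st b) u, ← nc a u,
        ← nc b ((a * st a) * u), n1 b (a * st a) u, nc b (a * st a)]
    · -- rll
      rw [hanti a (st u), hst2 u, nR' b a, n3 b (u * st a) a, nR' a u,
        hanti a b, nR' a (st b), cp2 (st b * (a * st a)) u,
        cp b ((st b * (a * st a)) * u), ← n2 a (st b) u, nL b ((a * st a) * u),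
        n1 b (a * st a) u, ← nc a u, ← nc b ((a * st a) * u), n1 b (a * st a) u]
    · -- rlr
      rw [sc (st u * a), hanti (st u) a, hst2 u, nR' b a,
        cp (a * (b * st b)) (st a * u), ← nc b a, ← n1 b a (st a * u), nL a u,
        n1 b (a * st a) u, hanti a b, nR' a (st b), cp u (st b * (a * st a)),
        cp2 (u * (st b * (a * st a))) b, n3 a u (st b), ← n2 a (u * st b) b,
        nc a b, n3 a (u * st b) b, nR' b u, ← nc b u, ← nc a ((b * st b) * u),
        n1 a (b * st b) u, nc b (a * st a)]
    · -- rrl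
      rw [hanti a (st u), hst2 u, sc (st b * a), hanti (st b) a, hst2 b,
        cp b (st a * b), cp (u * st a) (b * (st a * b)), sc (st a * b),
        hanti (st a) b, hst2 a, cp a (st b * a), cp2 (a * (st b * a)) (st u),
        sc ((a * (st b * a)) * st u), hanti (a * (st b * a)) (st u), hst2 u,
        hanti a (st b * a), hanti (st b) a, hst2 b,
        cp2 (u * ((st a * b) * st a)) b, hflex (st a) b, hARIFR (st a) b u]
    · -- rrr
      rw [sc (st b * a), hanti (st b) a, hst2 b, cp b (st a * b), sc (st u * a),
        hanti (st u) a, hst2 u, cp2 (b * (st a * b)) (g₀ * (st a * u)),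
        cp (b * (st a * b)) (st a * u), sc (st a * b), hanti (st a) b, hst2 a,
        cp a (st b * a), cp (st u) (a * (st b * a)),
        sc (g₀ * (st u * (a * (st b * a)))), sc (st u * (a * (st b * a))),
        hanti (st u) (a * (st b * a)), hst2 u, hanti a (st b * a),
        hanti (st b) a, hst2 b, cp b (g₀ * (((st a * b) * st a) * u)),
        cp b (((st a * b) * st a) * u), hflex (st a) b, hARIFL (st a) b u]
  exact ⟨@IsLoop.mk (Q ⊕ Q) ⟨mulC⟩ ⟨Sum.inl 1⟩ hUL hUR hone hone', hFlex, hAR, hAL⟩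


theorem my_partD (Q : Type*) [Mul Q] [One Q] (hQ : IsLoop Q) (hflex : Flex Q)
    (hARIFR : ∀ x y z : Q, (z * x) * (y * (x * y)) = (z * (x * (y * x))) * y)
    (hARIFL : ∀ x y z : Q, (y * (x * y)) * (x * z) = y * ((x * (y * x)) * z))
    (g₀ : Q) (hg₀ : g₀ ∈ loopCenter Q)
    (st : Q → Q) (hanti : ∀ g h : Q, st (g * h) = st h * st g)
    (hst2 : ∀ g : Q, st (st g) = g) (hg₀st : st g₀ = g₀)
    (hZ : ∀ g : Q, g * st g ∈ loopCenter Q)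
    (mulD : Q ⊕ Q → Q ⊕ Q → Q ⊕ Q)
    (hD : ∀ g h : Q,
      mulD (.inl g) (.inl h) = .inl (g * h) ∧
      mulD (.inl g) (.inr h) = .inr (g * h) ∧
      mulD (.inr g) (.inl h) = .inr (st h * g) ∧
      mulD (.inr g) (.inr h) = .inl (g₀ * (g * st h))) :
    (@IsLoop (Q ⊕ Q) ⟨mulD⟩ ⟨Sum.inl 1⟩ ∧
      (∀ x y : Q ⊕ Q, mulD (mulD x y) x = mulD x (mulD y x)) ∧
      (∀ x y z : Q ⊕ Q,
        mulD (mulD z x) (mulD y (mulD x y)) = mulD (mulD z (mulD x (mulD y x))) y) ∧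
      (∀ x y z : Q ⊕ Q,
        mulD (mulD y (mulD x y)) (mulD x z) = mulD y (mulD (mulD x (mulD y x)) z))) := by
  have C1 : ∀ g h : Q, mulD (.inl g) (.inl h) = .inl (g * h) := fun g h => (hD g h).1
  have C2 : ∀ g h : Q, mulD (.inl g) (.inr h) = .inr (g * h) := fun g h => (hD g h).2.1
  have C3 : ∀ g h : Q, mulD (.inr g) (.inl h) = .inr (st h * g) := fun g h => (hD g h).2.2.1
  have C4 : ∀ g h : Q, mulD (.inr g) (.inr h) = .inl (g₀ * (g * st h)) := fun g h => (hD g h).2.2.2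
  have cc : ∀ x : Q, g₀ * x = x * g₀ := hg₀.1
  have c1 : ∀ x y : Q, g₀ * (x * y) = (g₀ * x) * y := hg₀.2.1
  have c2 : ∀ x y : Q, x * (g₀ * y) = (x * g₀) * y := hg₀.2.2.1
  have cp : ∀ x y : Q, x * (g₀ * y) = g₀ * (x * y) := by
    intro x y; rw [c2, ← cc, ← c1]
  have cp2 : ∀ x y : Q, (g₀ * x) * y = g₀ * (x * y) := fun x y => (c1 x y).symm
  have st1 : st 1 = 1 := my_st1 hQ st hanti
  have sc : ∀ x : Q, st (g₀ * x) = g₀ * st x := by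
    intro x; rw [hanti, hg₀st, ← cc]
  have stn : ∀ a : Q, st (a * st a) = a * st a := fun a => by rw [hanti, hst2]
  have hsym : ∀ a : Q, st a * a = a * st a := fun a => my_keyComm hQ hflex hARIFR (hZ a)
  have hZ' : ∀ a : Q, st a * a ∈ loopCenter Q := fun a => by rw [hsym a]; exact hZ a
  have nL : ∀ a u : Q, a * (st a * u) = (a * st a) * u := fun a => my_keyL hQ hflex hARIFR (hZ a)
  have nL' : ∀ a u : Q, st a * (a * u) = (a * st a) * u := fun a u => by
    have h := my_keyL hQ hflex hARIFR (hZ' a) u; rwa [hsym a] at h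
  have nR : ∀ a u : Q, (u * a) * st a = u * (a * st a) := fun a => my_keyR hQ hflex hARIFL (hZ a)
  have nR' : ∀ a u : Q, (u * st a) * a = u * (a * st a) := fun a u => by
    have h := my_keyR hQ hflex hARIFL (hZ' a) u; rwa [hsym a] at h
  have nc : ∀ a x : Q, (a * st a) * x = x * (a * st a) := fun a => (hZ a).1
  have n1 : ∀ a x y : Q, (a * st a) * (x * y) = ((a * st a) * x) * y := fun a => (hZ a).2.1
  have n2 : ∀ a x y : Q, x * ((a * st a) * y) = (x * (a * st a)) * y := fun a => (hZ a).2.2.1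
  have n3 : ∀ a x y : Q, x * (y * (a * st a)) = (x * y) * (a * st a) := fun a => (hZ a).2.2.2
  have hUL : ∀ a b : Q ⊕ Q, ∃! x : Q ⊕ Q, mulD a x = b := by
    rintro (g | g) (h | h)
    · obtain ⟨k, hk, hu⟩ := hQ.exUnique_left g h
      refine ⟨Sum.inl k, by simp only [C1]; rw [hk], ?_⟩
      rintro (x | x) hx
      · simp only [C1, Sum.inl.injEq] at hx; rw [hu x hx]
      · simp [C2] at hx
    · obtain ⟨k, hk, hu⟩ := hQ.exUnique_left g h
      refine ⟨Sum.inr k, by simp only [C2]; rw [hk], ?_⟩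
      rintro (x | x) hx
      · simp [C1] at hx
      · simp only [C2, Sum.inr.injEq] at hx; rw [hu x hx]
    · obtain ⟨w, hw, hwu⟩ := hQ.exUnique_left g₀ h
      obtain ⟨v, hv, hvu⟩ := hQ.exUnique_left g w
      refine ⟨Sum.inr (st v), by simp only [C4]; rw [hst2, hv, hw], ?_⟩
      rintro (x | x) hx
      · simp [C3] at hx
      · simp only [C4, Sum.inl.injEq] at hx
        have h2 := hvu _ (hwu _ hx)
        have h3 : x = st v := by rw [← h2, hst2]
        rw [h3]
    · obtain ⟨k, hk, hu⟩ := hQ.exUnique_right g h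
      refine ⟨Sum.inl (st k), by simp only [C3]; rw [hst2, hk], ?_⟩
      rintro (x | x) hx
      · simp only [C3, Sum.inr.injEq] at hx
        have h1 := hu _ hx
        have h2 : x = st k := by rw [← h1, hst2]
        rw [h2]
      · simp [C4] at hx
  have hUR : ∀ a b : Q ⊕ Q, ∃! y : Q ⊕ Q, mulD y a = b := by
    rintro (g | g) (h | h)
    · obtain ⟨k, hk, hu⟩ := hQ.exUnique_right g h
      refine ⟨Sum.inl k, by simp only [C1]; rw [hk], ?_⟩
      rintro (x | x) hx
      · simp only [C1, Sum.inl.injEq] at hx; rw [hu x hx]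
      · simp [C3] at hx
    · obtain ⟨k, hk, hu⟩ := hQ.exUnique_left (st g) h
      refine ⟨Sum.inr k, by simp only [C3]; rw [hk], ?_⟩
      rintro (x | x) hx
      · simp [C1] at hx
      · simp only [C3, Sum.inr.injEq] at hx; rw [hu x hx]
    · obtain ⟨w, hw, hwu⟩ := hQ.exUnique_left g₀ h
      obtain ⟨k, hk, hu⟩ := hQ.exUnique_right (st g) w
      refine ⟨Sum.inr k, by simp only [C4]; rw [hk, hw], ?_⟩
      rintro (x | x) hx
      · simp [C2] at hx
      · simp only [C4, Sum.inl.injEq] at hx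
        rw [hu x (hwu _ hx)]
    · obtain ⟨k, hk, hu⟩ := hQ.exUnique_right g h
      refine ⟨Sum.inl k, by simp only [C2]; rw [hk], ?_⟩
      rintro (x | x) hx
      · simp only [C2, Sum.inr.injEq] at hx; rw [hu x hx]
      · simp [C4] at hx
  have hone : ∀ x : Q ⊕ Q, mulD (Sum.inl 1) x = x := by
    rintro (g | g)
    · rw [C1, hQ.one_mul]
    · rw [C2, hQ.one_mul]
  have hone' : ∀ x : Q ⊕ Q, mulD x (Sum.inl 1) = x := by
    rintro (g | g)
    · rw [C1, hQ.mul_one]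
    · rw [C3, st1, hQ.one_mul]
  have hFlex : ∀ x y : Q ⊕ Q, mulD (mulD x y) x = mulD x (mulD y x) := by
    rintro (a | a) (b | b) <;>
      simp only [C1, C2, C3, C4, Sum.inl.injEq, Sum.inr.injEq]
    · exact hflex a b
    · rw [nL' a b, nL a b]
    · rw [nR a (st b), hanti b a, nL a (st b), nc a (st b)]
    · rw [sc (b * st a), hanti b (st a), hst2 a]
  have hAR : ∀ x y z : Q ⊕ Q,
      mulD (mulD z x) (mulD y (mulD x y)) = mulD (mulD z (mulD x (mulD y x))) y := by
    rintro (a | a) (b | b) (u | u) <;>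
      simp only [C1, C2, C3, C4, Sum.inl.injEq, Sum.inr.injEq]
    · exact hARIFR a b u
    · rw [hanti b (a * b), hanti a b, hanti a (b * a), hanti b a,
        hflex (st b) (st a), hflex (st a) (st b), hARIFL (st a) (st b) u]
    · rw [cp (u * a) (b * st (a * b)), hanti a b, nL b (st a), n2 b (u * a) (st a),
        ← nc b (u * a), ← n1 b (u * a) (st a), nR a u, ← nc a u, n1 b (a * st a) u,
        nL a b, n2 a u b, nR b (u * (a * st a)), ← nc a u, ← nc b ((a * st a) * u),
        n1 b (a * st a) u]
    · rw [sc (b * st (a * b)), hanti b (st (a * b)), hst2 (a * b), nR b a,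
        cp2 (a * (b * st b)) (st a * u), ← nc b a, ← n1 b a (st a * u), nL a u,
        n1 b (a * st a) u, nL a b, hanti (a * st a) b, stn a, n3 a u (st b),
        cp2 ((u * st b) * (a * st a)) b, ← n2 a (u * st b) b, nc a b,
        n3 a (u * st b) b, nR' b u, ← nc b u, ← nc a ((b * st b) * u),
        n1 a (b * st b) u, nc b (a * st a)]
    · rw [nL b a, hanti (b * st b) a, stn b, n3 b (u * a) (st a), nR a u,
        ← nc a u, ← nc b ((a * st a) * u), n1 b (a * st a) u, hanti b a,
        nL a (st b), cp u ((a * st a) * st b), cp2 (u * ((a * st a) * st b)) b,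
        n2 a u (st b), nR' b (u * (a * st a)), ← nc a u, ← nc b ((a * st a) * u),
        n1 b (a * st a) u]
    · rw [nL b a, cp2 (u * st a) ((b * st b) * a), nc b a, n3 b (u * st a) a,
        nR' a u, ← nc a u, ← nc b ((a * st a) * u), n1 b (a * st a) u, hanti b a,
        nL a (st b), sc ((a * st a) * st b), hanti (a * st a) (st b), hst2 b,
        stn a, cp2 (b * (a * st a)) u, cp (st b) ((b * (a * st a)) * u),
        ← n2 a b u, nL' b ((a * st a) * u), n1 b (a * st a) u]
    · rw [sc (a * st b), hanti a (st b), hst2 b, cp2 (b * st a) b,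
        sc ((b * st a) * b), hanti (b * st a) b, sc (b * st a), hanti b (st a),
        hst2 a, cp (u * a) (st b * (a * st b)), cp2 (a * st b) a,
        cp u ((a * st b) * a), cp2 (u * ((a * st b) * a)) (st b),
        hflex a (st b), hARIFR a (st b) u]
    · rw [sc (a * st b), hanti a (st b), hst2 b, cp2 (b * st a) b,
        cp2 (u * st a) (g₀ * ((b * st a) * b)), cp (u * st a) ((b * st a) * b),
        sc (b * st a), hanti b (st a), hst2 a, cp2 (a * st b) a,
        sc ((a * st b) * a), hanti (a * st b) a, hanti a (st b), hst2 b,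
        cp u (st a * (b * st a)), cp2 (g₀ * (u * (st a * (b * st a)))) b,
        cp2 (u * (st a * (b * st a))) b, hflex b (st a), hARIFR (st a) b u]
  have hAL : ∀ x y z : Q ⊕ Q,
      mulD (mulD y (mulD x y)) (mulD x z) = mulD y (mulD (mulD x (mulD y x)) z) := by
    rintro (a | a) (b | b) (u | u) <;>
      simp only [C1, C2, C3, C4, Sum.inl.injEq, Sum.inr.injEq]
    · exact hARIFL a b u
    · exact hARIFL a b u
    · rw [hanti a b, nL b (st a), cp2 ((b * st b) * st a) (a * u),
        ← n1 b (st a) (a * u), nL' a u, n1 b (a * st a) u, nL a b,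
        n2 a (st u) b, hanti (st u * (a * st a)) b, hanti (st u) (a * st a),
        stn a, hst2 u, nL b ((a * st a) * u), n1 b (a * st a) u]
    · rw [hanti a b, nL b (st a), cp2 ((b * st b) * st a) (a * u),
        ← n1 b (st a) (a * u), nL' a u, n1 b (a * st a) u, nL a b,
        ← n1 a b (st u), sc ((a * st a) * (b * st u)), hanti (a * st a) (b * st u),
        stn a, hanti b (st u), hst2 u, cp2 ((u * st b) * (a * st a)) b,
        ← n2 a (u * st b) b, nc a b, n3 a (u * st b) b, nR' b u, ← nc b u,
        ← nc a ((b * st b) * u), n1 a (b * st b) u, nc b (a * st a)]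
    · rw [nL b a, hanti (st u) a, hst2 u, ← n1 b a (st a * u), nL a u,
        n1 b (a * st a) u, hanti b a, nL a (st b), cp2 ((a * st a) * st b) u,
        ← n1 a (st b) u, cp b ((a * st a) * (st b * u)), n2 a b (st b * u),
        ← nc a b, ← n1 a b (st b * u), nL b u, n1 a (b * st b) u, nc b (a * st a)]
    · rw [sc (a * st u), hanti a (st u), hst2 u, nL b a,
        cp2 (u * st a) ((b * st b) * a), nc b a, n3 b (u * st a) a, nR' a u,
        ← nc a u, ← nc b ((a * st a) * u), n1 b (a * st a) u, hanti b a,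
        nL a (st b), cp2 ((a * st a) * st b) u, ← n1 a (st b) u,
        cp b ((a * st a) * (st b * u)), n2 a b (st b * u), ← nc a b,
        ← n1 a b (st b * u), nL b u, n1 a (b * st b) u, nc b (a * st a)]
    · rw [sc (a * st b), hanti a (st b), hst2 b, cp2 (b * st a) b,
        hanti (st u) a, hst2 u, cp2 ((b * st a) * b) (st a * u), sc (b * st a),
        hanti b (st a), hst2 a, cp2 (a * st b) a, cp (st u) ((a * st b) * a),
        sc (st u * ((a * st b) * a)), hanti (st u) ((a * st b) * a), hst2 u,
        hanti (a * st b) a, hanti a (st b), hst2 b,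
        cp b ((st a * (b * st a)) * u),
        hflex b (st a), hARIFL (st a) b u]
    · rw [sc (a * st u), hanti a (st u), hst2 u, sc (a * st b), hanti a (st b),
        hst2 b, cp2 (b * st a) b, cp2 (u * st a) (g₀ * ((b * st a) * b)),
        cp (u * st a) ((b * st a) * b), sc (b * st a), hanti b (st a), hst2 a,
        cp2 (a * st b) a, cp2 ((a * st b) * a) (st u),
        sc (g₀ * (((a * st b) * a) * st u)), sc (((a * st b) * a) * st u),
        hanti ((a * st b) * a) (st u), hst2 u, hanti (a * st b) a,
        hanti a (st b), hst2 b, cp2 (g₀ * (u * (st a * (b * st a)))) b,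
        cp2 (u * (st a * (b * st a))) b, hflex b (st a), hARIFR (st a) b u]
  exact ⟨@IsLoop.mk (Q ⊕ Q) ⟨mulD⟩ ⟨Sum.inl 1⟩ hUL hUR hone hone', hFlex, hAR, hAL⟩


/-- Either doubling of a flexible ARIF loop is a flexible loop
satisfying the ARIF identities. -/
theorem stmt19 (Q : Type*) [Mul Q] [One Q] (hQ : IsLoop Q) (hflex : Flex Q)
    (hARIFR : ∀ x y z : Q, (z * x) * (y * (x * y)) = (z * (x * (y * x))) * y)
    (hARIFL : ∀ x y z : Q, (y * (x * y)) * (x * z) = y * ((x * (y * x)) * z))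
    (g₀ : Q) (hg₀ : g₀ ∈ loopCenter Q)
    (st : Q → Q) (hanti : ∀ g h : Q, st (g * h) = st h * st g)
    (hst2 : ∀ g : Q, st (st g) = g) (hg₀st : st g₀ = g₀)
    (hZ : ∀ g : Q, g * st g ∈ loopCenter Q)
    (mulC mulD : Q ⊕ Q → Q ⊕ Q → Q ⊕ Q)
    (hC : ∀ g h : Q,
      mulC (.inl g) (.inl h) = .inl (g * h) ∧
      mulC (.inl g) (.inr h) = .inr (h * g) ∧
      mulC (.inr g) (.inl h) = .inr (g * st h) ∧
      mulC (.inr g) (.inr h) = .inl (g₀ * (st h * g)))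
    (hD : ∀ g h : Q,
      mulD (.inl g) (.inl h) = .inl (g * h) ∧
      mulD (.inl g) (.inr h) = .inr (g * h) ∧
      mulD (.inr g) (.inl h) = .inr (st h * g) ∧
      mulD (.inr g) (.inr h) = .inl (g₀ * (g * st h))) :
    (@IsLoop (Q ⊕ Q) ⟨mulC⟩ ⟨Sum.inl 1⟩ ∧
      (∀ x y : Q ⊕ Q, mulC (mulC x y) x = mulC x (mulC y x)) ∧
      (∀ x y z : Q ⊕ Q,
        mulC (mulC z x) (mulC y (mulC x y)) = mulC (mulC z (mulC x (mulC y x))) y) ∧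
      (∀ x y z : Q ⊕ Q,
        mulC (mulC y (mulC x y)) (mulC x z) = mulC y (mulC (mulC x (mulC y x)) z))) ∧
    (@IsLoop (Q ⊕ Q) ⟨mulD⟩ ⟨Sum.inl 1⟩ ∧
      (∀ x y : Q ⊕ Q, mulD (mulD x y) x = mulD x (mulD y x)) ∧
      (∀ x y z : Q ⊕ Q,
        mulD (mulD z x) (mulD y (mulD x y)) = mulD (mulD z (mulD x (mulD y x))) y) ∧
      (∀ x y z : Q ⊕ Q,
        mulD (mulD y (mulD x y)) (mulD x z) = mulD y (mulD (mulD x (mulD y x)) z))) := by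
  exact ⟨my_partC Q hQ hflex hARIFR hARIFL g₀ hg₀ st hanti hst2 hg₀st hZ mulC hC,
    my_partD Q hQ hflex hARIFR hARIFL g₀ hg₀ st hanti hst2 hg₀st hZ mulD hD⟩
end
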